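/- arXiv:2003.03664 — 6 statements merged into one kernel-verified Lean document; each statement's English description precedes it below -/
import Mathlib

section
/- Let f, g : [0,1] → [0,1] be Lebesgue measurable. If for every finite binary word u we have t(u,f) = t(u,g), then f = g almost everywhere. -/
open MeasureTheory

/-- Density of the binary word `u` in the function `f : [0,1] → [0,1]`:
`t(u,f) = ℓ! ∫_{0 ≤ x₁ < ⋯ < x_ℓ ≤ 1} ∏ f^{uᵢ}(xᵢ) dx`. -/
noncomputable def wordDensity {ℓ : ℕ} (u : Fin ℓ → Bool) (f : ℝ → ℝ) : ℝ :=
  (Nat.factorial ℓ : ℝ) *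
    ∫ x : Fin ℓ → ℝ in
      {x | (∀ i, x i ∈ Set.Icc (0:ℝ) 1) ∧ (∀ i j : Fin ℓ, i < j → x i < x j)},
      ∏ i, (if u i then f (x i) else 1 - f (x i))

/-- The interval (cut) distance `d_□(f,g) = sup_{I ⊆ [0,1] interval} |∫_I (f-g)|`. -/
noncomputable def cutDist (f g : ℝ → ℝ) : ℝ :=
  sSup {y | ∃ a b : ℝ, 0 ≤ a ∧ a ≤ b ∧ b ≤ 1 ∧ y = |∫ x in a..b, (f x - g x)|}

namespace Stmt2Aux

/-- The open ordered simplex with coordinates in `[0, y)`. -/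
def simplexSet (n : ℕ) (y : ℝ) : Set (Fin n → ℝ) :=
  {z | (∀ j, 0 ≤ z j ∧ z j < y) ∧ ∀ i j : Fin n, i < j → z i < z j}

lemma measurableSet_simplexSet (n : ℕ) (y : ℝ) : MeasurableSet (simplexSet n y) := by
  have : simplexSet n y =
      (⋂ j, {z : Fin n → ℝ | 0 ≤ z j} ∩ {z | z j < y}) ∩
      ⋂ i, ⋂ j, ⋂ (_ : i < j), {z : Fin n → ℝ | z i < z j} := by
    ext z; simp [simplexSet, Set.mem_iInter, forall_and]
  rw [this]
  refine MeasurableSet.inter (MeasurableSet.iInter fun j => ?_) ?_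
  · exact (measurableSet_le measurable_const (measurable_pi_apply j)).inter
      (measurableSet_lt (measurable_pi_apply j) measurable_const)
  · exact MeasurableSet.iInter fun i => MeasurableSet.iInter fun j =>
      MeasurableSet.iInter fun _ => measurableSet_lt (measurable_pi_apply i) (measurable_pi_apply j)

lemma simplexSet_succ_preimage (n : ℕ) (y : ℝ) :
    simplexSet (n + 1) y =
      (MeasurableEquiv.piFinSuccAbove (fun _ => ℝ) (Fin.last n)) ⁻¹'
        {p : ℝ × (Fin n → ℝ) | (0 ≤ p.1 ∧ p.1 < y) ∧ p.2 ∈ simplexSet n p.1} := by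
  ext z
  simp only [Set.mem_preimage, MeasurableEquiv.piFinSuccAbove_apply, Fin.insertNthEquiv,
    Equiv.coe_fn_symm_mk, Set.mem_setOf_eq, simplexSet, Fin.removeNth, Fin.succAbove_last]
  constructor
  · rintro ⟨h1, h2⟩
    refine ⟨h1 (Fin.last n), ⟨fun j => ⟨(h1 _).1, h2 _ _ (Fin.castSucc_lt_last j)⟩,
      fun i j hij => h2 _ _ (by simpa using hij)⟩⟩
  · rintro ⟨⟨h0, hy⟩, ⟨hb, hm⟩⟩
    constructor
    · intro i
      rcases Fin.eq_castSucc_or_eq_last i with ⟨j, rfl⟩ | rfl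
      · exact ⟨(hb j).1, (hb j).2.trans hy⟩
      · exact ⟨h0, hy⟩
    · intro i j hij
      rcases Fin.eq_castSucc_or_eq_last j with ⟨j', rfl⟩ | rfl
      · rcases Fin.eq_castSucc_or_eq_last i with ⟨i', rfl⟩ | rfl
        · exact hm i' j' (by simpa using hij)
        · exact ((Fin.castSucc_lt_last j').asymm hij).elim
      · rcases Fin.eq_castSucc_or_eq_last i with ⟨i', rfl⟩ | rfl
        · exact (hb i').2
        · exact absurd hij (lt_irrefl _)


lemma measurableSet_prodSlice (n : ℕ) (y : ℝ) :
    MeasurableSet {p : ℝ × (Fin n → ℝ) | (0 ≤ p.1 ∧ p.1 < y) ∧ p.2 ∈ simplexSet n p.1} := by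
  have : {p : ℝ × (Fin n → ℝ) | (0 ≤ p.1 ∧ p.1 < y) ∧ p.2 ∈ simplexSet n p.1} =
      ({p : ℝ × (Fin n → ℝ) | 0 ≤ p.1} ∩ {p | p.1 < y}) ∩
      ((⋂ j, {p : ℝ × (Fin n → ℝ) | 0 ≤ p.2 j} ∩ {p | p.2 j < p.1}) ∩
        ⋂ i, ⋂ j, ⋂ (_ : i < j), {p : ℝ × (Fin n → ℝ) | p.2 i < p.2 j}) := by
    ext p; simp [simplexSet, Set.mem_iInter, forall_and]
  rw [this]
  have m1 : Measurable (fun p : ℝ × (Fin n → ℝ) => p.1) := measurable_fst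
  have m2 : ∀ j, Measurable (fun p : ℝ × (Fin n → ℝ) => p.2 j) :=
    fun j => (measurable_pi_apply j).comp measurable_snd
  refine ((measurableSet_le measurable_const m1).inter
    (measurableSet_lt m1 measurable_const)).inter
    ((MeasurableSet.iInter fun j => (measurableSet_le measurable_const (m2 j)).inter
      (measurableSet_lt (m2 j) m1)).inter
    (MeasurableSet.iInter fun i => MeasurableSet.iInter fun j => MeasurableSet.iInter fun _ =>
      measurableSet_lt (m2 i) (m2 j)))

lemma volume_simplexSet : ∀ (n : ℕ) (y : ℝ), 0 ≤ y →
    volume (simplexSet n y) = ENNReal.ofReal (y ^ n / n.factorial)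
  | 0, y, _ => by
      have h : simplexSet 0 y = Set.univ := by
        ext z; simp [simplexSet]
      rw [h, volume_pi, Measure.pi_univ]; simp
  | (n+1), y, hy => by
      rw [simplexSet_succ_preimage,
        (volume_preserving_piFinSuccAbove (fun _ : Fin (n+1) => ℝ) (Fin.last n)).measure_preimage
          (measurableSet_prodSlice n y).nullMeasurableSet]
      have hvol : (volume : Measure (ℝ × (Fin n → ℝ))) = (volume : Measure ℝ).prod volume := rfl
      rw [hvol, Measure.prod_apply (measurableSet_prodSlice n y)]
      have hslice : ∀ t : ℝ, volume (Prod.mk t ⁻¹'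
          {p : ℝ × (Fin n → ℝ) | (0 ≤ p.1 ∧ p.1 < y) ∧ p.2 ∈ simplexSet n p.1}) =
          Set.indicator (Set.Ico 0 y) (fun t => ENNReal.ofReal (t ^ n / n.factorial)) t := by
        intro t
        by_cases ht : t ∈ Set.Ico (0:ℝ) y
        · have hpre : Prod.mk t ⁻¹'
              {p : ℝ × (Fin n → ℝ) | (0 ≤ p.1 ∧ p.1 < y) ∧ p.2 ∈ simplexSet n p.1}
              = simplexSet n t := by
            ext z; simp [ht.1, ht.2]
          rw [hpre, volume_simplexSet n t ht.1, Set.indicator_of_mem ht]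
        · have hpre : Prod.mk t ⁻¹'
              {p : ℝ × (Fin n → ℝ) | (0 ≤ p.1 ∧ p.1 < y) ∧ p.2 ∈ simplexSet n p.1}
              = ∅ := by
            ext z; simp only [Set.mem_preimage, Set.mem_setOf_eq, Set.mem_empty_iff_false,
              iff_false]
            intro hc; exact ht ⟨hc.1.1, hc.1.2⟩
          rw [hpre, Set.indicator_of_notMem ht]; simp
      simp only [hslice]
      rw [lintegral_indicator measurableSet_Ico,
        Measure.restrict_congr_set Ico_ae_eq_Ioc]
      have hint : IntegrableOn (fun t : ℝ => t ^ n / n.factorial) (Set.Ioc 0 y) := by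
        exact (Continuous.integrableOn_Ioc (by continuity))
      have hpos : 0 ≤ᵐ[volume.restrict (Set.Ioc 0 y)] fun t : ℝ => t ^ n / n.factorial := by
        filter_upwards [ae_restrict_mem measurableSet_Ioc] with t ht
        exact div_nonneg (pow_nonneg ht.1.le n) (by positivity)
      rw [← ofReal_integral_eq_lintegral_ofReal hint hpos,
        ← intervalIntegral.integral_of_le hy]
      congr 1
      rw [intervalIntegral.integral_div, integral_pow]
      rw [Nat.factorial_succ]
      push_cast
      field_simp
      simp


/-- The ordered box: increasing tuples in `[0,1]`. -/
def ordBox (ℓ : ℕ) : Set (Fin ℓ → ℝ) :=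
  {x | (∀ i, x i ∈ Set.Icc (0:ℝ) 1) ∧ ∀ i j : Fin ℓ, i < j → x i < x j}

def lastSlice (n : ℕ) : Set (ℝ × (Fin n → ℝ)) :=
  {p | p.1 ∈ Set.Icc (0:ℝ) 1 ∧ p.2 ∈ simplexSet n p.1}

lemma measurableSet_ordBox (ℓ : ℕ) : MeasurableSet (ordBox ℓ) := by
  have : ordBox ℓ =
      (⋂ j, {x : Fin ℓ → ℝ | 0 ≤ x j} ∩ {x | x j ≤ 1}) ∩
      ⋂ i, ⋂ j, ⋂ (_ : i < j), {x : Fin ℓ → ℝ | x i < x j} := by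
    ext x; simp [ordBox, Set.mem_iInter, forall_and]
  rw [this]
  refine MeasurableSet.inter (MeasurableSet.iInter fun j =>
    (measurableSet_le measurable_const (measurable_pi_apply j)).inter
      (measurableSet_le (measurable_pi_apply j) measurable_const)) ?_
  exact MeasurableSet.iInter fun i => MeasurableSet.iInter fun j =>
      MeasurableSet.iInter fun _ => measurableSet_lt (measurable_pi_apply i) (measurable_pi_apply j)

lemma measurableSet_lastSlice (n : ℕ) : MeasurableSet (lastSlice n) := by
  have : lastSlice n =
      ({p : ℝ × (Fin n → ℝ) | 0 ≤ p.1} ∩ {p | p.1 ≤ 1}) ∩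
      ((⋂ j, {p : ℝ × (Fin n → ℝ) | 0 ≤ p.2 j} ∩ {p | p.2 j < p.1}) ∩
        ⋂ i, ⋂ j, ⋂ (_ : i < j), {p : ℝ × (Fin n → ℝ) | p.2 i < p.2 j}) := by
    ext p; simp [lastSlice, simplexSet, Set.mem_iInter, forall_and]
  rw [this]
  have m1 : Measurable (fun p : ℝ × (Fin n → ℝ) => p.1) := measurable_fst
  have m2 : ∀ j, Measurable (fun p : ℝ × (Fin n → ℝ) => p.2 j) :=
    fun j => (measurable_pi_apply j).comp measurable_snd
  refine ((measurableSet_le measurable_const m1).inter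
    (measurableSet_le m1 measurable_const)).inter
    ((MeasurableSet.iInter fun j => (measurableSet_le measurable_const (m2 j)).inter
      (measurableSet_lt (m2 j) m1)).inter
    (MeasurableSet.iInter fun i => MeasurableSet.iInter fun j => MeasurableSet.iInter fun _ =>
      measurableSet_lt (m2 i) (m2 j)))

lemma ordBox_succ_preimage (n : ℕ) :
    ordBox (n + 1) =
      (MeasurableEquiv.piFinSuccAbove (fun _ => ℝ) (Fin.last n)) ⁻¹' lastSlice n := by
  ext x
  simp only [Set.mem_preimage, MeasurableEquiv.piFinSuccAbove_apply, Fin.insertNthEquiv,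
    Equiv.coe_fn_symm_mk, Set.mem_setOf_eq, ordBox, lastSlice, simplexSet, Fin.removeNth,
    Fin.succAbove_last]
  constructor
  · rintro ⟨h1, h2⟩
    exact ⟨h1 (Fin.last n), ⟨fun j => ⟨(h1 _).1, h2 _ _ (Fin.castSucc_lt_last j)⟩,
      fun i j hij => h2 _ _ (by simpa using hij)⟩⟩
  · rintro ⟨⟨h0, hy⟩, ⟨hb, hm⟩⟩
    constructor
    · intro i
      rcases Fin.eq_castSucc_or_eq_last i with ⟨j, rfl⟩ | rfl
      · exact ⟨(hb j).1, ((hb j).2.trans_le hy).le⟩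
      · exact ⟨h0, hy⟩
    · intro i j hij
      rcases Fin.eq_castSucc_or_eq_last j with ⟨j', rfl⟩ | rfl
      · rcases Fin.eq_castSucc_or_eq_last i with ⟨i', rfl⟩ | rfl
        · exact hm i' j' (by simpa using hij)
        · exact ((Fin.castSucc_lt_last j').asymm hij).elim
      · rcases Fin.eq_castSucc_or_eq_last i with ⟨i', rfl⟩ | rfl
        · exact (hb i').2
        · exact absurd hij (lt_irrefl _)

lemma lastSlice_volume_ne_top (n : ℕ) :
    ((volume : Measure ℝ).prod (volume : Measure (Fin n → ℝ))) (lastSlice n) ≠ ⊤ := by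
  have hsub : lastSlice n ⊆ (Set.Icc (0:ℝ) 1) ×ˢ (Set.univ.pi fun _ : Fin n => Set.Icc (0:ℝ) 1) := by
    rintro ⟨t, z⟩ ⟨ht, hz⟩
    exact ⟨ht, fun j _ => ⟨(hz.1 j).1, ((hz.1 j).2.trans_le ht.2).le⟩⟩
  refine ne_top_of_le_ne_top ?_ (measure_mono hsub)
  rw [Measure.prod_prod, Real.volume_Icc, volume_pi_pi]
  simp

lemma integrableOn_fst (f : ℝ → ℝ) (hf : Measurable f)
    (hf1 : ∀ x ∈ Set.Icc (0:ℝ) 1, f x ∈ Set.Icc (0:ℝ) 1) (n : ℕ) :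
    IntegrableOn (fun p : ℝ × (Fin n → ℝ) => f p.1) (lastSlice n)
      ((volume : Measure ℝ).prod volume) := by
  haveI : IsFiniteMeasure (((volume : Measure ℝ).prod volume).restrict (lastSlice n)) := by
    constructor
    rw [Measure.restrict_apply_univ]
    exact (lastSlice_volume_ne_top n).lt_top
  refine Integrable.mono' (integrable_const (1:ℝ))
    ((hf.comp measurable_fst).aestronglyMeasurable) ?_
  filter_upwards [ae_restrict_mem (measurableSet_lastSlice n)] with p hp
  have := hf1 p.1 hp.1
  rw [Real.norm_eq_abs, abs_le]
  exact ⟨by linarith [this.1], this.2⟩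

lemma integral_last (f : ℝ → ℝ) (hf : Measurable f)
    (hf1 : ∀ x ∈ Set.Icc (0:ℝ) 1, f x ∈ Set.Icc (0:ℝ) 1) (n : ℕ) :
    ∫ x in ordBox (n+1), f (x (Fin.last n)) =
      ∫ t in Set.Icc (0:ℝ) 1, f t * (t ^ n / n.factorial) := by
  have hm := volume_preserving_piFinSuccAbove (fun _ : Fin (n+1) => ℝ) (Fin.last n)
  have key := hm.setIntegral_preimage_emb
    (MeasurableEquiv.measurableEmbedding _) (fun p : ℝ × (Fin n → ℝ) => f p.1) (lastSlice n)
  rw [ordBox_succ_preimage]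
  have : (∫ x in (MeasurableEquiv.piFinSuccAbove (fun _ => ℝ) (Fin.last n)) ⁻¹' lastSlice n,
      f (x (Fin.last n))) =
      ∫ x in (MeasurableEquiv.piFinSuccAbove (fun _ => ℝ) (Fin.last n)) ⁻¹' lastSlice n,
      f (((MeasurableEquiv.piFinSuccAbove (fun _ => ℝ) (Fin.last n)) x).1) := rfl
  rw [this, key]
  have hprod : (volume : Measure (ℝ × (Fin n → ℝ))) = (volume : Measure ℝ).prod volume := rfl
  rw [← integral_indicator (measurableSet_lastSlice n), hprod,
    integral_prod _ ((integrableOn_fst f hf hf1 n).integrable_indicator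
      (measurableSet_lastSlice n))]
  have hin : (fun t : ℝ => ∫ z : Fin n → ℝ,
      (lastSlice n).indicator (fun p : ℝ × (Fin n → ℝ) => f p.1) (t, z)) =
      Set.indicator (Set.Icc (0:ℝ) 1) (fun t => f t * (t ^ n / n.factorial)) := by
    funext t
    by_cases ht : t ∈ Set.Icc (0:ℝ) 1
    · have hz : (fun z : Fin n → ℝ =>
          (lastSlice n).indicator (fun p : ℝ × (Fin n → ℝ) => f p.1) (t, z)) =
          (simplexSet n t).indicator (fun _ => f t) := by
        funext z
        by_cases hzs : z ∈ simplexSet n t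
        · have hmem : (t, z) ∈ lastSlice n := ⟨ht, hzs⟩
          simp [Set.indicator_apply, hmem, hzs]
        · have hmem : (t, z) ∉ lastSlice n := fun hc => hzs hc.2
          simp [Set.indicator_apply, hmem, hzs]
      rw [hz, integral_indicator_const _ (measurableSet_simplexSet n t), measureReal_def,
        volume_simplexSet n t ht.1, Set.indicator_of_mem ht,
        ENNReal.toReal_ofReal (div_nonneg (pow_nonneg ht.1 n) (by positivity)), smul_eq_mul, mul_comm]
    · have hz : (fun z : Fin n → ℝ =>
          (lastSlice n).indicator (fun p : ℝ × (Fin n → ℝ) => f p.1) (t, z)) = fun _ => 0 := by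
        funext z
        exact Set.indicator_of_notMem (fun hc => ht hc.1) _
      rw [hz, integral_zero, Set.indicator_of_notMem ht]
  rw [hin, integral_indicator measurableSet_Icc]


lemma sum_indicator_prod (f : ℝ → ℝ) {ℓ : ℕ} (x : Fin ℓ → ℝ) (k : Fin ℓ) :
    ∑ u : Fin ℓ → Bool, (if u k = true then
      ∏ i, (if u i then f (x i) else 1 - f (x i)) else 0) = f (x k) := by
  classical
  set d : Fin ℓ → Bool → ℝ := fun i b =>
    if i = k then (if b then f (x i) else 0) else (if b then f (x i) else 1 - f (x i)) with hd
  have h1 : ∀ u : Fin ℓ → Bool, (if u k = true then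
      ∏ i, (if u i then f (x i) else 1 - f (x i)) else 0) = ∏ i, d i (u i) := by
    intro u
    by_cases hu : u k = true
    · rw [if_pos hu]
      refine Finset.prod_congr rfl fun i _ => ?_
      by_cases hik : i = k
      · subst hik; simp [hd, hu]
      · simp [hd, hik]
    · rw [if_neg hu]
      symm
      apply Finset.prod_eq_zero (Finset.mem_univ k)
      rw [Bool.not_eq_true] at hu
      simp [hd, hu]
  simp only [h1]
  have h2 : ∑ u : Fin ℓ → Bool, ∏ i, d i (u i) = ∏ i, ∑ b : Bool, d i b := by
    rw [Finset.prod_univ_sum]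
    rw [Fintype.piFinset_univ]
  rw [h2]
  have h3 : ∀ i, ∑ b : Bool, d i b = if i = k then f (x k) else 1 := by
    intro i
    by_cases hik : i = k
    · subst hik; simp [hd]
    · simp [hd, hik]
  simp only [h3]
  simp


lemma wordDensity_eq {ℓ : ℕ} (u : Fin ℓ → Bool) (f : ℝ → ℝ) :
    wordDensity u f = (Nat.factorial ℓ : ℝ) *
      ∫ x in ordBox ℓ, ∏ i, (if u i then f (x i) else 1 - f (x i)) := rfl

lemma ordBox_volume_ne_top (ℓ : ℕ) : volume (ordBox ℓ) ≠ ⊤ := by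
  have hsub : ordBox ℓ ⊆ Set.univ.pi fun _ : Fin ℓ => Set.Icc (0:ℝ) 1 :=
    fun x hx j _ => hx.1 j
  refine ne_top_of_le_ne_top ?_ (measure_mono hsub)
  rw [volume_pi_pi]
  simp

lemma integrableOn_word (f : ℝ → ℝ) (hf : Measurable f)
    (hf1 : ∀ x ∈ Set.Icc (0:ℝ) 1, f x ∈ Set.Icc (0:ℝ) 1) {ℓ : ℕ} (u : Fin ℓ → Bool) :
    IntegrableOn (fun x : Fin ℓ → ℝ => ∏ i, (if u i then f (x i) else 1 - f (x i)))
      (ordBox ℓ) := by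
  haveI : IsFiniteMeasure (volume.restrict (ordBox ℓ)) := by
    constructor
    rw [Measure.restrict_apply_univ]
    exact (ordBox_volume_ne_top ℓ).lt_top
  have hmeas : Measurable (fun x : Fin ℓ → ℝ =>
      ∏ i, (if u i then f (x i) else 1 - f (x i))) := by
    apply Finset.measurable_prod
    intro i _
    by_cases hu : u i
    · simp only [hu, if_true]
      exact hf.comp (measurable_pi_apply i)
    · simp only [hu, if_false]
      exact (measurable_const.sub (hf.comp (measurable_pi_apply i)))
  refine Integrable.mono' (integrable_const (1:ℝ)) hmeas.aestronglyMeasurable ?_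
  filter_upwards [ae_restrict_mem (measurableSet_ordBox ℓ)] with x hx
  rw [Real.norm_eq_abs, Finset.abs_prod]
  refine Finset.prod_le_one (fun i _ => abs_nonneg _) (fun i _ => ?_)
  have hfx := hf1 (x i) (hx.1 i)
  by_cases hu : u i
  · simp only [hu, if_true]
    rw [abs_le]; exact ⟨by linarith [hfx.1], hfx.2⟩
  · simp only [Bool.not_eq_true] at hu
    simp only [hu, Bool.false_eq_true, if_false]
    rw [abs_le]; constructor <;> [linarith [hfx.2]; linarith [hfx.1]]

lemma sum_wordDensity (f : ℝ → ℝ) (hf : Measurable f)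
    (hf1 : ∀ x ∈ Set.Icc (0:ℝ) 1, f x ∈ Set.Icc (0:ℝ) 1) (n : ℕ) :
    ∑ u : Fin (n+1) → Bool, (if u (Fin.last n) = true then wordDensity u f else 0)
      = ((n+1).factorial : ℝ) * ∫ t in Set.Icc (0:ℝ) 1, f t * (t ^ n / n.factorial) := by
  classical
  have step1 : ∑ u : Fin (n+1) → Bool, (if u (Fin.last n) = true then wordDensity u f else 0)
      = ((n+1).factorial : ℝ) * ∑ u : Fin (n+1) → Bool, (if u (Fin.last n) = true then
          ∫ x in ordBox (n+1), ∏ i, (if u i then f (x i) else 1 - f (x i)) else 0) := by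
    rw [Finset.mul_sum]
    refine Finset.sum_congr rfl fun u _ => ?_
    rw [wordDensity_eq]
    split <;> simp
  rw [step1]
  have step2 : ∑ u : Fin (n+1) → Bool, (if u (Fin.last n) = true then
        ∫ x in ordBox (n+1), ∏ i, (if u i then f (x i) else 1 - f (x i)) else 0)
      = ∫ x in ordBox (n+1), ∑ u : Fin (n+1) → Bool, (if u (Fin.last n) = true then
          ∏ i, (if u i then f (x i) else 1 - f (x i)) else 0) := by
    rw [integral_finset_sum]
    · refine Finset.sum_congr rfl fun u _ => ?_
      split
      · rfl
      · rw [integral_zero]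
    · intro u _
      by_cases hu : u (Fin.last n) = true
      · simp only [hu, if_true]
        exact integrableOn_word f hf hf1 u
      · simp only [hu, if_false]
        exact integrable_zero _ _ _
  rw [step2]
  have step3 : (fun x : Fin (n+1) → ℝ => ∑ u : Fin (n+1) → Bool,
      (if u (Fin.last n) = true then ∏ i, (if u i then f (x i) else 1 - f (x i)) else 0))
      = fun x => f (x (Fin.last n)) := funext fun x => sum_indicator_prod f x (Fin.last n)
  rw [step3, integral_last f hf hf1 n]


lemma integrableOn_Icc_of_bound (φ : ℝ → ℝ) (hφ : Measurable φ) (C : ℝ)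
    (hb : ∀ t ∈ Set.Icc (0:ℝ) 1, |φ t| ≤ C) :
    IntegrableOn φ (Set.Icc (0:ℝ) 1) := by
  haveI : IsFiniteMeasure (volume.restrict (Set.Icc (0:ℝ) 1)) := by
    constructor
    rw [Measure.restrict_apply_univ, Real.volume_Icc]
    exact ENNReal.ofReal_lt_top
  refine Integrable.mono' (integrable_const C) hφ.aestronglyMeasurable ?_
  filter_upwards [ae_restrict_mem measurableSet_Icc] with t ht
  rw [Real.norm_eq_abs]
  exact hb t ht

section
variable (f g : ℝ → ℝ) (hf : Measurable f) (hg : Measurable g)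
    (hf1 : ∀ x ∈ Set.Icc (0:ℝ) 1, f x ∈ Set.Icc (0:ℝ) 1)
    (hg1 : ∀ x ∈ Set.Icc (0:ℝ) 1, g x ∈ Set.Icc (0:ℝ) 1)

include hf hg hf1 hg1

lemma diff_bound : ∀ t ∈ Set.Icc (0:ℝ) 1, |f t - g t| ≤ 1 := by
  intro t ht
  have h1 := hf1 t ht; have h2 := hg1 t ht
  simp only [Set.mem_Icc] at h1 h2
  rw [abs_le]; constructor <;> linarith

lemma diff_mul_integrable (c : ℝ → ℝ) (hc : Measurable c) (M : ℝ)
    (hM : ∀ t ∈ Set.Icc (0:ℝ) 1, |c t| ≤ M) :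
    IntegrableOn (fun t => (f t - g t) * c t) (Set.Icc (0:ℝ) 1) := by
  refine integrableOn_Icc_of_bound _ ((hf.sub hg).mul hc) M ?_
  intro t ht
  rw [abs_mul]
  calc |f t - g t| * |c t| ≤ 1 * M :=
        mul_le_mul (diff_bound f g hf hg hf1 hg1 t ht) (hM t ht) (abs_nonneg _)
          zero_le_one
    _ = M := one_mul M

lemma poly_test (hmom : ∀ n : ℕ, ∫ t in Set.Icc (0:ℝ) 1, (f t - g t) * t ^ n = 0)
    (P : Polynomial ℝ) :
    ∫ t in Set.Icc (0:ℝ) 1, (f t - g t) * P.eval t = 0 := by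
  have hint : ∀ n : ℕ, IntegrableOn (fun t => (f t - g t) * t ^ n) (Set.Icc (0:ℝ) 1) := by
    intro n
    refine diff_mul_integrable f g hf hg hf1 hg1 _ (measurable_id.pow_const n) 1 ?_
    intro t ht
    rw [abs_pow]
    exact pow_le_one₀ (abs_nonneg t) (abs_le.2 ⟨by linarith [ht.1], ht.2⟩)
  have heval : ∀ t : ℝ, (f t - g t) * P.eval t =
      ∑ i ∈ Finset.range (P.natDegree + 1), P.coeff i * ((f t - g t) * t ^ i) := by
    intro t
    rw [Polynomial.eval_eq_sum_range, Finset.mul_sum]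
    exact Finset.sum_congr rfl fun i _ => by ring
  simp only [heval]
  rw [integral_finset_sum]
  · refine Finset.sum_eq_zero fun i _ => ?_
    rw [integral_const_mul, hmom i, mul_zero]
  · exact fun i _ => ((hint i).const_mul _)

lemma cont_test (hmom : ∀ n : ℕ, ∫ t in Set.Icc (0:ℝ) 1, (f t - g t) * t ^ n = 0)
    (c : ℝ → ℝ) (hc : Continuous c) :
    ∫ t in Set.Icc (0:ℝ) 1, (f t - g t) * c t = 0 := by
  have hIabs : ∀ ε : ℝ, 0 < ε → |∫ t in Set.Icc (0:ℝ) 1, (f t - g t) * c t| ≤ ε → True := fun _ _ _ => trivial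
  obtain ⟨M, hM⟩ := isCompact_Icc.exists_bound_of_continuousOn
    (hc.continuousOn : ContinuousOn c (Set.Icc (0:ℝ) 1))
  have hcInt : IntegrableOn (fun t => (f t - g t) * c t) (Set.Icc (0:ℝ) 1) :=
    diff_mul_integrable f g hf hg hf1 hg1 c hc.measurable M hM
  have key : ∀ ε : ℝ, 0 < ε → |∫ t in Set.Icc (0:ℝ) 1, (f t - g t) * c t| ≤ ε := by
    intro ε hε
    set C : C(Set.Icc (0:ℝ) 1, ℝ) := ⟨fun t => c t, hc.comp continuous_subtype_val⟩ with hC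
    have hmem : C ∈ (polynomialFunctions (Set.Icc (0:ℝ) 1)).topologicalClosure := by
      rw [polynomialFunctions_closure_eq_top]; trivial
    have hmem' : C ∈ closure ((polynomialFunctions (Set.Icc (0:ℝ) 1)) :
        Set C(Set.Icc (0:ℝ) 1, ℝ)) := by
      rw [← Subalgebra.topologicalClosure_coe]; exact hmem
    obtain ⟨b, hb, hdist⟩ := Metric.mem_closure_iff.mp hmem' ε hε
    rw [polynomialFunctions_coe] at hb
    obtain ⟨P, rfl⟩ := hb
    have hPb : ∀ t ∈ Set.Icc (0:ℝ) 1, |P.eval t| ≤ |P.eval t| := fun t _ => le_refl _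
    have hPInt : IntegrableOn (fun t => (f t - g t) * P.eval t) (Set.Icc (0:ℝ) 1) := by
      obtain ⟨M', hM'⟩ := isCompact_Icc.exists_bound_of_continuousOn
        ((P.continuous_aeval).continuousOn : ContinuousOn (fun t : ℝ => P.eval t) _)
      exact diff_mul_integrable f g hf hg hf1 hg1 _
        (P.continuous_aeval.measurable) M' hM'
    have hzero := poly_test f g hf hg hf1 hg1 hmom P
    have h2 := integral_sub hcInt hPInt
    rw [hzero, sub_zero] at h2
    have hIeq : ∫ t in Set.Icc (0:ℝ) 1, (f t - g t) * c t
        = ∫ t in Set.Icc (0:ℝ) 1, (f t - g t) * (c t - P.eval t) := by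
      rw [← h2]
      congr 1
      funext t
      ring
    have hbound : ∀ t ∈ Set.Icc (0:ℝ) 1, ‖(f t - g t) * (c t - P.eval t)‖ ≤ ε := by
      intro t ht
      rw [Real.norm_eq_abs, abs_mul]
      have h1 := diff_bound f g hf hg hf1 hg1 t ht
      have h2 : |c t - P.eval t| ≤ ε := by
        have := ContinuousMap.dist_apply_le_dist (f := C)
          (g := P.toContinuousMapOn (Set.Icc (0:ℝ) 1)) ⟨t, ht⟩
        rw [Real.dist_eq] at this
        have hCt : C ⟨t, ht⟩ = c t := rfl
        have hbt : (P.toContinuousMapOn (Set.Icc (0:ℝ) 1)) ⟨t, ht⟩ = P.eval t := rfl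
        rw [hCt, hbt] at this
        exact this.trans hdist.le
      calc |f t - g t| * |c t - P.eval t| ≤ 1 * ε :=
            mul_le_mul h1 h2 (abs_nonneg _) zero_le_one
        _ = ε := one_mul ε
    have := norm_setIntegral_le_of_norm_le_const (μ := volume)
      (s := Set.Icc (0:ℝ) 1) (f := fun t => (f t - g t) * (c t - P.eval t))
      (by rw [Real.volume_Icc]; exact ENNReal.ofReal_lt_top) hbound
    rw [measureReal_def, Real.volume_Icc] at this
    simp only [ENNReal.toReal_ofReal (by norm_num : (0:ℝ) ≤ 1 - 0)] at this
    rw [← hIeq, Real.norm_eq_abs] at this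
    calc |∫ t in Set.Icc (0:ℝ) 1, (f t - g t) * c t| ≤ ε * (1 - 0) := this
      _ = ε := by ring
  by_contra hne
  have habs : 0 < |∫ t in Set.Icc (0:ℝ) 1, (f t - g t) * c t| := abs_pos.mpr hne
  have := key (|∫ t in Set.Icc (0:ℝ) 1, (f t - g t) * c t| / 2) (by linarith)
  linarith

end

end Stmt2Aux

theorem stmt2 (f g : ℝ → ℝ) (hf : Measurable f) (hg : Measurable g)
    (hf1 : ∀ x ∈ Set.Icc (0:ℝ) 1, f x ∈ Set.Icc (0:ℝ) 1)
    (hg1 : ∀ x ∈ Set.Icc (0:ℝ) 1, g x ∈ Set.Icc (0:ℝ) 1)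
    (h : ∀ (ℓ : ℕ) (u : Fin ℓ → Bool), wordDensity u f = wordDensity u g) :
    ∀ᵐ x ∂(volume.restrict (Set.Icc (0:ℝ) 1)), f x = g x := by
  classical
  open Stmt2Aux in
  -- Step 1: equal Bernstein-type moments
  have hmom' : ∀ n : ℕ, ∫ t in Set.Icc (0:ℝ) 1, f t * (t ^ n / n.factorial)
      = ∫ t in Set.Icc (0:ℝ) 1, g t * (t ^ n / n.factorial) := by
    intro n
    have hsum : ∑ u : Fin (n+1) → Bool, (if u (Fin.last n) = true then wordDensity u f else 0)
        = ∑ u : Fin (n+1) → Bool, (if u (Fin.last n) = true then wordDensity u g else 0) :=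
      Finset.sum_congr rfl fun u _ => by rw [h (n+1) u]
    rw [Stmt2Aux.sum_wordDensity f hf hf1 n, Stmt2Aux.sum_wordDensity g hg hg1 n] at hsum
    exact mul_left_cancel₀ (Nat.cast_ne_zero.mpr (Nat.factorial_ne_zero (n+1))) hsum
  -- Step 2: equal monomial moments
  have hmono : ∀ (φ : ℝ → ℝ), Measurable φ → (∀ x ∈ Set.Icc (0:ℝ) 1, φ x ∈ Set.Icc (0:ℝ) 1) →
      ∀ n : ℕ, IntegrableOn (fun t => φ t * t ^ n) (Set.Icc (0:ℝ) 1) := by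
    intro φ hφ hφ1 n
    refine Stmt2Aux.integrableOn_Icc_of_bound _ (hφ.mul (measurable_id.pow_const n)) 1 ?_
    intro t ht
    have h1 := hφ1 t ht
    simp only [Set.mem_Icc] at h1
    rw [abs_mul, abs_pow]
    have h2 : |φ t| ≤ 1 := by rw [abs_le]; constructor <;> linarith
    have h3 : |t| ^ n ≤ 1 :=
      pow_le_one₀ (abs_nonneg t) (abs_le.2 ⟨by linarith [ht.1], ht.2⟩)
    calc |φ t| * |t| ^ n ≤ 1 * 1 := mul_le_mul h2 h3 (by positivity) zero_le_one
      _ = 1 := one_mul 1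
  have hmomn : ∀ n : ℕ, ∫ t in Set.Icc (0:ℝ) 1, (f t - g t) * t ^ n = 0 := by
    intro n
    have heq : ∀ (φ : ℝ → ℝ), (fun t => φ t * t ^ n)
        = fun t => (n.factorial : ℝ) * (φ t * (t ^ n / n.factorial)) := by
      intro φ; funext t
      rw [mul_comm (n.factorial : ℝ), mul_assoc,
        div_mul_cancel₀ _ (Nat.cast_ne_zero.mpr (Nat.factorial_ne_zero n) : (n.factorial:ℝ) ≠ 0)]
    have hfn : ∫ t in Set.Icc (0:ℝ) 1, f t * t ^ n = ∫ t in Set.Icc (0:ℝ) 1, g t * t ^ n := by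
      rw [heq f, heq g, integral_const_mul, integral_const_mul, hmom' n]
    have hsub : (fun t : ℝ => (f t - g t) * t ^ n)
        = fun t => f t * t ^ n - g t * t ^ n := funext fun t => by ring
    rw [hsub, integral_sub (hmono f hf hf1 n) (hmono g hg hg1 n), hfn, sub_self]
  -- Step 3: test against smooth functions and conclude
  have hloc : ∀ (φ : ℝ → ℝ), Measurable φ → (∀ x ∈ Set.Icc (0:ℝ) 1, φ x ∈ Set.Icc (0:ℝ) 1) →
      LocallyIntegrable φ (volume.restrict (Set.Icc (0:ℝ) 1)) := by
    intro φ hφ hφ1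
    refine Integrable.locallyIntegrable ?_
    refine Stmt2Aux.integrableOn_Icc_of_bound φ hφ 1 ?_
    intro t ht
    have h1 := hφ1 t ht
    simp only [Set.mem_Icc] at h1
    rw [abs_le]; constructor <;> linarith
  refine ae_eq_of_integral_contDiff_smul_eq (hloc f hf hf1) (hloc g hg hg1) ?_
  intro c hc hcs
  have hcont := Stmt2Aux.cont_test f g hf hg hf1 hg1 hmomn c hc.continuous
  obtain ⟨M, hM⟩ := isCompact_Icc.exists_bound_of_continuousOn
    (hc.continuous.continuousOn : ContinuousOn c (Set.Icc (0:ℝ) 1))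
  have hint : ∀ (φ : ℝ → ℝ), Measurable φ → (∀ x ∈ Set.Icc (0:ℝ) 1, φ x ∈ Set.Icc (0:ℝ) 1) →
      IntegrableOn (fun t => c t * φ t) (Set.Icc (0:ℝ) 1) := by
    intro φ hφ hφ1
    refine Stmt2Aux.integrableOn_Icc_of_bound _ (hc.continuous.measurable.mul hφ) M ?_
    intro t ht
    have h1 := hφ1 t ht
    simp only [Set.mem_Icc] at h1
    rw [abs_mul]
    have h2 : |φ t| ≤ 1 := by rw [abs_le]; constructor <;> linarith
    have h3 : |c t| ≤ M := by rw [← Real.norm_eq_abs]; exact hM t ht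
    calc |c t| * |φ t| ≤ M * 1 := mul_le_mul h3 h2 (abs_nonneg _) ((abs_nonneg _).trans h3)
      _ = M := mul_one M
  have hdiff : ∫ t in Set.Icc (0:ℝ) 1, (c t * f t - c t * g t) = 0 := by
    have : (fun t : ℝ => c t * f t - c t * g t) = fun t => (f t - g t) * c t :=
      funext fun t => by ring
    rw [this, hcont]
  rw [integral_sub (hint f hf hf1) (hint g hg hg1)] at hdiff
  simp only [smul_eq_mul]
  linarith [hdiff]
end

section
/- For any Lebesgue measurable f : [0,1] → [0,1] and any k ∈ ℕ, ∫₀¹ f(x) x^k dx = (1/(k+1)) ∑_{u ∈ {0,1}^k} t(u₁…u_k 1, f), where u₁…u_k 1 denotes the word of length k+1 obtained by appending the letter 1 to u. -/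
open MeasureTheory

/-- The "ordered simplex below `y`" in `[0,y)^ℓ`. -/
def simA (ℓ : ℕ) (y : ℝ) : Set (Fin ℓ → ℝ) :=
  {x | (∀ i, x i ∈ Set.Ico (0:ℝ) y) ∧ ∀ i j : Fin ℓ, i < j → x i < x j}

lemma measurableSet_mono (ℓ : ℕ) :
    MeasurableSet {x : Fin ℓ → ℝ | ∀ i j : Fin ℓ, i < j → x i < x j} := by
  have : {x : Fin ℓ → ℝ | ∀ i j : Fin ℓ, i < j → x i < x j}
      = ⋂ i, ⋂ j, ⋂ (_ : i < j), {x : Fin ℓ → ℝ | x i < x j} := by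
    ext x; simp [Set.mem_iInter]
  rw [this]
  exact MeasurableSet.iInter fun i => MeasurableSet.iInter fun j =>
    MeasurableSet.iInter fun _ =>
      measurableSet_lt (measurable_pi_apply i) (measurable_pi_apply j)

lemma measurableSet_simA (ℓ : ℕ) (y : ℝ) : MeasurableSet (simA ℓ y) := by
  have h1 : MeasurableSet {x : Fin ℓ → ℝ | ∀ i, x i ∈ Set.Ico (0:ℝ) y} := by
    have : {x : Fin ℓ → ℝ | ∀ i, x i ∈ Set.Ico (0:ℝ) y}
        = ⋂ i, (fun x : Fin ℓ → ℝ => x i) ⁻¹' Set.Ico 0 y := by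
      ext x; simp [Set.mem_iInter]
    rw [this]
    exact MeasurableSet.iInter fun i => (measurable_pi_apply i) measurableSet_Ico
  exact h1.inter (measurableSet_mono ℓ)

lemma snoc_mem_simA_iff {ℓ : ℕ} (y t : ℝ) (x' : Fin ℓ → ℝ) :
    Fin.snoc x' t ∈ simA (ℓ+1) y ↔ t ∈ Set.Ico 0 y ∧ x' ∈ simA ℓ t := by
  constructor
  · rintro ⟨h1, h2⟩
    have ht : t ∈ Set.Ico 0 y := by simpa using h1 (Fin.last ℓ)
    refine ⟨ht, ⟨fun i => ?_, fun i j hij => ?_⟩⟩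
    · have h0 := (h1 i.castSucc).1
      have hlt := h2 i.castSucc (Fin.last ℓ) (Fin.castSucc_lt_last i)
      simp only [Fin.snoc_castSucc, Fin.snoc_last] at h0 hlt
      exact ⟨h0, hlt⟩
    · have := h2 i.castSucc j.castSucc (by simpa using hij)
      simpa using this
  · rintro ⟨ht, hA, hm⟩
    constructor
    · intro i
      refine Fin.lastCases ?_ (fun j => ?_) i
      · simpa using ht
      · simp only [Fin.snoc_castSucc]
        exact ⟨(hA j).1, lt_of_lt_of_le (hA j).2 ht.2.le⟩
    · intro i j hij
      rcases Fin.eq_castSucc_or_eq_last j with ⟨j', rfl⟩ | rfl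
      · rcases Fin.eq_castSucc_or_eq_last i with ⟨i', rfl⟩ | rfl
        · simp only [Fin.snoc_castSucc]
          exact hm i' j' (by simpa using hij)
        · exact absurd (lt_trans hij (Fin.castSucc_lt_last j')) (lt_irrefl _)
      · rcases Fin.eq_castSucc_or_eq_last i with ⟨i', rfl⟩ | rfl
        · simp only [Fin.snoc_castSucc, Fin.snoc_last]
          exact (hA i').2
        · exact absurd hij (lt_irrefl _)

lemma vol_simA : ∀ (ℓ : ℕ) (y : ℝ), 0 ≤ y →
    volume (simA ℓ y) = ENNReal.ofReal (y ^ ℓ / (Nat.factorial ℓ)) := by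
  intro ℓ
  induction ℓ with
  | zero =>
    intro y hy
    have : simA 0 y = Set.univ := by
      ext x; simp [simA, Fin.forall_fin_zero_pi]
    rw [this]
    simp [MeasureTheory.volume_pi, Measure.pi_univ]
  | succ ℓ ih =>
    intro y hy
    set e := MeasurableEquiv.piFinSuccAbove (fun _ : Fin (ℓ+1) => ℝ) (Fin.last ℓ) with he
    have hmp : MeasurePreserving e.symm
        ((volume : Measure ℝ).prod (volume : Measure (Fin ℓ → ℝ))) volume := by
      have := (MeasureTheory.volume_preserving_piFinSuccAbove
        (fun _ : Fin (ℓ+1) => ℝ) (Fin.last ℓ)).symm e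
      simpa [Measure.volume_eq_prod] using this
    have hA : MeasurableSet (simA (ℓ+1) y) := measurableSet_simA _ _
    have hpre : volume (simA (ℓ+1) y)
        = ((volume : Measure ℝ).prod (volume : Measure (Fin ℓ → ℝ)))
            (e.symm ⁻¹' simA (ℓ+1) y) := (hmp.measure_preimage hA.nullMeasurableSet).symm
    have hsymm : ∀ p : ℝ × (Fin ℓ → ℝ), e.symm p = Fin.snoc p.2 p.1 := by
      intro p
      rw [he]
      rw [MeasurableEquiv.piFinSuccAbove_symm_apply]
      exact Fin.insertNth_last' p.1 p.2
    have hset : e.symm ⁻¹' simA (ℓ+1) y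
        = {p : ℝ × (Fin ℓ → ℝ) | p.1 ∈ Set.Ico 0 y ∧ p.2 ∈ simA ℓ p.1} := by
      ext p
      simp only [Set.mem_preimage, Set.mem_setOf_eq, hsymm p]
      exact snoc_mem_simA_iff y p.1 p.2
    rw [hpre, hset]
    have hmeas : MeasurableSet {p : ℝ × (Fin ℓ → ℝ) | p.1 ∈ Set.Ico 0 y ∧ p.2 ∈ simA ℓ p.1} := by
      rw [hset.symm]
      exact e.symm.measurable hA
    rw [Measure.prod_apply hmeas]
    have hsec : ∀ t : ℝ, (Prod.mk t ⁻¹' {p : ℝ × (Fin ℓ → ℝ) | p.1 ∈ Set.Ico 0 y ∧ p.2 ∈ simA ℓ p.1})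
        = if t ∈ Set.Ico 0 y then simA ℓ t else ∅ := by
      intro t
      ext x
      by_cases ht : t ∈ Set.Ico 0 y
      · simp only [if_pos ht, Set.mem_preimage, Set.mem_setOf_eq]
        exact ⟨fun h => h.2, fun h => ⟨ht, h⟩⟩
      · simp only [if_neg ht, Set.mem_preimage, Set.mem_setOf_eq, Set.mem_empty_iff_false]
        exact ⟨fun h => ht h.1, fun h => h.elim⟩
    simp_rw [hsec]
    have : (fun t => volume (if t ∈ Set.Ico 0 y then simA ℓ t else ∅))
        = (Set.Ico (0:ℝ) y).indicator (fun t => ENNReal.ofReal (t ^ ℓ / Nat.factorial ℓ)) := by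
      funext t
      by_cases ht : t ∈ Set.Ico 0 y
      · rw [if_pos ht, Set.indicator_of_mem ht, ih t ht.1]
      · rw [if_neg ht, Set.indicator_of_notMem ht]; simp
    rw [this, lintegral_indicator measurableSet_Ico]
    have hint : IntegrableOn (fun t : ℝ => t ^ ℓ / Nat.factorial ℓ) (Set.Ico 0 y) volume := by
      apply (Continuous.integrableOn_Icc (by continuity)).mono_set Set.Ico_subset_Icc_self
    rw [← ofReal_integral_eq_lintegral_ofReal hint]
    · congr 1
      rw [setIntegral_congr_set Ico_ae_eq_Ioc,
        ← intervalIntegral.integral_of_le hy, intervalIntegral.integral_div,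
        integral_pow]
      rw [Nat.factorial_succ]
      push_cast
      have h1 : (ℓ:ℝ) + 1 ≠ 0 := by positivity
      have h2 : (Nat.factorial ℓ : ℝ) ≠ 0 := by positivity
      field_simp
      try ring
    · apply ae_restrict_of_forall_mem measurableSet_Ico
      intro t ht
      have := ht.1
      positivity

/-- The ordered simplex in `[0,1]^ℓ` (the integration domain of `wordDensity`). -/
def simS (ℓ : ℕ) : Set (Fin ℓ → ℝ) :=
  {x | (∀ i, x i ∈ Set.Icc (0:ℝ) 1) ∧ (∀ i j : Fin ℓ, i < j → x i < x j)}

lemma measurableSet_simS (ℓ : ℕ) : MeasurableSet (simS ℓ) := by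
  have h1 : MeasurableSet {x : Fin ℓ → ℝ | ∀ i, x i ∈ Set.Icc (0:ℝ) 1} := by
    have : {x : Fin ℓ → ℝ | ∀ i, x i ∈ Set.Icc (0:ℝ) 1}
        = ⋂ i, (fun x : Fin ℓ → ℝ => x i) ⁻¹' Set.Icc 0 1 := by
      ext x; simp [Set.mem_iInter]
    rw [this]
    exact MeasurableSet.iInter fun i => (measurable_pi_apply i) measurableSet_Icc
  exact h1.inter (measurableSet_mono ℓ)

lemma snoc_mem_simS_iff {ℓ : ℕ} (t : ℝ) (x' : Fin ℓ → ℝ) :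
    Fin.snoc x' t ∈ simS (ℓ+1) ↔ t ∈ Set.Icc 0 1 ∧ x' ∈ simA ℓ t := by
  constructor
  · rintro ⟨h1, h2⟩
    have ht : t ∈ Set.Icc (0:ℝ) 1 := by simpa using h1 (Fin.last ℓ)
    refine ⟨ht, ⟨fun i => ?_, fun i j hij => ?_⟩⟩
    · have h0 := (h1 i.castSucc).1
      have hlt := h2 i.castSucc (Fin.last ℓ) (Fin.castSucc_lt_last i)
      simp only [Fin.snoc_castSucc, Fin.snoc_last] at h0 hlt
      exact ⟨h0, hlt⟩
    · have := h2 i.castSucc j.castSucc (by simpa using hij)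
      simpa using this
  · rintro ⟨ht, hA, hm⟩
    constructor
    · intro i
      refine Fin.lastCases ?_ (fun j => ?_) i
      · simpa using ht
      · simp only [Fin.snoc_castSucc]
        exact ⟨(hA j).1, le_trans (hA j).2.le ht.2⟩
    · intro i j hij
      rcases Fin.eq_castSucc_or_eq_last j with ⟨j', rfl⟩ | rfl
      · rcases Fin.eq_castSucc_or_eq_last i with ⟨i', rfl⟩ | rfl
        · simp only [Fin.snoc_castSucc]
          exact hm i' j' (by simpa using hij)
        · exact absurd (lt_trans hij (Fin.castSucc_lt_last j')) (lt_irrefl _)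
      · rcases Fin.eq_castSucc_or_eq_last i with ⟨i', rfl⟩ | rfl
        · simp only [Fin.snoc_castSucc, Fin.snoc_last]
          exact (hA i').2
        · exact absurd hij (lt_irrefl _)

lemma key_integral (f : ℝ → ℝ) (hf : Measurable f)
    (hf1 : ∀ x ∈ Set.Icc (0:ℝ) 1, f x ∈ Set.Icc (0:ℝ) 1) (k : ℕ) :
    ∫ x : Fin (k+1) → ℝ in simS (k+1), f (x (Fin.last k))
      = (∫ t in (0:ℝ)..1, f t * t ^ k) / Nat.factorial k := by
  have hS := measurableSet_simS (k+1)
  have hm : Measurable fun x : Fin (k+1) → ℝ => f (x (Fin.last k)) :=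
    hf.comp (measurable_pi_apply _)
  have hnn : 0 ≤ᵐ[volume.restrict (simS (k+1))] fun x : Fin (k+1) → ℝ => f (x (Fin.last k)) :=
    ae_restrict_of_forall_mem hS fun x hx => (hf1 _ (hx.1 _)).1
  rw [integral_eq_lintegral_of_nonneg_ae hnn hm.aestronglyMeasurable]
  set F : (Fin (k+1) → ℝ) → ENNReal := fun x => ENNReal.ofReal (f (x (Fin.last k))) with hF
  have hFmeas : Measurable F := ENNReal.measurable_ofReal.comp hm
  set e := MeasurableEquiv.piFinSuccAbove (fun _ : Fin (k+1) => ℝ) (Fin.last k) with he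
  have hmp : MeasurePreserving e.symm
      ((volume : Measure ℝ).prod (volume : Measure (Fin k → ℝ))) volume := by
    have := (MeasureTheory.volume_preserving_piFinSuccAbove
      (fun _ : Fin (k+1) => ℝ) (Fin.last k)).symm e
    simpa [Measure.volume_eq_prod] using this
  have hsymm : ∀ p : ℝ × (Fin k → ℝ), e.symm p = Fin.snoc p.2 p.1 := by
    intro p
    rw [he, MeasurableEquiv.piFinSuccAbove_symm_apply]
    exact Fin.insertNth_last' p.1 p.2
  have hImeas : Measurable ((simS (k+1)).indicator F) := hFmeas.indicator hS
  have step1 : ∫⁻ x in simS (k+1), F x = ∫⁻ p, ((simS (k+1)).indicator F) (e.symm p)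
      ∂((volume : Measure ℝ).prod (volume : Measure (Fin k → ℝ))) := by
    rw [← lintegral_indicator hS, ← hmp.lintegral_comp hImeas]
  rw [step1, lintegral_prod (fun p => ((simS (k+1)).indicator F) (e.symm p))
    ((hImeas.comp e.symm.measurable).aemeasurable)]
  have hinner : ∀ t : ℝ, (∫⁻ x' : Fin k → ℝ, ((simS (k+1)).indicator F) (e.symm (t, x')))
      = (Set.Icc (0:ℝ) 1).indicator
          (fun t => ENNReal.ofReal (f t * (t ^ k / Nat.factorial k))) t := by
    intro t
    by_cases ht : t ∈ Set.Icc (0:ℝ) 1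
    · have hpt : ∀ x' : Fin k → ℝ, ((simS (k+1)).indicator F) (e.symm (t, x'))
          = (simA k t).indicator (fun _ => ENNReal.ofReal (f t)) x' := by
        intro x'
        rw [hsymm]
        by_cases hx : x' ∈ simA k t
        · rw [Set.indicator_of_mem ((snoc_mem_simS_iff t x').2 ⟨ht, hx⟩),
            Set.indicator_of_mem hx, hF]
          simp [Fin.snoc_last]
        · rw [Set.indicator_of_notMem, Set.indicator_of_notMem hx]
          intro hmem
          exact hx ((snoc_mem_simS_iff t x').1 hmem).2
      rw [lintegral_congr hpt, lintegral_indicator (measurableSet_simA _ _),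
        setLIntegral_const, vol_simA k t ht.1, Set.indicator_of_mem ht,
        ENNReal.ofReal_mul (hf1 t ht).1]
    · have hpt : ∀ x' : Fin k → ℝ, ((simS (k+1)).indicator F) (e.symm (t, x')) = 0 := by
        intro x'
        rw [hsymm, Set.indicator_of_notMem]
        intro hmem
        exact ht ((snoc_mem_simS_iff t x').1 hmem).1
      rw [lintegral_congr hpt, lintegral_zero, Set.indicator_of_notMem ht]
  simp_rw [hinner]
  rw [lintegral_indicator measurableSet_Icc]
  have hintOn : IntegrableOn (fun t : ℝ => f t * (t ^ k / Nat.factorial k))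
      (Set.Icc (0:ℝ) 1) volume := by
    refine Integrable.mono' (g := fun _ => (1:ℝ))
      (integrableOn_const measure_Icc_lt_top.ne)
      ((hf.mul ((measurable_id.pow_const k).div_const _)).aestronglyMeasurable)
      (ae_restrict_of_forall_mem measurableSet_Icc fun t ht => ?_)
    have h0 : (0:ℝ) ≤ f t := (hf1 t ht).1
    have h1 : f t ≤ 1 := (hf1 t ht).2
    have h2 : (0:ℝ) ≤ t ^ k := pow_nonneg ht.1 k
    have h3 : t ^ k ≤ 1 := pow_le_one₀ ht.1 ht.2
    have h4 : (1:ℝ) ≤ Nat.factorial k := by exact_mod_cast Nat.one_le_iff_ne_zero.2 k.factorial_ne_zero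
    rw [Real.norm_eq_abs, abs_of_nonneg (by positivity)]
    have h5 : t ^ k / (Nat.factorial k : ℝ) ≤ 1 := by
      rw [div_le_one (by positivity)]
      exact h3.trans h4
    calc f t * (t ^ k / Nat.factorial k) ≤ 1 * 1 :=
          mul_le_mul h1 h5 (by positivity) zero_le_one
      _ = 1 := mul_one 1
  have hnn2 : ∀ t ∈ Set.Icc (0:ℝ) 1, 0 ≤ f t * (t ^ k / Nat.factorial k) := fun t ht =>
    mul_nonneg (hf1 t ht).1 (div_nonneg (pow_nonneg ht.1 k) (Nat.cast_nonneg _))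
  rw [← ofReal_integral_eq_lintegral_ofReal hintOn
      (ae_restrict_of_forall_mem measurableSet_Icc hnn2),
    ENNReal.toReal_ofReal (setIntegral_nonneg measurableSet_Icc hnn2),
    setIntegral_congr_set Ioc_ae_eq_Icc.symm, ← intervalIntegral.integral_of_le zero_le_one]
  simp_rw [← mul_div_assoc]
  rw [intervalIntegral.integral_div]

lemma sum_snoc_prod (f : ℝ → ℝ) (k : ℕ) (x : Fin (k+1) → ℝ) :
    (∑ u : Fin k → Bool, ∏ i : Fin (k+1), (if (Fin.snoc u true : Fin (k+1) → Bool) i then f (x i) else 1 - f (x i)))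
      = f (x (Fin.last k)) := by
  have h1 : ∀ u : Fin k → Bool,
      (∏ i : Fin (k+1), (if (Fin.snoc u true : Fin (k+1) → Bool) i then f (x i) else 1 - f (x i)))
        = (∏ i : Fin k, (if u i then f (x i.castSucc) else 1 - f (x i.castSucc)))
            * f (x (Fin.last k)) := by
    intro u
    rw [Fin.prod_univ_castSucc]
    simp [Fin.snoc_castSucc, Fin.snoc_last]
  simp_rw [h1, ← Finset.sum_mul]
  have h2 : (∑ u : Fin k → Bool, ∏ i : Fin k,
      (if u i then f (x i.castSucc) else 1 - f (x i.castSucc)))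
      = ∏ i : Fin k, ∑ b : Bool, (if b then f (x i.castSucc) else 1 - f (x i.castSucc)) :=
    (Fintype.prod_sum (κ := fun _ : Fin k => Bool)
      (fun i b => if b then f (x i.castSucc) else 1 - f (x i.castSucc))).symm
  rw [h2]
  have h3 : ∀ i : Fin k,
      (∑ b : Bool, (if b then f (x i.castSucc) else 1 - f (x i.castSucc))) = 1 := by
    intro i
    simp only [Fintype.sum_bool, Bool.false_eq_true, if_true, if_false]
    ring
  rw [Finset.prod_congr rfl fun i _ => h3 i]
  simp

lemma integrableOn_prod_word (f : ℝ → ℝ) (hf : Measurable f)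
    (hf1 : ∀ x ∈ Set.Icc (0:ℝ) 1, f x ∈ Set.Icc (0:ℝ) 1) {ℓ : ℕ} (u : Fin ℓ → Bool) :
    IntegrableOn (fun x : Fin ℓ → ℝ => ∏ i, (if u i then f (x i) else 1 - f (x i)))
      (simS ℓ) volume := by
  have hSfin : volume (simS ℓ) < ⊤ := by
    refine lt_of_le_of_lt (measure_mono (fun x hx => ?_)) (?_ :
      volume (Set.pi Set.univ fun _ : Fin ℓ => Set.Icc (0:ℝ) 1) < ⊤)
    · exact Set.mem_univ_pi.2 fun i => hx.1 i
    · rw [volume_pi_pi]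
      simp [Real.volume_Icc]
  have hmeas : Measurable fun x : Fin ℓ → ℝ => ∏ i, (if u i then f (x i) else 1 - f (x i)) := by
    apply Finset.measurable_prod
    intro i _
    cases h : u i <;> simp only [h, Bool.false_eq_true, if_true, if_false]
    · exact measurable_const.sub (hf.comp (measurable_pi_apply i))
    · exact hf.comp (measurable_pi_apply i)
  refine Integrable.mono' (g := fun _ => (1:ℝ))
    (integrableOn_const hSfin.ne) hmeas.aestronglyMeasurable
    (ae_restrict_of_forall_mem (measurableSet_simS ℓ) fun x hx => ?_)
  rw [Real.norm_eq_abs, Finset.abs_prod]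
  refine Finset.prod_le_one (fun i _ => abs_nonneg _) (fun i _ => ?_)
  have h01 := hf1 (x i) (hx.1 i)
  cases h : u i <;> simp only [h, Bool.false_eq_true, if_true, if_false]
  · rw [abs_of_nonneg (by linarith [h01.2])]
    linarith [h01.1]
  · rw [abs_of_nonneg h01.1]
    exact h01.2

theorem stmt3' (f : ℝ → ℝ) (hf : Measurable f)
    (hf1 : ∀ x ∈ Set.Icc (0:ℝ) 1, f x ∈ Set.Icc (0:ℝ) 1) (k : ℕ)
    (wordDensity : ∀ {ℓ : ℕ}, (Fin ℓ → Bool) → (ℝ → ℝ) → ℝ)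
    (hwd : ∀ {ℓ : ℕ} (u : Fin ℓ → Bool) (g : ℝ → ℝ), wordDensity u g =
      (Nat.factorial ℓ : ℝ) * ∫ x : Fin ℓ → ℝ in simS ℓ,
        ∏ i, (if u i then g (x i) else 1 - g (x i))) :
    ∫ x in (0:ℝ)..1, f x * x ^ k =
      (1 / ((k : ℝ) + 1)) * ∑ u : Fin k → Bool, wordDensity (Fin.snoc u true) f := by
  have hsum : (∑ u : Fin k → Bool, wordDensity (Fin.snoc u true) f)
      = (Nat.factorial (k+1) : ℝ) * ∫ x : Fin (k+1) → ℝ in simS (k+1), f (x (Fin.last k)) := by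
    simp_rw [hwd]
    rw [← Finset.mul_sum]
    congr 1
    rw [← integral_finset_sum _ (fun u _ => integrableOn_prod_word f hf hf1 (Fin.snoc u true))]
    exact setIntegral_congr_fun (measurableSet_simS (k+1)) fun x _ => sum_snoc_prod f k x
  rw [hsum, key_integral f hf hf1 k, Nat.factorial_succ]
  have h2 : (Nat.factorial k : ℝ) ≠ 0 := by positivity
  have h3 : ((k:ℝ) + 1) ≠ 0 := by positivity
  push_cast
  field_simp
  try ring

theorem stmt3 (f : ℝ → ℝ) (hf : Measurable f)
    (hf1 : ∀ x ∈ Set.Icc (0:ℝ) 1, f x ∈ Set.Icc (0:ℝ) 1) (k : ℕ) :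
    ∫ x in (0:ℝ)..1, f x * x ^ k =
      (1 / ((k : ℝ) + 1)) * ∑ u : Fin k → Bool, wordDensity (Fin.snoc u true) f :=
  stmt3' f hf hf1 k (fun u g => wordDensity u g) (fun _ _ => rfl)
end

section
/- Let f, g : [0,1] → [0,1] be Lebesgue measurable and u ∈ {0,1}^ℓ a binary word of length ℓ. Then |t(u,f) − t(u,g)| ≤ ℓ² · d_□(f,g). -/
open MeasureTheory

noncomputable def itInt : ∀ {n : ℕ}, (Fin n → (ℝ → ℝ)) → ℝ → ℝ
  | 0, _, _ => 1
  | _ + 1, φ, b => ∫ t in Set.Ioc b 1, φ 0 t * itInt (fun j => φ j.succ) t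

lemma itInt_zero (φ : Fin 0 → ℝ → ℝ) (b : ℝ) : itInt φ b = 1 := rfl

lemma itInt_succ {n : ℕ} (φ : Fin (n+1) → ℝ → ℝ) (b : ℝ) :
    itInt φ b = ∫ t in Set.Ioc b 1, φ 0 t * itInt (fun j => φ j.succ) t := rfl

def GoodFam {n : ℕ} (φ : Fin n → ℝ → ℝ) : Prop :=
  ∀ i, Measurable (φ i) ∧ (∀ x, φ i x ∈ Set.Icc (0:ℝ) 1) ∧
    (∀ x, x ∉ Set.Icc (0:ℝ) 1 → φ i x = 0)

lemma GoodFam.tail {n : ℕ} {φ : Fin (n+1) → ℝ → ℝ} (h : GoodFam φ) :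
    GoodFam (fun j : Fin n => φ j.succ) := fun j => h j.succ

lemma integrable_of_supp {w : ℝ → ℝ} (hw : Measurable w) (hbd : ∀ x, |w x| ≤ 1)
    (hsupp : ∀ x ∉ Set.Icc (0:ℝ) 1, w x = 0) : Integrable w := by
  have hind : w = (Set.Icc (0:ℝ) 1).indicator w := by
    ext x
    by_cases h : x ∈ Set.Icc (0:ℝ) 1
    · simp [Set.indicator_of_mem h]
    · simp [Set.indicator_of_notMem h, hsupp x h]
  rw [hind, integrable_indicator_iff measurableSet_Icc]
  refine Integrable.mono' (g := fun _ => (1:ℝ)) ((integrableOn_const_iff (C := (1:ℝ))).2 (Or.inr ?_))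
    hw.aestronglyMeasurable.restrict (Filter.Eventually.of_forall fun x => ?_)
  · exact (isCompact_Icc).measure_lt_top
  · simpa [Real.norm_eq_abs] using hbd x

lemma itInt_props : ∀ {n : ℕ} (φ : Fin n → ℝ → ℝ), GoodFam φ →
    Continuous (itInt φ) ∧ ∀ b, itInt φ b ∈ Set.Icc (0:ℝ) 1 := by
  intro n
  induction n with
  | zero =>
    intro φ _
    refine ⟨?_, fun b => by norm_num [itInt_zero]⟩
    have : itInt φ = fun _ => (1:ℝ) := funext fun b => itInt_zero φ b
    rw [this]; exact continuous_const
  | succ m ih =>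
    intro φ hφ
    obtain ⟨cont', bd'⟩ := ih (fun j => φ j.succ) hφ.tail
    set w : ℝ → ℝ := fun t => φ 0 t * itInt (fun j => φ j.succ) t with hwdef
    have hw0 : ∀ t, 0 ≤ w t := fun t =>
      mul_nonneg ((hφ 0).2.1 t).1 (bd' t).1
    have hw1 : ∀ t, w t ≤ 1 := fun t => by
      have h1 := ((hφ 0).2.1 t).2
      have h2 := (bd' t).2
      have h3 := (bd' t).1
      have h4 := ((hφ 0).2.1 t).1
      show φ 0 t * itInt (fun j => φ j.succ) t ≤ 1
      nlinarith
    have hwmeas : Measurable w := (hφ 0).1.mul cont'.measurable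
    have hwsupp : ∀ x ∉ Set.Icc (0:ℝ) 1, w x = 0 := fun x hx => by
      simp [hwdef, (hφ 0).2.2 x hx]
    have hwint : Integrable w :=
      integrable_of_supp hwmeas (fun x => abs_le.2 ⟨by linarith [hw0 x], hw1 x⟩) hwsupp
    have hkey : ∀ b, itInt φ b = ∫ t in (min b 1)..(1:ℝ), w t := by
      intro b
      rcases le_or_gt b 1 with h | h
      · rw [min_eq_left h, intervalIntegral.integral_of_le h]; rfl
      · rw [min_eq_right h.le, intervalIntegral.integral_same, itInt_succ,
          Set.Ioc_eq_empty (by linarith), Measure.restrict_empty, integral_zero_measure]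
    constructor
    · have hp : Continuous fun b => ∫ t in (1:ℝ)..b, w t :=
        intervalIntegral.continuous_primitive (fun a b => hwint.intervalIntegrable) 1
      have : Continuous fun b => ∫ t in (min b 1)..(1:ℝ), w t := by
        have heq : (fun b => ∫ t in (min b 1)..(1:ℝ), w t)
            = fun b => -(∫ t in (1:ℝ)..(min b 1), w t) :=
          funext fun b => (intervalIntegral.integral_symm _ _)
        rw [heq]
        exact ((hp.comp (continuous_id.min continuous_const)).neg)
      have : itInt φ = fun b => ∫ t in (min b 1)..(1:ℝ), w t := funext hkey
      rw [this]
      have heq : (fun b => ∫ t in (min b 1)..(1:ℝ), w t)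
          = fun b => -(∫ t in (1:ℝ)..(min b 1), w t) :=
        funext fun b => (intervalIntegral.integral_symm _ _)
      rw [heq]
      exact ((hp.comp (continuous_id.min continuous_const)).neg)
    · intro b
      constructor
      · rw [itInt_succ]
        exact setIntegral_nonneg measurableSet_Ioc fun t _ => hw0 t
      · rw [itInt_succ]
        have step1 : (∫ t in Set.Ioc b 1, w t)
            = ∫ t in Set.Ioc b 1 ∩ Set.Icc 0 1, w t := by
          conv_lhs => rw [show w = (Set.Icc (0:ℝ) 1).indicator w by
            ext x
            by_cases h : x ∈ Set.Icc (0:ℝ) 1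
            · simp [Set.indicator_of_mem h]
            · simp [Set.indicator_of_notMem h, hwsupp x h]]
          exact setIntegral_indicator measurableSet_Icc
        calc (∫ t in Set.Ioc b 1, w t)
            = ∫ t in Set.Ioc b 1 ∩ Set.Icc 0 1, w t := step1
          _ ≤ ∫ _t in Set.Ioc b 1 ∩ Set.Icc 0 1, (1:ℝ) := by
              refine setIntegral_mono_on hwint.integrableOn
                ((integrableOn_const_iff (C := (1:ℝ))).2 (Or.inr ?_))
                (measurableSet_Ioc.inter measurableSet_Icc) (fun t _ => hw1 t)
              exact lt_of_le_of_lt (measure_mono Set.inter_subset_right)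
                isCompact_Icc.measure_lt_top
          _ = (volume (Set.Ioc b 1 ∩ Set.Icc 0 1)).toReal := by simp [measureReal_def]
          _ ≤ 1 := by
              have h1 : volume (Set.Ioc b 1 ∩ Set.Icc 0 1) ≤ volume (Set.Icc (0:ℝ) 1) :=
                measure_mono Set.inter_subset_right
              rw [Real.volume_Icc] at h1
              calc (volume (Set.Ioc b 1 ∩ Set.Icc 0 1)).toReal
                  ≤ (ENNReal.ofReal (1 - 0)).toReal :=
                    ENNReal.toReal_mono (by simp) h1
                _ ≤ 1 := by simp


lemma aux_poly (m : ℕ) (b : ℝ) (hb : b ≤ 1) :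
    ∫ t in Set.Ioc b 1, (1-t)^m / (Nat.factorial m : ℝ)
      = (1-b)^(m+1) / (Nat.factorial (m+1) : ℝ) := by
  rw [← intervalIntegral.integral_of_le hb]
  rw [intervalIntegral.integral_div]
  have h1 : (∫ t in b..(1:ℝ), (1-t)^m) = (1-b)^(m+1)/((m:ℝ)+1) := by
    rw [intervalIntegral.integral_comp_sub_left (fun u => u^m) 1, integral_pow]
    norm_num
  rw [h1]
  have hm : (Nat.factorial m : ℝ) ≠ 0 := Nat.cast_ne_zero.2 (Nat.factorial_ne_zero m)
  rw [Nat.factorial_succ]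
  push_cast
  field_simp

lemma itInt_le_poly : ∀ {n : ℕ} (φ : Fin n → ℝ → ℝ), GoodFam φ →
    ∀ b : ℝ, 0 ≤ b → b ≤ 1 → itInt φ b ≤ (1-b)^n / (Nat.factorial n : ℝ) := by
  intro n
  induction n with
  | zero => intro φ _ b _ _; simp [itInt_zero]
  | succ m ih =>
    intro φ hφ b hb0 hb1
    obtain ⟨cont', bd'⟩ := itInt_props (fun j => φ j.succ) hφ.tail
    have hwmeas : Measurable fun t => φ 0 t * itInt (fun j => φ j.succ) t :=
      (hφ 0).1.mul cont'.measurable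
    have hw0 : ∀ t, 0 ≤ φ 0 t * itInt (fun j => φ j.succ) t := fun t =>
      mul_nonneg ((hφ 0).2.1 t).1 (bd' t).1
    have hw1 : ∀ t, φ 0 t * itInt (fun j => φ j.succ) t ≤ 1 := fun t => by
      have h1 := ((hφ 0).2.1 t).2
      have h2 := (bd' t).2
      have h3 := (bd' t).1
      have h4 := ((hφ 0).2.1 t).1
      nlinarith
    have hwsupp : ∀ x ∉ Set.Icc (0:ℝ) 1, φ 0 x * itInt (fun j => φ j.succ) x = 0 :=
      fun x hx => by simp [(hφ 0).2.2 x hx]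
    have hwint : Integrable fun t => φ 0 t * itInt (fun j => φ j.succ) t :=
      integrable_of_supp hwmeas (fun x => abs_le.2 ⟨by linarith [hw0 x], hw1 x⟩) hwsupp
    rw [itInt_succ, ← aux_poly m b hb1]
    refine setIntegral_mono_on hwint.integrableOn ?_ measurableSet_Ioc ?_
    · exact ((continuous_const.sub continuous_id).pow m |>.div_const _).integrableOn_Ioc
    · intro t ht
      have h1 : itInt (fun j => φ j.succ) t ≤ (1-t)^m / (Nat.factorial m : ℝ) :=
        ih _ hφ.tail t (le_of_lt (lt_of_le_of_lt hb0 ht.1)) ht.2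
      have h2 := ((hφ 0).2.1 t).2
      have h4 := ((hφ 0).2.1 t).1
      have h3 := (bd' t).1
      calc φ 0 t * itInt (fun j => φ j.succ) t ≤ 1 * itInt (fun j => φ j.succ) t := by
            exact mul_le_mul_of_nonneg_right h2 h3
        _ = itInt (fun j => φ j.succ) t := one_mul _
        _ ≤ (1-t)^m / (Nat.factorial m : ℝ) := h1

lemma diag_null : (volume : Measure (ℝ × ℝ)) {p : ℝ × ℝ | p.1 = p.2} = 0 := by
  rw [Measure.volume_eq_prod,
    Measure.prod_apply (measurableSet_eq_fun measurable_fst measurable_snd)]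
  have h : ∀ t : ℝ, volume (Prod.mk t ⁻¹' {p : ℝ × ℝ | p.1 = p.2}) = 0 := by
    intro t
    have : Prod.mk t ⁻¹' {p : ℝ × ℝ | p.1 = p.2} = {t} := by
      ext s; simp [eq_comm]
    rw [this]; exact measure_singleton t
  simp [h]

lemma tri_fub (b : ℝ) (D β : ℝ → ℝ) (hD : Measurable D) (hβ : Measurable β)
    (hDb : ∀ x, |D x| ≤ 1) (hβb : ∀ x, |β x| ≤ 1)
    (hDs : ∀ x ∉ Set.Icc (0:ℝ) 1, D x = 0) (hβs : ∀ x ∉ Set.Icc (0:ℝ) 1, β x = 0) :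
    ∫ t in Set.Ioc b 1, D t * ∫ s in Set.Ioc t 1, β s
      = ∫ s in Set.Ioc b 1, (∫ t in Set.Ioc b s, D t) * β s := by
  set core : ℝ × ℝ → ℝ := fun p => D p.1 * β p.2 with hcore
  have hcoremeas : Measurable core := (hD.comp measurable_fst).mul (hβ.comp measurable_snd)
  set U : Set (ℝ × ℝ) := {p | b < p.1 ∧ p.1 < p.2 ∧ p.2 ≤ 1} with hUdef
  set U' : Set (ℝ × ℝ) := {p | b < p.1 ∧ p.1 ≤ p.2 ∧ b < p.2 ∧ p.2 ≤ 1} with hU'def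
  have hUmeas : MeasurableSet U :=
    (measurableSet_lt measurable_const measurable_fst).inter
      ((measurableSet_lt measurable_fst measurable_snd).inter
        (measurableSet_le measurable_snd measurable_const))
  have hU'meas : MeasurableSet U' :=
    (measurableSet_lt measurable_const measurable_fst).inter
      ((measurableSet_le measurable_fst measurable_snd).inter
        ((measurableSet_lt measurable_const measurable_snd).inter
          (measurableSet_le measurable_snd measurable_const)))
  have hbound : ∀ (V : Set (ℝ × ℝ)) p, |V.indicator core p|
      ≤ (Set.Icc (0:ℝ) 1 ×ˢ Set.Icc (0:ℝ) 1).indicator (fun _ => (1:ℝ)) p := by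
    intro V p
    by_cases hp : p ∈ Set.Icc (0:ℝ) 1 ×ˢ Set.Icc (0:ℝ) 1
    · rw [Set.indicator_of_mem hp]
      by_cases hpV : p ∈ V
      · rw [Set.indicator_of_mem hpV]
        calc |core p| = |D p.1| * |β p.2| := abs_mul _ _
          _ ≤ 1 * 1 := mul_le_mul (hDb _) (hβb _) (abs_nonneg _) zero_le_one
          _ = 1 := one_mul 1
      · rw [Set.indicator_of_notMem hpV]; simp
    · rw [Set.indicator_of_notMem hp]
      have hc : core p = 0 := by
        rcases not_and_or.1 (fun h => hp (Set.mem_prod.2 h)) with h | h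
        · simp [hcore, hDs _ h]
        · simp [hcore, hβs _ h]
      by_cases hpV : p ∈ V
      · rw [Set.indicator_of_mem hpV, hc]; simp
      · rw [Set.indicator_of_notMem hpV]; simp
  have hrectint : Integrable ((Set.Icc (0:ℝ) 1 ×ˢ Set.Icc (0:ℝ) 1).indicator
      (fun _ => (1:ℝ))) := by
    rw [integrable_indicator_iff (measurableSet_Icc.prod measurableSet_Icc)]
    exact (integrableOn_const_iff (C := (1:ℝ))).2 (Or.inr (isCompact_Icc.prod isCompact_Icc).measure_lt_top)
  have hHint : Integrable (U.indicator core) :=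
    Integrable.mono' hrectint (hcoremeas.indicator hUmeas).aestronglyMeasurable
      (Filter.Eventually.of_forall fun p => by
        simpa [Real.norm_eq_abs] using hbound U p)
  have hH'int : Integrable (U'.indicator core) :=
    Integrable.mono' hrectint (hcoremeas.indicator hU'meas).aestronglyMeasurable
      (Filter.Eventually.of_forall fun p => by
        simpa [Real.norm_eq_abs] using hbound U' p)
  have hLHS : (∫ t in Set.Ioc b 1, D t * ∫ s in Set.Ioc t 1, β s)
      = ∫ t : ℝ, ∫ s : ℝ, U.indicator core (t, s) := by
    rw [← integral_indicator measurableSet_Ioc]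
    refine integral_congr_ae (Filter.Eventually.of_forall fun t => ?_)
    by_cases ht : t ∈ Set.Ioc b 1
    · rw [Set.indicator_of_mem ht, ← integral_indicator measurableSet_Ioc,
        ← integral_const_mul]
      refine integral_congr_ae (Filter.Eventually.of_forall fun s => ?_)
      show D t * (Set.Ioc t 1).indicator β s = U.indicator core (t, s)
      by_cases hs : s ∈ Set.Ioc t 1
      · rw [Set.indicator_of_mem hs,
          Set.indicator_of_mem (show (t,s) ∈ U from ⟨ht.1, hs.1, hs.2⟩)]
      · rw [Set.indicator_of_notMem hs,
          Set.indicator_of_notMem (fun hmem : (t,s) ∈ U => hs ⟨hmem.2.1, hmem.2.2⟩),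
          mul_zero]
    · rw [Set.indicator_of_notMem ht]
      have h0 : ∀ s, U.indicator core (t, s) = 0 := fun s =>
        Set.indicator_of_notMem
          (fun hmem : (t,s) ∈ U => ht ⟨hmem.1, le_of_lt (lt_of_lt_of_le hmem.2.1 hmem.2.2)⟩) _
      simp [h0]
  have hRHS : (∫ s in Set.Ioc b 1, (∫ t in Set.Ioc b s, D t) * β s)
      = ∫ s : ℝ, ∫ t : ℝ, U'.indicator core (t, s) := by
    rw [← integral_indicator measurableSet_Ioc]
    refine integral_congr_ae (Filter.Eventually.of_forall fun s => ?_)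
    by_cases hs : s ∈ Set.Ioc b 1
    · rw [Set.indicator_of_mem hs, ← integral_indicator measurableSet_Ioc,
        ← integral_mul_const]
      refine integral_congr_ae (Filter.Eventually.of_forall fun t => ?_)
      show (Set.Ioc b s).indicator D t * β s = U'.indicator core (t, s)
      by_cases ht : t ∈ Set.Ioc b s
      · rw [Set.indicator_of_mem ht,
          Set.indicator_of_mem (show (t,s) ∈ U' from ⟨ht.1, ht.2, hs.1, hs.2⟩)]
      · rw [Set.indicator_of_notMem ht,
          Set.indicator_of_notMem (fun hmem : (t,s) ∈ U' => ht ⟨hmem.1, hmem.2.1⟩),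
          zero_mul]
    · rw [Set.indicator_of_notMem hs]
      have h0 : ∀ t, U'.indicator core (t, s) = 0 := fun t =>
        Set.indicator_of_notMem
          (fun hmem : (t,s) ∈ U' => hs ⟨hmem.2.2.1, hmem.2.2.2⟩) _
      simp [h0]
  have hHint' : Integrable (U.indicator core) ((volume : Measure ℝ).prod volume) := by
    rwa [← Measure.volume_eq_prod]
  have hH'int' : Integrable (U'.indicator core) ((volume : Measure ℝ).prod volume) := by
    rwa [← Measure.volume_eq_prod]
  have hfub : (∫ t : ℝ, ∫ s : ℝ, U.indicator core (t, s))
      = ∫ p : ℝ × ℝ, U.indicator core p := by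
    rw [Measure.volume_eq_prod, integral_prod _ hHint']
  have hswap : (∫ s : ℝ, ∫ t : ℝ, U'.indicator core (t, s))
      = ∫ p : ℝ × ℝ, U'.indicator core p := by
    have hG : Integrable (fun q : ℝ × ℝ => U'.indicator core q.swap)
        ((volume : Measure ℝ).prod volume) := hH'int'.swap
    calc (∫ s : ℝ, ∫ t : ℝ, U'.indicator core (t, s))
        = ∫ q : ℝ × ℝ, U'.indicator core q.swap
            ∂((volume : Measure ℝ).prod volume) := (integral_prod _ hG).symm
      _ = ∫ p : ℝ × ℝ, U'.indicator core p
            ∂((volume : Measure ℝ).prod volume) := integral_prod_swap _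
      _ = ∫ p : ℝ × ℝ, U'.indicator core p := by rw [← Measure.volume_eq_prod]
  have hae : U.indicator core =ᵐ[(volume : Measure (ℝ × ℝ))] U'.indicator core := by
    have hsub : {p : ℝ × ℝ | ¬ (U.indicator core p = U'.indicator core p)}
        ⊆ {p : ℝ × ℝ | p.1 = p.2} := by
      intro p hp
      by_contra hne
      apply hp
      by_cases hpU : p ∈ U
      · rw [Set.indicator_of_mem hpU, Set.indicator_of_mem
          (show p ∈ U' from ⟨hpU.1, le_of_lt hpU.2.1, lt_trans hpU.1 hpU.2.1, hpU.2.2⟩)]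
      · rw [Set.indicator_of_notMem hpU, Set.indicator_of_notMem
          (fun hpU' : p ∈ U' => hpU ⟨hpU'.1, lt_of_le_of_ne hpU'.2.1 hne, hpU'.2.2.2⟩)]
    rw [Filter.EventuallyEq, ae_iff]
    exact measure_mono_null hsub diag_null
  rw [hLHS, hRHS, hfub, hswap]
  exact integral_congr_ae hae

lemma integrableOn_Ioc_of_bdd {w : ℝ → ℝ} (hw : Measurable w) {C : ℝ}
    (hC : ∀ x, |w x| ≤ C) {a b : ℝ} : IntegrableOn w (Set.Ioc a b) :=
  Integrable.mono' ((integrableOn_const_iff (C := C)).2 (Or.inr measure_Ioc_lt_top))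
    hw.aestronglyMeasurable.restrict
    (Filter.Eventually.of_forall fun x => by simpa [Real.norm_eq_abs] using hC x)

lemma itInt_w {n : ℕ} (φ : Fin (n+1) → ℝ → ℝ) (hφ : GoodFam φ) :
    Measurable (fun t => φ 0 t * itInt (fun j => φ j.succ) t) ∧
    (∀ t, 0 ≤ φ 0 t * itInt (fun j => φ j.succ) t
        ∧ φ 0 t * itInt (fun j => φ j.succ) t ≤ 1) ∧
    (∀ x ∉ Set.Icc (0:ℝ) 1, φ 0 x * itInt (fun j => φ j.succ) x = 0) ∧
    Integrable (fun t => φ 0 t * itInt (fun j => φ j.succ) t) := by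
  obtain ⟨cont', bd'⟩ := itInt_props (fun j => φ j.succ) hφ.tail
  have hwmeas : Measurable fun t => φ 0 t * itInt (fun j => φ j.succ) t :=
    (hφ 0).1.mul cont'.measurable
  have hwbd : ∀ t, 0 ≤ φ 0 t * itInt (fun j => φ j.succ) t
      ∧ φ 0 t * itInt (fun j => φ j.succ) t ≤ 1 := by
    intro t
    have h1 := ((hφ 0).2.1 t).2
    have h2 := (bd' t).2
    have h3 := (bd' t).1
    have h4 := ((hφ 0).2.1 t).1
    exact ⟨mul_nonneg h4 h3, by nlinarith⟩
  have hwsupp : ∀ x ∉ Set.Icc (0:ℝ) 1, φ 0 x * itInt (fun j => φ j.succ) x = 0 :=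
    fun x hx => by simp [(hφ 0).2.2 x hx]
  exact ⟨hwmeas, hwbd, hwsupp, integrable_of_supp hwmeas
    (fun x => abs_le.2 ⟨by linarith [(hwbd x).1], (hwbd x).2⟩) hwsupp⟩

lemma itInt_diff : ∀ {n : ℕ} (φ ψ : Fin (n+1) → ℝ → ℝ), GoodFam φ → GoodFam ψ →
    ∀ (K : ℝ), (∀ i (c d : ℝ), 0 ≤ c → c ≤ d → d ≤ 1 →
      |∫ t in Set.Ioc c d, (φ i t - ψ i t)| ≤ K) →
    ∀ b : ℝ, 0 ≤ b → b ≤ 1 →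
    |itInt φ b - itInt ψ b| ≤ (n+1) * K * (1-b)^n / (Nat.factorial n : ℝ) := by
  intro n
  induction n with
  | zero =>
    intro φ ψ hφ hψ K hK b hb0 hb1
    have hφint : IntegrableOn (φ 0) (Set.Ioc b 1) :=
      integrableOn_Ioc_of_bdd (hφ 0).1 (C := 1)
        (fun x => abs_le.2 ⟨by linarith [((hφ 0).2.1 x).1], ((hφ 0).2.1 x).2⟩)
    have hψint : IntegrableOn (ψ 0) (Set.Ioc b 1) :=
      integrableOn_Ioc_of_bdd (hψ 0).1 (C := 1)
        (fun x => abs_le.2 ⟨by linarith [((hψ 0).2.1 x).1], ((hψ 0).2.1 x).2⟩)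
    have h1 : itInt φ b - itInt ψ b = ∫ t in Set.Ioc b 1, (φ 0 t - ψ 0 t) := by
      rw [itInt_succ, itInt_succ]
      simp only [itInt_zero, mul_one]
      exact (integral_sub hφint hψint).symm
    rw [h1]
    have := hK 0 b 1 hb0 hb1 le_rfl
    simpa using this
  | succ n ih =>
    intro φ ψ hφ hψ K hK b hb0 hb1
    have hK0 : 0 ≤ K :=
      le_trans (abs_nonneg _) (hK 0 0 0 le_rfl le_rfl zero_le_one)
    obtain ⟨hφm, hφbd, hφsupp, hφint⟩ := itInt_w φ hφ
    obtain ⟨hψm, hψbd, hψsupp, hψint⟩ := itInt_w ψ hψ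
    obtain ⟨contφ', bdφ'⟩ := itInt_props (fun j => φ j.succ) hφ.tail
    obtain ⟨contψ', bdψ'⟩ := itInt_props (fun j => ψ j.succ) hψ.tail
    set A : ℝ → ℝ := fun t =>
      φ 0 t * (itInt (fun j => φ j.succ) t - itInt (fun j => ψ j.succ) t) with hA
    set B : ℝ → ℝ := fun t =>
      (φ 0 t - ψ 0 t) * itInt (fun j => ψ j.succ) t with hB
    have hAm : Measurable A := (hφ 0).1.mul (contφ'.sub contψ').measurable
    have hBm : Measurable B := ((hφ 0).1.sub (hψ 0).1).mul contψ'.measurable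
    have hAbd : ∀ t, |A t| ≤ 1 := by
      intro t
      have h1 := ((hφ 0).2.1 t).1
      have h2 := ((hφ 0).2.1 t).2
      have h3 := (bdφ' t).1
      have h4 := (bdφ' t).2
      have h5 := (bdψ' t).1
      have h6 := (bdψ' t).2
      rw [hA, abs_mul]
      calc |φ 0 t| * |itInt (fun j => φ j.succ) t - itInt (fun j => ψ j.succ) t|
          ≤ 1 * 1 := by
            apply mul_le_mul _ _ (abs_nonneg _) zero_le_one
            · rw [abs_le]; constructor <;> linarith
            · rw [abs_le]; constructor <;> linarith
        _ = 1 := one_mul 1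
    have hBbd : ∀ t, |B t| ≤ 1 := by
      intro t
      have h1 := ((hφ 0).2.1 t).1
      have h2 := ((hφ 0).2.1 t).2
      have h3 := ((hψ 0).2.1 t).1
      have h4 := ((hψ 0).2.1 t).2
      have h5 := (bdψ' t).1
      have h6 := (bdψ' t).2
      rw [hB, abs_mul]
      calc |φ 0 t - ψ 0 t| * |itInt (fun j => ψ j.succ) t|
          ≤ 1 * 1 := by
            apply mul_le_mul _ _ (abs_nonneg _) zero_le_one
            · rw [abs_le]; constructor <;> linarith
            · rw [abs_le]; constructor <;> linarith
        _ = 1 := one_mul 1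
    have hsplit : itInt φ b - itInt ψ b
        = (∫ t in Set.Ioc b 1, A t) + ∫ t in Set.Ioc b 1, B t := by
      rw [itInt_succ, itInt_succ, ← integral_sub hφint.integrableOn hψint.integrableOn,
        ← integral_add (integrableOn_Ioc_of_bdd hAm hAbd) (integrableOn_Ioc_of_bdd hBm hBbd)]
      refine setIntegral_congr_fun measurableSet_Ioc fun t _ => ?_
      simp only [hA, hB]
      ring
    -- Term 1
    have hterm1 : |∫ t in Set.Ioc b 1, A t|
        ≤ (n+1) * K * (1-b)^(n+1) / (Nat.factorial (n+1) : ℝ) := by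
      have hg : IntegrableOn (fun t => (n+1) * K * ((1-t)^n / (Nat.factorial n : ℝ)))
          (Set.Ioc b 1) :=
        (Continuous.integrableOn_Ioc (continuous_const.mul (((continuous_const.sub continuous_id).pow n).div_const _)))
      have hbd : ∀ᵐ t ∂(volume.restrict (Set.Ioc b 1)),
          ‖A t‖ ≤ (n+1) * K * ((1-t)^n / (Nat.factorial n : ℝ)) := by
        rw [ae_restrict_iff' measurableSet_Ioc]
        refine Filter.Eventually.of_forall fun t ht => ?_
        have hdiff := ih (fun j => φ j.succ) (fun j => ψ j.succ) hφ.tail hψ.tail K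
          (fun i c d hc hcd hd1 => hK i.succ c d hc hcd hd1) t
          (le_of_lt (lt_of_le_of_lt hb0 ht.1)) ht.2
        have h2 := ((hφ 0).2.1 t).2
        have h1 := ((hφ 0).2.1 t).1
        rw [Real.norm_eq_abs, hA, abs_mul]
        calc |φ 0 t| * |itInt (fun j => φ j.succ) t - itInt (fun j => ψ j.succ) t|
            ≤ 1 * ((n+1) * K * (1-t)^n / (Nat.factorial n : ℝ)) := by
              apply mul_le_mul _ hdiff (abs_nonneg _) zero_le_one
              rw [abs_le]; constructor <;> linarith
          _ = (n+1) * K * ((1-t)^n / (Nat.factorial n : ℝ)) := by ring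
      calc |∫ t in Set.Ioc b 1, A t|
          ≤ ∫ t in Set.Ioc b 1, (n+1) * K * ((1-t)^n / (Nat.factorial n : ℝ)) := by
            simpa [Real.norm_eq_abs] using norm_integral_le_of_norm_le hg hbd
        _ = (n+1) * K * ∫ t in Set.Ioc b 1, (1-t)^n / (Nat.factorial n : ℝ) :=
            integral_const_mul _ _
        _ = (n+1) * K * ((1-b)^(n+1) / (Nat.factorial (n+1) : ℝ)) := by
            rw [aux_poly n b hb1]
        _ = (n+1) * K * (1-b)^(n+1) / (Nat.factorial (n+1) : ℝ) := by ring
    -- Term 2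
    have hterm2 : |∫ t in Set.Ioc b 1, B t|
        ≤ K * (1-b)^(n+1) / (Nat.factorial (n+1) : ℝ) := by
      set δ : ℝ → ℝ := fun t => φ 0 t - ψ 0 t with hδ
      set βf : ℝ → ℝ := fun s =>
        ψ (Fin.succ 0) s * itInt (fun j : Fin n => ψ j.succ.succ) s with hβf
      obtain ⟨hβm0, hβbd0, hβsupp0, hβint0⟩ := itInt_w (fun j => ψ j.succ) hψ.tail
      have hβm : Measurable βf := hβm0
      have hβbd : ∀ t, 0 ≤ βf t ∧ βf t ≤ 1 := hβbd0
      have hβsupp : ∀ x ∉ Set.Icc (0:ℝ) 1, βf x = 0 := hβsupp0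
      have hδm : Measurable δ := (hφ 0).1.sub (hψ 0).1
      have hδbd : ∀ x, |δ x| ≤ 1 := by
        intro x
        have h1 := ((hφ 0).2.1 x).1
        have h2 := ((hφ 0).2.1 x).2
        have h3 := ((hψ 0).2.1 x).1
        have h4 := ((hψ 0).2.1 x).2
        rw [hδ, abs_le]; constructor <;> simp <;> linarith
      have hδsupp : ∀ x ∉ Set.Icc (0:ℝ) 1, δ x = 0 := fun x hx => by
        simp [hδ, (hφ 0).2.2 x hx, (hψ 0).2.2 x hx]
      have hβbd1 : ∀ x, |βf x| ≤ 1 := fun x =>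
        abs_le.2 ⟨by linarith [(hβbd x).1], (hβbd x).2⟩
      have hBrw : (∫ t in Set.Ioc b 1, B t)
          = ∫ t in Set.Ioc b 1, δ t * ∫ s in Set.Ioc t 1, βf s := by
        refine setIntegral_congr_fun measurableSet_Ioc fun t _ => ?_
        simp only [hB, hδ, hβf]
        rw [itInt_succ]
      rw [hBrw, tri_fub b δ βf hδm hβm hδbd hβbd1 hδsupp hβsupp]
      have hg : IntegrableOn (fun s => K * ((1-s)^n / (Nat.factorial n : ℝ)))
          (Set.Ioc b 1) := (Continuous.integrableOn_Ioc (continuous_const.mul (((continuous_const.sub continuous_id).pow n).div_const _)))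
      have hbd : ∀ᵐ s ∂(volume.restrict (Set.Ioc b 1)),
          ‖(∫ t in Set.Ioc b s, δ t) * βf s‖
            ≤ K * ((1-s)^n / (Nat.factorial n : ℝ)) := by
        rw [ae_restrict_iff' measurableSet_Ioc]
        refine Filter.Eventually.of_forall fun s hs => ?_
        have hd : |∫ t in Set.Ioc b s, δ t| ≤ K := hK 0 b s hb0 (le_of_lt hs.1) hs.2
        have hβpoly : βf s ≤ (1-s)^n / (Nat.factorial n : ℝ) := by
          have h1 := ((hψ.tail 0).2.1 s).2
          have h0 := ((hψ.tail 0).2.1 s).1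
          have hpoly := itInt_le_poly (fun j : Fin n => ψ j.succ.succ) (hψ.tail.tail) s
            (le_of_lt (lt_of_le_of_lt hb0 hs.1)) hs.2
          have h3 := (itInt_props (fun j : Fin n => ψ j.succ.succ) (hψ.tail.tail)).2 s
          calc βf s ≤ 1 * itInt (fun j : Fin n => ψ j.succ.succ) s := by
                show (ψ (Fin.succ 0)) s * _ ≤ _
                have h1' : ψ (Fin.succ 0) s ≤ 1 := h1
                exact mul_le_mul_of_nonneg_right h1' h3.1
            _ = itInt (fun j : Fin n => ψ j.succ.succ) s := one_mul _
            _ ≤ (1-s)^n / (Nat.factorial n : ℝ) := hpoly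
        rw [Real.norm_eq_abs, abs_mul]
        have hβabs : |βf s| = βf s := abs_of_nonneg (hβbd s).1
        rw [hβabs]
        calc |∫ t in Set.Ioc b s, δ t| * βf s ≤ K * βf s :=
              mul_le_mul_of_nonneg_right hd (hβbd s).1
          _ ≤ K * ((1-s)^n / (Nat.factorial n : ℝ)) :=
              mul_le_mul_of_nonneg_left hβpoly hK0
      calc |∫ s in Set.Ioc b 1, (∫ t in Set.Ioc b s, δ t) * βf s|
          ≤ ∫ s in Set.Ioc b 1, K * ((1-s)^n / (Nat.factorial n : ℝ)) := by
            simpa [Real.norm_eq_abs] using norm_integral_le_of_norm_le hg hbd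
        _ = K * ∫ s in Set.Ioc b 1, (1-s)^n / (Nat.factorial n : ℝ) :=
            integral_const_mul _ _
        _ = K * ((1-b)^(n+1) / (Nat.factorial (n+1) : ℝ)) := by rw [aux_poly n b hb1]
        _ = K * (1-b)^(n+1) / (Nat.factorial (n+1) : ℝ) := by ring
    rw [hsplit]
    calc |(∫ t in Set.Ioc b 1, A t) + ∫ t in Set.Ioc b 1, B t|
        ≤ |∫ t in Set.Ioc b 1, A t| + |∫ t in Set.Ioc b 1, B t| := abs_add_le _ _
      _ ≤ (n+1) * K * (1-b)^(n+1) / (Nat.factorial (n+1) : ℝ)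
          + K * (1-b)^(n+1) / (Nat.factorial (n+1) : ℝ) := add_le_add hterm1 hterm2
      _ = (↑(n+1)+1) * K * (1-b)^(n+1) / (Nat.factorial (n+1) : ℝ) := by
          push_cast
          ring

def simplexT (n : ℕ) (b : ℝ) : Set (Fin n → ℝ) :=
  {y | (∀ i, y i ∈ Set.Ioc b 1) ∧ ∀ i j : Fin n, i < j → y i < y j}

lemma measurableSet_incr {α : Type*} [MeasurableSpace α] {n : ℕ} (v : α → Fin n → ℝ)
    (hv : ∀ i, Measurable fun a => v a i) :
    MeasurableSet {a | ∀ i j : Fin n, i < j → v a i < v a j} := by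
  have h : {a | ∀ i j : Fin n, i < j → v a i < v a j}
      = ⋂ i, ⋂ j, {a | i < j → v a i < v a j} := by
    ext a; simp
  rw [h]
  refine MeasurableSet.iInter fun i => MeasurableSet.iInter fun j => ?_
  by_cases hij : i < j
  · have : {a | i < j → v a i < v a j} = {a | v a i < v a j} := by ext a; simp [hij]
    rw [this]; exact measurableSet_lt (hv i) (hv j)
  · have : {a | i < j → v a i < v a j} = Set.univ := by ext a; simp [hij]
    rw [this]; exact MeasurableSet.univ

lemma measurableSet_simplexT (n : ℕ) (b : ℝ) : MeasurableSet (simplexT n b) := by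
  have h1 : MeasurableSet {y : Fin n → ℝ | ∀ i, y i ∈ Set.Ioc b 1} := by
    have : {y : Fin n → ℝ | ∀ i, y i ∈ Set.Ioc b 1} = ⋂ i, {y | y i ∈ Set.Ioc b 1} := by
      ext y; simp
    rw [this]
    exact MeasurableSet.iInter fun i => (measurable_pi_apply i) measurableSet_Ioc
  exact h1.inter (measurableSet_incr (fun y => y) measurable_pi_apply)

lemma simplex_eq_itInt : ∀ {n : ℕ} (φ : Fin n → ℝ → ℝ), GoodFam φ →
    ∀ b : ℝ, 0 ≤ b → b ≤ 1 →
    (∫ y in simplexT n b, ∏ i, φ i (y i)) = itInt φ b := by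
  intro n
  induction n with
  | zero =>
    intro φ _ b _ _
    rw [itInt_zero]
    have hT : simplexT 0 b = Set.univ := by
      ext y
      simp only [simplexT, Set.mem_setOf_eq, Set.mem_univ, iff_true]
      exact ⟨fun i => i.elim0, fun i => i.elim0⟩
    rw [hT, Measure.restrict_univ]
    have hprod : ∀ y : Fin 0 → ℝ, (∏ i, φ i (y i)) = 1 := fun y => by simp
    rw [show (fun y : Fin 0 → ℝ => ∏ i, φ i (y i)) = fun _ => (1:ℝ) from funext hprod,
      integral_const]
    simp [volume_pi, Measure.pi_univ, measureReal_def]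
  | succ n ih =>
    intro φ hφ b hb0 hb1
    set e := MeasurableEquiv.piFinSuccAbove (fun _ : Fin (n+1) => ℝ) 0 with he
    set s : Set (ℝ × (Fin n → ℝ)) := {p | p.1 ∈ Set.Ioc b 1 ∧ p.2 ∈ simplexT n p.1} with hs
    set g : ℝ × (Fin n → ℝ) → ℝ := fun p => φ 0 p.1 * ∏ j, φ j.succ (p.2 j) with hg
    have heapp : ∀ x : Fin (n+1) → ℝ, e x = (x 0, fun j => x j.succ) := fun x => rfl
    have hsmeas : MeasurableSet s := by
      have h1 : MeasurableSet {p : ℝ × (Fin n → ℝ) | p.1 ∈ Set.Ioc b 1} :=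
        measurable_fst measurableSet_Ioc
      have h2 : MeasurableSet {p : ℝ × (Fin n → ℝ) | p.2 ∈ simplexT n p.1} := by
        have hrw : {p : ℝ × (Fin n → ℝ) | p.2 ∈ simplexT n p.1}
            = (⋂ i, {p : ℝ × (Fin n → ℝ) | p.1 < p.2 i ∧ p.2 i ≤ 1})
              ∩ {p : ℝ × (Fin n → ℝ) | ∀ i j : Fin n, i < j → p.2 i < p.2 j} := by
          ext p
          simp [simplexT, forall_and]
        have hev : ∀ i : Fin n, Measurable fun p : ℝ × (Fin n → ℝ) => p.2 i :=
          fun i => (measurable_pi_apply i).comp measurable_snd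
        rw [hrw]
        refine MeasurableSet.inter (MeasurableSet.iInter fun i => ?_)
          (measurableSet_incr (fun p : ℝ × (Fin n → ℝ) => p.2) hev)
        exact (measurableSet_lt measurable_fst (hev i)).inter
          (measurableSet_le (hev i) measurable_const)
      exact h1.inter h2
    have hpre : e ⁻¹' s = simplexT (n+1) b := by
      ext x
      rw [Set.mem_preimage, heapp x]
      constructor
      · rintro ⟨h0, htail, hinc⟩
        constructor
        · intro i
          refine Fin.cases ?_ ?_ i
          · exact h0
          · intro j
            exact ⟨lt_trans h0.1 (htail j).1, (htail j).2⟩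
        · intro i j
          refine Fin.cases ?_ ?_ j
          · intro hij; exact absurd hij (Fin.not_lt_zero i)
          · intro k
            refine Fin.cases ?_ ?_ i
            · intro _; exact (htail k).1
            · intro l hlk
              exact hinc l k (Fin.succ_lt_succ_iff.mp hlk)
      · rintro ⟨hall, hinc⟩
        exact ⟨hall 0, fun j => ⟨hinc 0 j.succ (Fin.succ_pos j), (hall j.succ).2⟩,
          fun j k hjk => hinc j.succ k.succ (Fin.succ_lt_succ_iff.mpr hjk)⟩
    have hgmeas : Measurable g :=
      ((hφ 0).1.comp measurable_fst).mul
        (Finset.measurable_prod Finset.univ fun j _ =>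
          (hφ j.succ).1.comp ((measurable_pi_apply j).comp measurable_snd))
    have hgbd : ∀ p, |g p| ≤ 1 := by
      intro p
      rw [hg, abs_mul]
      have h1 : |φ 0 p.1| ≤ 1 := by
        have := ((hφ 0).2.1 p.1)
        rw [abs_le]; exact ⟨by linarith [this.1], this.2⟩
      have h2 : |∏ j, φ j.succ (p.2 j)| ≤ 1 := by
        rw [Finset.abs_prod]
        refine Finset.prod_le_one (fun j _ => abs_nonneg _) fun j _ => ?_
        have := ((hφ j.succ).2.1 (p.2 j))
        rw [abs_le]; exact ⟨by linarith [this.1], this.2⟩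
      calc |φ 0 p.1| * |∏ j, φ j.succ (p.2 j)| ≤ 1 * 1 :=
            mul_le_mul h1 h2 (abs_nonneg _) zero_le_one
        _ = 1 := one_mul 1
    have hgsupp : ∀ p : ℝ × (Fin n → ℝ),
        p ∉ (Set.Icc (0:ℝ) 1 ×ˢ Set.pi Set.univ fun _ : Fin n => Set.Icc (0:ℝ) 1) →
          g p = 0 := by
      intro p hp
      rcases not_and_or.1 (fun h => hp (Set.mem_prod.2 h)) with h | h
      · rw [hg]; simp [(hφ 0).2.2 p.1 h]
      · rw [Set.mem_univ_pi] at h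
        push_neg at h
        obtain ⟨j, hj⟩ := h
        rw [hg]
        have : (∏ j, φ j.succ (p.2 j)) = 0 :=
          Finset.prod_eq_zero (Finset.mem_univ j) ((hφ j.succ).2.2 (p.2 j) hj)
        simp [this]
    set F : ℝ × (Fin n → ℝ) → ℝ := s.indicator g with hF
    have hrectmeas : MeasurableSet
        (Set.Icc (0:ℝ) 1 ×ˢ Set.pi Set.univ fun _ : Fin n => Set.Icc (0:ℝ) 1) :=
      measurableSet_Icc.prod (MeasurableSet.univ_pi fun _ => measurableSet_Icc)
    have hFint : Integrable F := by
      refine Integrable.mono'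
        (g := (Set.Icc (0:ℝ) 1 ×ˢ Set.pi Set.univ fun _ : Fin n => Set.Icc (0:ℝ) 1).indicator
          fun _ => (1:ℝ)) ?_ (hgmeas.indicator hsmeas).aestronglyMeasurable
        (Filter.Eventually.of_forall fun p => ?_)
      · rw [integrable_indicator_iff hrectmeas]
        exact (integrableOn_const_iff (C := (1:ℝ))).2 (Or.inr
          (isCompact_Icc.prod (isCompact_univ_pi fun _ => isCompact_Icc)).measure_lt_top)
      · by_cases hp : p ∈ Set.Icc (0:ℝ) 1 ×ˢ Set.pi Set.univ fun _ : Fin n => Set.Icc (0:ℝ) 1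
        · rw [Set.indicator_of_mem hp]
          by_cases hps : p ∈ s
          · rw [hF, Set.indicator_of_mem hps, Real.norm_eq_abs]; exact hgbd p
          · rw [hF, Set.indicator_of_notMem hps]; simp
        · rw [Set.indicator_of_notMem hp]
          by_cases hps : p ∈ s
          · rw [hF, Set.indicator_of_mem hps, Real.norm_eq_abs, hgsupp p hp]; simp
          · rw [hF, Set.indicator_of_notMem hps]; simp
    have hFint' : Integrable F ((volume : Measure ℝ).prod volume) := by
      rwa [← Measure.volume_eq_prod]
    have hinner : ∀ t : ℝ, (∫ y : Fin n → ℝ, F (t, y))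
        = (Set.Ioc b 1).indicator
            (fun t => φ 0 t * itInt (fun j => φ j.succ) t) t := by
      intro t
      by_cases ht : t ∈ Set.Ioc b 1
      · rw [Set.indicator_of_mem ht]
        have hy : ∀ y, F (t, y) = (simplexT n t).indicator
            (fun y => φ 0 t * ∏ j, φ j.succ (y j)) y := by
          intro y
          by_cases hys : y ∈ simplexT n t
          · rw [Set.indicator_of_mem hys, hF,
              Set.indicator_of_mem (show (t,y) ∈ s from ⟨ht, hys⟩)]
          · rw [Set.indicator_of_notMem hys, hF,
              Set.indicator_of_notMem (fun hm : (t,y) ∈ s => hys hm.2)]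
        rw [show (fun y : Fin n → ℝ => F (t, y))
            = fun y => (simplexT n t).indicator
              (fun y => φ 0 t * ∏ j, φ j.succ (y j)) y from funext hy]
        rw [integral_indicator (measurableSet_simplexT n t), integral_const_mul,
          ih (fun j => φ j.succ) hφ.tail t (le_trans hb0 (le_of_lt ht.1)) ht.2]
      · rw [Set.indicator_of_notMem ht]
        have hy : ∀ y : Fin n → ℝ, F (t, y) = 0 := fun y =>
          Set.indicator_of_notMem (fun hm : (t,y) ∈ s => ht hm.1) _
        simp [hy]
    calc (∫ y in simplexT (n+1) b, ∏ i, φ i (y i))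
        = ∫ x in e ⁻¹' s, g (e x) := by
          rw [hpre]
          refine setIntegral_congr_fun (measurableSet_simplexT (n+1) b) fun x _ => ?_
          rw [heapp x, hg]
          simp only [Fin.prod_univ_succ]
      _ = ∫ p in s, g p :=
          (volume_preserving_piFinSuccAbove (fun _ : Fin (n+1) => ℝ) 0).setIntegral_preimage_emb
            (MeasurableEquiv.measurableEmbedding e) g s
      _ = ∫ p : ℝ × (Fin n → ℝ), F p := (integral_indicator hsmeas).symm
      _ = ∫ t : ℝ, ∫ y : Fin n → ℝ, F (t, y) := by
          rw [Measure.volume_eq_prod, integral_prod _ hFint']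
      _ = ∫ t : ℝ, (Set.Ioc b 1).indicator
            (fun t => φ 0 t * itInt (fun j => φ j.succ) t) t :=
          integral_congr_ae (Filter.Eventually.of_forall hinner)
      _ = ∫ t in Set.Ioc b 1, φ 0 t * itInt (fun j => φ j.succ) t :=
          integral_indicator measurableSet_Ioc
      _ = itInt φ b := (itInt_succ φ b).symm


lemma measurableSet_Sset (ℓ : ℕ) : MeasurableSet
    {x : Fin ℓ → ℝ | (∀ i, x i ∈ Set.Icc (0:ℝ) 1) ∧ (∀ i j : Fin ℓ, i < j → x i < x j)} := by
  have h1 : MeasurableSet {x : Fin ℓ → ℝ | ∀ i, x i ∈ Set.Icc (0:ℝ) 1} := by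
    have : {x : Fin ℓ → ℝ | ∀ i, x i ∈ Set.Icc (0:ℝ) 1}
        = ⋂ i, {x | x i ∈ Set.Icc (0:ℝ) 1} := by ext x; simp
    rw [this]
    exact MeasurableSet.iInter fun i => (measurable_pi_apply i) measurableSet_Icc
  exact h1.inter (measurableSet_incr (fun x => x) measurable_pi_apply)

lemma coord_zero_null {n : ℕ} (i : Fin n) (c : ℝ) :
    volume {x : Fin n → ℝ | x i = c} = 0 := by
  have h : {x : Fin n → ℝ | x i = c}
      = Set.pi Set.univ (fun j => if j = i then {c} else Set.univ) := by
    ext x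
    simp only [Set.mem_setOf_eq, Set.mem_pi, Set.mem_univ, true_implies]
    constructor
    · intro hx j
      by_cases hj : j = i
      · subst hj; simp [hx]
      · simp [hj]
    · intro hx
      have := hx i
      simpa using this
  rw [h, volume_pi, Measure.pi_pi]
  refine Finset.prod_eq_zero (Finset.mem_univ i) ?_
  simp

lemma Sset_ae (ℓ : ℕ) :
    {x : Fin ℓ → ℝ | (∀ i, x i ∈ Set.Icc (0:ℝ) 1) ∧ (∀ i j : Fin ℓ, i < j → x i < x j)}
      =ᵐ[(volume : Measure (Fin ℓ → ℝ))] simplexT ℓ 0 := by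
  rw [MeasureTheory.ae_eq_set]
  constructor
  · refine measure_mono_null ?_ (measure_iUnion_null fun i : Fin ℓ =>
      coord_zero_null i 0)
    rintro x ⟨⟨hicc, hinc⟩, hnT⟩
    have hne : ¬ ∀ i, x i ∈ Set.Ioc (0:ℝ) 1 := fun h => hnT ⟨h, hinc⟩
    push_neg at hne
    obtain ⟨i, hi⟩ := hne
    have hx0 : x i = 0 := by
      have h1 := hicc i
      rcases lt_or_ge 0 (x i) with h | h
      · exact absurd ⟨h, h1.2⟩ hi
      · exact le_antisymm h h1.1
    exact Set.mem_iUnion.2 ⟨i, hx0⟩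
  · have hsub : simplexT ℓ 0 ⊆ {x : Fin ℓ → ℝ | (∀ i, x i ∈ Set.Icc (0:ℝ) 1)
        ∧ (∀ i j : Fin ℓ, i < j → x i < x j)} := by
      rintro x ⟨hIoc, hinc⟩
      exact ⟨fun i => ⟨le_of_lt (hIoc i).1, (hIoc i).2⟩, hinc⟩
    rw [Set.diff_eq_empty.mpr hsub]
    exact measure_empty

lemma key_thm {ℓ : ℕ} (f g : ℝ → ℝ) (hf : Measurable f) (hg : Measurable g)
    (hf1 : ∀ x, f x ∈ Set.Icc (0:ℝ) 1) (hg1 : ∀ x, g x ∈ Set.Icc (0:ℝ) 1)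
    (u : Fin ℓ → Bool) :
    |wordDensity u f - wordDensity u g| ≤ (ℓ : ℝ) ^ 2 * cutDist f g := by
  classical
  set K := cutDist f g with hKdef
  have hcut : ∀ (c d : ℝ), 0 ≤ c → c ≤ d → d ≤ 1 → |∫ x in c..d, (f x - g x)| ≤ K := by
    intro c d hc hcd hd
    refine le_csSup ⟨1, ?_⟩ ⟨c, d, hc, hcd, hd, rfl⟩
    rintro y ⟨a, b', ha, hab, hb1, rfl⟩
    have habs : ∀ x, |f x - g x| ≤ 1 := fun x => by
      have h1 := hf1 x; have h2 := hg1 x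
      rw [abs_le]; constructor <;> [linarith [h1.1, h2.2]; linarith [h1.2, h2.1]]
    have hint : IntervalIntegrable (fun x => f x - g x) volume a b' :=
      (intervalIntegrable_iff_integrableOn_Ioc_of_le hab).mpr
        (integrableOn_Ioc_of_bdd (hf.sub hg) habs)
    calc |∫ x in a..b', (f x - g x)|
        ≤ ∫ x in a..b', |f x - g x| :=
          intervalIntegral.abs_integral_le_integral_abs hab
      _ ≤ ∫ _x in a..b', (1:ℝ) :=
          intervalIntegral.integral_mono_on hab hint.abs intervalIntegrable_const
            (fun x _ => habs x)
      _ = b' - a := by simp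
      _ ≤ 1 := by linarith
  have hK0 : 0 ≤ K := le_trans (abs_nonneg _) (hcut 0 0 le_rfl le_rfl zero_le_one)
  set Φ : Fin ℓ → ℝ → ℝ := fun i => (Set.Icc (0:ℝ) 1).indicator
    (fun x => if u i then f x else 1 - f x) with hΦ
  set Ψ : Fin ℓ → ℝ → ℝ := fun i => (Set.Icc (0:ℝ) 1).indicator
    (fun x => if u i then g x else 1 - g x) with hΨ
  have hGΦ : GoodFam Φ := by
    intro i
    have hm : Measurable fun x => if u i then f x else 1 - f x := by
      cases hui : u i
      · simp only [hui, Bool.false_eq_true, if_false]; exact measurable_const.sub hf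
      · simpa [hui] using hf
    refine ⟨hm.indicator measurableSet_Icc, fun x => ?_,
      fun x hx => Set.indicator_of_notMem hx _⟩
    show (Set.Icc (0:ℝ) 1).indicator (fun x => if u i then f x else 1 - f x) x
      ∈ Set.Icc (0:ℝ) 1
    by_cases hx : x ∈ Set.Icc (0:ℝ) 1
    · rw [Set.indicator_of_mem hx]
      cases hui : u i
      · have := hf1 x
        simp only [hui, Bool.false_eq_true, if_false]
        exact ⟨by linarith [this.2], by linarith [this.1]⟩
      · simpa [hui] using hf1 x
    · rw [Set.indicator_of_notMem hx]
      exact ⟨le_rfl, zero_le_one⟩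
  have hGΨ : GoodFam Ψ := by
    intro i
    have hm : Measurable fun x => if u i then g x else 1 - g x := by
      cases hui : u i
      · simp only [hui, Bool.false_eq_true, if_false]; exact measurable_const.sub hg
      · simpa [hui] using hg
    refine ⟨hm.indicator measurableSet_Icc, fun x => ?_,
      fun x hx => Set.indicator_of_notMem hx _⟩
    show (Set.Icc (0:ℝ) 1).indicator (fun x => if u i then g x else 1 - g x) x
      ∈ Set.Icc (0:ℝ) 1
    by_cases hx : x ∈ Set.Icc (0:ℝ) 1
    · rw [Set.indicator_of_mem hx]
      cases hui : u i
      · have := hg1 x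
        simp only [hui, Bool.false_eq_true, if_false]
        exact ⟨by linarith [this.2], by linarith [this.1]⟩
      · simpa [hui] using hg1 x
    · rw [Set.indicator_of_notMem hx]
      exact ⟨le_rfl, zero_le_one⟩
  have hredf : wordDensity u f = (Nat.factorial ℓ : ℝ) * itInt Φ 0 := by
    rw [wordDensity]
    congr 1
    calc (∫ x : Fin ℓ → ℝ in
          {x | (∀ i, x i ∈ Set.Icc (0:ℝ) 1) ∧ (∀ i j : Fin ℓ, i < j → x i < x j)},
          ∏ i, (if u i then f (x i) else 1 - f (x i)))
        = ∫ x : Fin ℓ → ℝ in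
          {x | (∀ i, x i ∈ Set.Icc (0:ℝ) 1) ∧ (∀ i j : Fin ℓ, i < j → x i < x j)},
          ∏ i, Φ i (x i) := by
          refine setIntegral_congr_fun (measurableSet_Sset ℓ) fun x hx => ?_
          refine Finset.prod_congr rfl fun i _ => ?_
          show (if u i then f (x i) else 1 - f (x i))
            = (Set.Icc (0:ℝ) 1).indicator (fun x => if u i then f x else 1 - f x) (x i)
          rw [Set.indicator_of_mem (hx.1 i)]
      _ = ∫ x in simplexT ℓ 0, ∏ i, Φ i (x i) := setIntegral_congr_set (Sset_ae ℓ)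
      _ = itInt Φ 0 := simplex_eq_itInt Φ hGΦ 0 le_rfl zero_le_one
  have hredg : wordDensity u g = (Nat.factorial ℓ : ℝ) * itInt Ψ 0 := by
    rw [wordDensity]
    congr 1
    calc (∫ x : Fin ℓ → ℝ in
          {x | (∀ i, x i ∈ Set.Icc (0:ℝ) 1) ∧ (∀ i j : Fin ℓ, i < j → x i < x j)},
          ∏ i, (if u i then g (x i) else 1 - g (x i)))
        = ∫ x : Fin ℓ → ℝ in
          {x | (∀ i, x i ∈ Set.Icc (0:ℝ) 1) ∧ (∀ i j : Fin ℓ, i < j → x i < x j)},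
          ∏ i, Ψ i (x i) := by
          refine setIntegral_congr_fun (measurableSet_Sset ℓ) fun x hx => ?_
          refine Finset.prod_congr rfl fun i _ => ?_
          show (if u i then g (x i) else 1 - g (x i))
            = (Set.Icc (0:ℝ) 1).indicator (fun x => if u i then g x else 1 - g x) (x i)
          rw [Set.indicator_of_mem (hx.1 i)]
      _ = ∫ x in simplexT ℓ 0, ∏ i, Ψ i (x i) := setIntegral_congr_set (Sset_ae ℓ)
      _ = itInt Ψ 0 := simplex_eq_itInt Ψ hGΨ 0 le_rfl zero_le_one
  have hKi : ∀ (i : Fin ℓ) (c d : ℝ), 0 ≤ c → c ≤ d → d ≤ 1 →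
      |∫ t in Set.Ioc c d, (Φ i t - Ψ i t)| ≤ K := by
    intro i c d hc hcd hd
    have hsub : ∀ t ∈ Set.Ioc c d, t ∈ Set.Icc (0:ℝ) 1 := fun t ht =>
      ⟨le_trans hc (le_of_lt ht.1), le_trans ht.2 hd⟩
    cases hui : u i
    · have heq : (∫ t in Set.Ioc c d, (Φ i t - Ψ i t))
          = ∫ t in Set.Ioc c d, -(f t - g t) := by
        refine setIntegral_congr_fun measurableSet_Ioc fun t ht => ?_
        show (Set.Icc (0:ℝ) 1).indicator (fun x => if u i then f x else 1 - f x) t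
            - (Set.Icc (0:ℝ) 1).indicator (fun x => if u i then g x else 1 - g x) t
            = -(f t - g t)
        rw [Set.indicator_of_mem (hsub t ht), Set.indicator_of_mem (hsub t ht), hui]
        simp only [Bool.false_eq_true, if_false]
        ring
      rw [heq, integral_neg, abs_neg, ← intervalIntegral.integral_of_le hcd]
      exact hcut c d hc hcd hd
    · have heq : (∫ t in Set.Ioc c d, (Φ i t - Ψ i t))
          = ∫ t in Set.Ioc c d, (f t - g t) := by
        refine setIntegral_congr_fun measurableSet_Ioc fun t ht => ?_
        show (Set.Icc (0:ℝ) 1).indicator (fun x => if u i then f x else 1 - f x) t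
            - (Set.Icc (0:ℝ) 1).indicator (fun x => if u i then g x else 1 - g x) t
            = f t - g t
        rw [Set.indicator_of_mem (hsub t ht), Set.indicator_of_mem (hsub t ht), hui]
        simp
      rw [heq, ← intervalIntegral.integral_of_le hcd]
      exact hcut c d hc hcd hd
  rw [hredf, hredg, ← mul_sub, abs_mul]
  rw [abs_of_nonneg (by positivity : (0:ℝ) ≤ (Nat.factorial ℓ : ℝ))]
  cases ℓ with
  | zero =>
    simp [itInt_zero]
  | succ m =>
    have hdiff := itInt_diff Φ Ψ hGΦ hGΨ K hKi 0 le_rfl zero_le_one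
    calc (Nat.factorial (m+1) : ℝ) * |itInt Φ 0 - itInt Ψ 0|
        ≤ (Nat.factorial (m+1) : ℝ)
            * ((m+1) * K * (1-0)^m / (Nat.factorial m : ℝ)) := by
          refine mul_le_mul_of_nonneg_left ?_ (by positivity)
          simpa using hdiff
      _ = ((m+1 : ℕ) : ℝ) ^ 2 * K := by
          rw [Nat.factorial_succ]
          have hm : (Nat.factorial m : ℝ) ≠ 0 :=
            Nat.cast_ne_zero.2 (Nat.factorial_ne_zero m)
          push_cast
          field_simp
          ring

theorem stmt4 {ℓ : ℕ} (f g : ℝ → ℝ) (hf : Measurable f) (hg : Measurable g)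
    (hf1 : ∀ x ∈ Set.Icc (0:ℝ) 1, f x ∈ Set.Icc (0:ℝ) 1)
    (hg1 : ∀ x ∈ Set.Icc (0:ℝ) 1, g x ∈ Set.Icc (0:ℝ) 1)
    (u : Fin ℓ → Bool) :
    |wordDensity u f - wordDensity u g| ≤ (ℓ : ℝ) ^ 2 * cutDist f g := by
  set f' : ℝ → ℝ := fun x => max 0 (min (f x) 1) with hf'def
  set g' : ℝ → ℝ := fun x => max 0 (min (g x) 1) with hg'def
  have hf'm : Measurable f' := measurable_const.max (hf.min measurable_const)
  have hg'm : Measurable g' := measurable_const.max (hg.min measurable_const)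
  have hf'1 : ∀ x, f' x ∈ Set.Icc (0:ℝ) 1 := fun x =>
    ⟨le_max_left _ _, max_le zero_le_one (min_le_right _ _)⟩
  have hg'1 : ∀ x, g' x ∈ Set.Icc (0:ℝ) 1 := fun x =>
    ⟨le_max_left _ _, max_le zero_le_one (min_le_right _ _)⟩
  have heqf : ∀ x ∈ Set.Icc (0:ℝ) 1, f x = f' x := fun x hx => by
    have h := hf1 x hx
    show f x = max 0 (min (f x) 1)
    rw [min_eq_left h.2, max_eq_right h.1]
  have heqg : ∀ x ∈ Set.Icc (0:ℝ) 1, g x = g' x := fun x hx => by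
    have h := hg1 x hx
    show g x = max 0 (min (g x) 1)
    rw [min_eq_left h.2, max_eq_right h.1]
  have hwdf : wordDensity u f = wordDensity u f' := by
    rw [wordDensity, wordDensity]
    congr 1
    refine setIntegral_congr_fun (measurableSet_Sset ℓ) fun x hx => ?_
    exact Finset.prod_congr rfl fun i _ => by rw [heqf (x i) (hx.1 i)]
  have hwdg : wordDensity u g = wordDensity u g' := by
    rw [wordDensity, wordDensity]
    congr 1
    refine setIntegral_congr_fun (measurableSet_Sset ℓ) fun x hx => ?_
    exact Finset.prod_congr rfl fun i _ => by rw [heqg (x i) (hx.1 i)]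
  have hcd : cutDist f g = cutDist f' g' := by
    rw [cutDist, cutDist]
    congr 1
    ext y
    have hint : ∀ a b : ℝ, 0 ≤ a → a ≤ b → b ≤ 1 →
        (∫ x in a..b, (f x - g x)) = ∫ x in a..b, (f' x - g' x) := by
      intro a b ha hab hb1
      refine intervalIntegral.integral_congr fun x hx => ?_
      have hx' : x ∈ Set.Icc (0:ℝ) 1 := by
        rw [Set.uIcc_of_le hab] at hx
        exact ⟨le_trans ha hx.1, le_trans hx.2 hb1⟩
      rw [heqf x hx', heqg x hx']
    constructor
    · rintro ⟨a, b, ha, hab, hb1, rfl⟩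
      exact ⟨a, b, ha, hab, hb1, by rw [hint a b ha hab hb1]⟩
    · rintro ⟨a, b, ha, hab, hb1, rfl⟩
      exact ⟨a, b, ha, hab, hb1, by rw [hint a b ha hab hb1]⟩
  rw [hwdf, hwdg, hcd]
  exact key_thm f' g' hf'm hg'm hf'1 hg'1 u
end

section
/- Let k, r ≥ 1, let a = (a₁,…,a_k) ∈ [0,1]^k and let J = 𝟏_{[0,a₁]×⋯×[0,a_k]} : [0,1]^k → ℝ be the indicator of the box. If x ∈ [0,1]^k satisfies |x_i − a_i| > r^{−1/4} for all i ∈ [k], then |B_{r,J}(x) − J(x)| ≤ k r^{−1/2}. -/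
/-- The `k`-variate Bernstein polynomial of `J : [0,1]^k → ℝ` of order `t`. -/
noncomputable def bernsteinPoly (k t : ℕ) (J : (Fin k → ℝ) → ℝ) (x : Fin k → ℝ) : ℝ :=
  ∑ i : Fin k → Fin (t + 1),
    J (fun j => ((i j : ℕ) : ℝ) / (t : ℝ)) *
      ∏ j, ((t.choose (i j) : ℝ) * x j ^ (i j : ℕ) * (1 - x j) ^ (t - (i j : ℕ)))

/-- indicator of a conjunction is a product of indicators -/
lemma myProdIndicator {k : ℕ} (P : Fin k → Prop) [DecidablePred P] [Decidable (∀ j, P j)] :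
    (∏ j, (if P j then (1:ℝ) else 0)) = if ∀ j, P j then (1:ℝ) else 0 := by
  by_cases h : ∀ j, P j
  · simp [h]
  · rw [if_neg h]
    obtain ⟨j, hj⟩ := not_forall.mp h
    exact Finset.prod_eq_zero (Finset.mem_univ j) (by simp [hj])

lemma myAbsProdSubProd {ι : Type*} (s : Finset ι) (f g : ι → ℝ)
    (hf : ∀ i ∈ s, f i ∈ Set.Icc (0:ℝ) 1) (hg : ∀ i ∈ s, g i ∈ Set.Icc (0:ℝ) 1) :
    |∏ i ∈ s, f i - ∏ i ∈ s, g i| ≤ ∑ i ∈ s, |f i - g i| := by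
  induction s using Finset.cons_induction with
  | empty => simp
  | cons a s ha ih =>
    rw [Finset.prod_cons, Finset.prod_cons, Finset.sum_cons]
    have hfa := hf a (Finset.mem_cons_self a s)
    have hga := hg a (Finset.mem_cons_self a s)
    have hf' : ∀ i ∈ s, f i ∈ Set.Icc (0:ℝ) 1 := fun i hi => hf i (Finset.mem_cons_of_mem hi)
    have hg' : ∀ i ∈ s, g i ∈ Set.Icc (0:ℝ) 1 := fun i hi => hg i (Finset.mem_cons_of_mem hi)
    have hpg : ∏ i ∈ s, g i ∈ Set.Icc (0:ℝ) 1 := by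
      constructor
      · exact Finset.prod_nonneg fun i hi => (hg' i hi).1
      · exact Finset.prod_le_one (fun i hi => (hg' i hi).1) (fun i hi => (hg' i hi).2)
    have h1 : |f a| ≤ 1 := abs_le.mpr ⟨by linarith [hfa.1], hfa.2⟩
    have h2 : |∏ i ∈ s, g i| ≤ 1 := abs_le.mpr ⟨by linarith [hpg.1], hpg.2⟩
    have h3 : |f a| * |∏ i ∈ s, f i - ∏ i ∈ s, g i| ≤ 1 * (∑ i ∈ s, |f i - g i|) :=
      mul_le_mul h1 (ih hf' hg') (abs_nonneg _) zero_le_one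
    have h4 : |f a - g a| * |∏ i ∈ s, g i| ≤ |f a - g a| * 1 :=
      mul_le_mul_of_nonneg_left h2 (abs_nonneg _)
    calc |f a * ∏ i ∈ s, f i - g a * ∏ i ∈ s, g i|
        = |f a * (∏ i ∈ s, f i - ∏ i ∈ s, g i) + (f a - g a) * ∏ i ∈ s, g i| := by ring_nf
      _ ≤ |f a * (∏ i ∈ s, f i - ∏ i ∈ s, g i)| + |(f a - g a) * ∏ i ∈ s, g i| := abs_add_le _ _
      _ = |f a| * |∏ i ∈ s, f i - ∏ i ∈ s, g i| + |f a - g a| * |∏ i ∈ s, g i| := by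
          rw [abs_mul, abs_mul]
      _ ≤ |f a - g a| + ∑ i ∈ s, |f i - g i| := by linarith

set_option maxHeartbeats 1000000 in
/-- Chebyshev-type estimate for one coordinate. -/
lemma uni_bound (r : ℕ) (hr : 1 ≤ r) (a : ℝ) (x : ℝ) (hx : x ∈ Set.Icc (0:ℝ) 1)
    (hfar : (r : ℝ) ^ (-(1:ℝ)/4) < |x - a|) :
    |(∑ i : Fin (r+1), (if 0 ≤ ((i:ℕ):ℝ)/(r:ℝ) ∧ ((i:ℕ):ℝ)/(r:ℝ) ≤ a then (1:ℝ) else 0) *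
        ((r.choose i : ℝ) * x ^ (i:ℕ) * (1 - x) ^ (r - (i:ℕ)))) -
      (if 0 ≤ x ∧ x ≤ a then (1:ℝ) else 0)| ≤ (r : ℝ) ^ (-(1:ℝ)/2) := by
  classical
  have hrpos : (0:ℝ) < r := by exact_mod_cast hr
  set w : Fin (r+1) → ℝ := fun i => (r.choose i : ℝ) * x ^ (i:ℕ) * (1 - x) ^ (r - (i:ℕ)) with hw
  have hwb : ∀ i : Fin (r+1), w i = bernstein r i ⟨x, hx⟩ := by
    intro i; simp [hw, bernstein_apply]
  have hwnn : ∀ i : Fin (r+1), 0 ≤ w i := by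
    intro i; rw [hwb]; exact bernstein_nonneg
  have hsum : (∑ i : Fin (r+1), w i) = 1 := by
    simp_rw [hwb]; exact bernstein.probability r ⟨x, hx⟩
  have hvar : (∑ i : Fin (r+1), (x - ((i:ℕ):ℝ)/r)^2 * w i) = x * (1-x)/r := by
    simp_rw [hwb]; exact bernstein.variance (ne_of_gt hrpos |> fun h => by exact_mod_cast h) ⟨x, hx⟩
  have hind : ∀ i : Fin (r+1),
      (if 0 ≤ ((i:ℕ):ℝ)/(r:ℝ) ∧ ((i:ℕ):ℝ)/(r:ℝ) ≤ a then (1:ℝ) else 0)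
        = (if ((i:ℕ):ℝ)/(r:ℝ) ≤ a then (1:ℝ) else 0) := by
    intro i
    congr 1
    rw [eq_iff_iff]
    exact and_iff_right (by positivity)
  simp_rw [hind]
  set q : ℝ := ∑ i : Fin (r+1), (if ((i:ℕ):ℝ)/(r:ℝ) ≤ a then (1:ℝ) else 0) * w i with hq
  set ε : ℝ := (r : ℝ) ^ (-(1:ℝ)/4) with hε
  set s : ℝ := (r : ℝ) ^ (-(1:ℝ)/2) with hs
  have hεpos : 0 < ε := Real.rpow_pos_of_pos hrpos _
  have hspos : 0 < s := Real.rpow_pos_of_pos hrpos _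
  have hε2 : ε * ε = s := by
    rw [hε, hs, ← Real.rpow_add hrpos]; norm_num
  have hs2 : s * s = (r:ℝ)⁻¹ := by
    rw [hs, ← Real.rpow_add hrpos]
    norm_num [Real.rpow_neg_one]
  have hvle : x * (1-x)/r ≤ (r:ℝ)⁻¹ := by
    rw [div_le_iff₀ hrpos, inv_mul_cancel₀ (ne_of_gt hrpos)]
    nlinarith [hx.1, hx.2]
  have hεabs : ε^2 ≤ (x - a)^2 := by
    have := sq_abs (x - a)
    nlinarith [hfar, hεpos]
  have hq0 : 0 ≤ q := by
    apply Finset.sum_nonneg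
    intro i _
    have := hwnn i
    split <;> simp_all
  have hq1 : q ≤ 1 := by
    rw [hq, ← hsum]
    apply Finset.sum_le_sum
    intro i _
    have := hwnn i
    split <;> simp_all
  have hne : x ≠ a := by
    intro h
    rw [h, sub_self, abs_zero] at hfar
    linarith
  rcases hne.lt_or_gt with hlt | hgt
  · -- x < a : indicator is 1, bound 1 - q
    rw [if_pos ⟨hx.1, le_of_lt hlt⟩]
    have key : (1 - q) * s ≤ x * (1-x)/r := by
      rw [← hvar, ← hsum, hq, ← Finset.sum_sub_distrib, Finset.sum_mul]
      apply Finset.sum_le_sum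
      intro i _
      by_cases h : ((i:ℕ):ℝ)/(r:ℝ) ≤ a
      · rw [if_pos h]
        have := hwnn i
        nlinarith [sq_nonneg (x - ((i:ℕ):ℝ)/r)]
      · rw [if_neg h]
        push_neg at h
        have h1 : a - x ≤ ((i:ℕ):ℝ)/r - x := by linarith
        have h2 : (a - x)^2 ≤ (x - ((i:ℕ):ℝ)/r)^2 := by nlinarith
        have h3 : ε^2 ≤ (a - x)^2 := by nlinarith [hεabs]
        have := hwnn i
        nlinarith [hε2]
    have hss : (1 - q) * s ≤ s * s := by
      calc (1-q)*s ≤ x*(1-x)/r := key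
        _ ≤ (r:ℝ)⁻¹ := hvle
        _ = s * s := hs2.symm
    have h1q : 1 - q ≤ s := by
      have := (mul_le_mul_iff_of_pos_right hspos).mp hss
      linarith
    rw [abs_le]
    constructor <;> nlinarith [hq1, hq0, hspos.le]
  · -- a < x : indicator is 0, bound q
    rw [if_neg (by push_neg; intro _; linarith)]
    have key : q * s ≤ x * (1-x)/r := by
      rw [← hvar, hq, Finset.sum_mul]
      apply Finset.sum_le_sum
      intro i _
      by_cases h : ((i:ℕ):ℝ)/(r:ℝ) ≤ a
      · rw [if_pos h]
        have h1 : x - a ≤ x - ((i:ℕ):ℝ)/r := by linarith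
        have h2 : (x - a)^2 ≤ (x - ((i:ℕ):ℝ)/r)^2 := by nlinarith
        have := hwnn i
        nlinarith [hε2, hεabs]
      · rw [if_neg h]
        have := hwnn i
        nlinarith [sq_nonneg (x - ((i:ℕ):ℝ)/r)]
    have hss : q * s ≤ s * s := by
      calc q*s ≤ x*(1-x)/r := key
        _ ≤ (r:ℝ)⁻¹ := hvle
        _ = s * s := hs2.symm
    have hqs : q ≤ s := (mul_le_mul_iff_of_pos_right hspos).mp hss
    rw [sub_zero, abs_of_nonneg hq0]
    exact hqs

set_option maxHeartbeats 1000000 in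
theorem stmt6 (k r : ℕ) (hk : 1 ≤ k) (hr : 1 ≤ r) (a x : Fin k → ℝ)
    (ha : ∀ i, a i ∈ Set.Icc (0:ℝ) 1) (hx : ∀ i, x i ∈ Set.Icc (0:ℝ) 1)
    (hfar : ∀ i, (r : ℝ) ^ (-(1:ℝ)/4) < |x i - a i|) :
    |bernsteinPoly k r (fun y => if ∀ i, 0 ≤ y i ∧ y i ≤ a i then (1:ℝ) else 0) x -
        (if ∀ i, 0 ≤ x i ∧ x i ≤ a i then (1:ℝ) else 0)|
      ≤ (k : ℝ) * (r : ℝ) ^ (-(1:ℝ)/2) := by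
  classical
  have hrpos : (0:ℝ) < r := by exact_mod_cast hr
  set w : Fin k → Fin (r+1) → ℝ :=
    fun j i => (r.choose i : ℝ) * x j ^ (i:ℕ) * (1 - x j) ^ (r - (i:ℕ)) with hw
  set q : Fin k → ℝ := fun j => ∑ i : Fin (r+1),
    (if 0 ≤ ((i:ℕ):ℝ)/(r:ℝ) ∧ ((i:ℕ):ℝ)/(r:ℝ) ≤ a j then (1:ℝ) else 0) * w j i with hq
  set e : Fin k → ℝ := fun j => if 0 ≤ x j ∧ x j ≤ a j then (1:ℝ) else 0 with he
  have hB : bernsteinPoly k r (fun y => if ∀ i, 0 ≤ y i ∧ y i ≤ a i then (1:ℝ) else 0) x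
      = ∏ j, q j := by
    rw [bernsteinPoly]
    have step1 : ∀ i : Fin k → Fin (r+1),
        (if ∀ j, 0 ≤ ((i j : ℕ):ℝ)/(r:ℝ) ∧ ((i j : ℕ):ℝ)/(r:ℝ) ≤ a j then (1:ℝ) else 0) *
          ∏ j, w j (i j)
        = ∏ j, ((if 0 ≤ ((i j : ℕ):ℝ)/(r:ℝ) ∧ ((i j : ℕ):ℝ)/(r:ℝ) ≤ a j then (1:ℝ) else 0)
            * w j (i j)) := by
      intro i
      calc (if ∀ j, 0 ≤ ((i j : ℕ):ℝ)/(r:ℝ) ∧ ((i j : ℕ):ℝ)/(r:ℝ) ≤ a j then (1:ℝ) else 0) *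
            ∏ j, w j (i j)
          = (∏ j, (if 0 ≤ ((i j : ℕ):ℝ)/(r:ℝ) ∧ ((i j : ℕ):ℝ)/(r:ℝ) ≤ a j then (1:ℝ) else 0)) *
            ∏ j, w j (i j) := by rw [myProdIndicator]
        _ = _ := Finset.prod_mul_distrib.symm
    have step2 := Finset.prod_univ_sum (fun _ : Fin k => (Finset.univ : Finset (Fin (r+1))))
      (fun j i => (if 0 ≤ ((i:ℕ):ℝ)/(r:ℝ) ∧ ((i:ℕ):ℝ)/(r:ℝ) ≤ a j then (1:ℝ) else 0) * w j i)
    rw [Fintype.piFinset_univ] at step2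
    calc (∑ i : Fin k → Fin (r+1),
          (if ∀ j, 0 ≤ ((i j : ℕ):ℝ)/(r:ℝ) ∧ ((i j : ℕ):ℝ)/(r:ℝ) ≤ a j then (1:ℝ) else 0) *
            ∏ j, w j (i j))
        = ∑ i : Fin k → Fin (r+1), ∏ j,
            ((if 0 ≤ ((i j : ℕ):ℝ)/(r:ℝ) ∧ ((i j : ℕ):ℝ)/(r:ℝ) ≤ a j then (1:ℝ) else 0)
              * w j (i j)) := Finset.sum_congr rfl (fun i _ => step1 i)
      _ = ∏ j, q j := step2.symm
  have hE : (if ∀ i, 0 ≤ x i ∧ x i ≤ a i then (1:ℝ) else 0) = ∏ j, e j := by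
    by_cases h : ∀ i, 0 ≤ x i ∧ x i ≤ a i
    · rw [if_pos h, Finset.prod_eq_one]
      intro j _
      rw [he]; exact if_pos (h j)
    · rw [if_neg h]
      obtain ⟨j, hj⟩ := not_forall.mp h
      exact (Finset.prod_eq_zero (Finset.mem_univ j) (by rw [he]; exact if_neg hj)).symm
  rw [hB, hE]
  have hqmem : ∀ j, q j ∈ Set.Icc (0:ℝ) 1 := by
    intro j
    have hwb : ∀ i : Fin (r+1), w j i = bernstein r i ⟨x j, hx j⟩ := by
      intro i; simp [hw, bernstein_apply]
    have hwnn : ∀ i : Fin (r+1), 0 ≤ w j i := by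
      intro i; rw [hwb]; exact bernstein_nonneg
    have hsum : (∑ i : Fin (r+1), w j i) = 1 := by
      simp_rw [hwb]; exact bernstein.probability r ⟨x j, hx j⟩
    constructor
    · apply Finset.sum_nonneg; intro i _; have := hwnn i; split <;> simp_all
    · rw [hq]; dsimp only; rw [← hsum]
      apply Finset.sum_le_sum; intro i _; have := hwnn i; split <;> simp_all
  have hemem : ∀ j, e j ∈ Set.Icc (0:ℝ) 1 := by
    intro j; rw [he]; dsimp only; split <;> norm_num
  calc |∏ j, q j - ∏ j, e j| ≤ ∑ j, |q j - e j| :=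
        myAbsProdSubProd Finset.univ q e (fun j _ => hqmem j) (fun j _ => hemem j)
    _ ≤ ∑ _j : Fin k, (r : ℝ) ^ (-(1:ℝ)/2) := by
        apply Finset.sum_le_sum
        intro j _
        exact uni_bound r hr (a j) (x j) (hx j) (hfar j)
    _ = (k : ℝ) * (r : ℝ) ^ (-(1:ℝ)/2) := by
        rw [Finset.sum_const, Finset.card_univ, Fintype.card_fin, nsmul_eq_mul]
end

section
/- If a sequence (f_n) of Lebesgue measurable functions f_n : [0,1] → [0,1] satisfies t(u, f_n) → t(u, f) for every finite binary word u, for some measurable f : [0,1] → [0,1], then d_□(f_n, f) → 0. -/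
open MeasureTheory

namespace Stmt8Aux

open MeasureTheory Filter Set ENNReal

/-- Open-below sorted box. -/
def A (m : ℕ) (t : ℝ) : Set (Fin m → ℝ) :=
  {y | (∀ i, y i ∈ Set.Ioc t 1) ∧ ∀ i j : Fin m, i < j → y i < y j}

def S (ℓ : ℕ) : Set (Fin ℓ → ℝ) :=
  {x | (∀ i, x i ∈ Set.Icc (0:ℝ) 1) ∧ (∀ i j : Fin ℓ, i < j → x i < x j)}

lemma measurableSet_sorted (m : ℕ) :
    MeasurableSet {y : Fin m → ℝ | ∀ i j : Fin m, i < j → y i < y j} := by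
  have : {y : Fin m → ℝ | ∀ i j : Fin m, i < j → y i < y j}
      = ⋂ i, ⋂ j, {y : Fin m → ℝ | i < j → y i < y j} := by
    ext y; simp [Set.mem_iInter]
  rw [this]
  refine MeasurableSet.iInter fun i => MeasurableSet.iInter fun j => ?_
  by_cases hij : i < j
  · simp only [hij, forall_true_left]
    exact measurableSet_lt (measurable_pi_apply i) (measurable_pi_apply j)
  · simp only [hij, false_implies]
    exact MeasurableSet.univ.congr (by ext y; simp)

lemma measurableSet_A (m : ℕ) (t : ℝ) : MeasurableSet (A m t) := by
  have : A m t = (⋂ i, {y : Fin m → ℝ | y i ∈ Set.Ioc t 1}) ∩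
      {y : Fin m → ℝ | ∀ i j : Fin m, i < j → y i < y j} := by
    ext y; simp [A, Set.mem_iInter]
  rw [this]
  exact (MeasurableSet.iInter fun i =>
    (measurable_pi_apply i) measurableSet_Ioc).inter (measurableSet_sorted m)

lemma measurableSet_S (ℓ : ℕ) : MeasurableSet (S ℓ) := by
  have : S ℓ = (⋂ i, {y : Fin ℓ → ℝ | y i ∈ Set.Icc (0:ℝ) 1}) ∩
      {y : Fin ℓ → ℝ | ∀ i j : Fin ℓ, i < j → y i < y j} := by
    ext y; simp [S, Set.mem_iInter]
  rw [this]
  exact (MeasurableSet.iInter fun i =>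
    (measurable_pi_apply i) measurableSet_Icc).inter (measurableSet_sorted ℓ)

lemma mem_A_succ_iff (m : ℕ) (t : ℝ) (x : Fin (m+1) → ℝ) :
    x ∈ A (m+1) t ↔ (x 0 ∈ Set.Ioc t 1 ∧ (fun j => x (Fin.succ j)) ∈ A m (x 0)) := by
  constructor
  · rintro ⟨h1, h2⟩
    refine ⟨h1 0, fun j => ⟨h2 0 j.succ (Fin.succ_pos j), (h1 j.succ).2⟩,
      fun i j hij => h2 i.succ j.succ (Fin.succ_lt_succ_iff.2 hij)⟩
  · rintro ⟨hp, hy1, hy2⟩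
    constructor
    · intro i
      refine Fin.cases hp (fun j => ⟨lt_trans hp.1 (hy1 j).1, (hy1 j).2⟩) i
    · intro i j hij
      refine Fin.cases (fun hij => ?_) (fun j' hij => ?_) j hij
      · exact absurd hij (Fin.not_lt_zero _)
      · refine Fin.cases (fun hij => (hy1 j').1) (fun i' hij => hy2 i' j'
          (Fin.succ_lt_succ_iff.1 hij)) i hij

lemma measurableSet_B (m : ℕ) (t : ℝ) :
    MeasurableSet {z : ℝ × (Fin m → ℝ) | z.1 ∈ Set.Ioc t 1 ∧ z.2 ∈ A m z.1} := by
  have : {z : ℝ × (Fin m → ℝ) | z.1 ∈ Set.Ioc t 1 ∧ z.2 ∈ A m z.1}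
      = (Prod.fst ⁻¹' Set.Ioc t 1) ∩
        ((⋂ i, {z : ℝ × (Fin m → ℝ) | z.1 < z.2 i ∧ z.2 i ≤ 1}) ∩
          (⋂ i, ⋂ j, {z : ℝ × (Fin m → ℝ) | i < j → z.2 i < z.2 j})) := by
    ext z
    simp only [A, Set.mem_setOf_eq, Set.mem_inter_iff, Set.mem_preimage, Set.mem_iInter,
      Set.mem_Ioc]
  rw [this]
  refine (measurable_fst measurableSet_Ioc).inter (MeasurableSet.inter ?_ ?_)
  · refine MeasurableSet.iInter fun i => MeasurableSet.inter ?_ ?_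
    · exact measurableSet_lt measurable_fst (measurable_snd.eval)
    · exact measurableSet_le (measurable_snd.eval) measurable_const
  · refine MeasurableSet.iInter fun i => MeasurableSet.iInter fun j => ?_
    by_cases hij : i < j
    · simp only [hij, forall_true_left]
      exact measurableSet_lt (measurable_snd.eval) (measurable_snd.eval)
    · simp only [hij, false_implies]
      exact MeasurableSet.univ.congr (by ext z; simp)

lemma lintegral_A_succ (m : ℕ) (t : ℝ) (h : ℝ → ℝ≥0∞) (hh : Measurable h) :
    ∫⁻ x in A (m+1) t, h (x 0) = ∫⁻ s in Set.Ioc t 1, h s * volume (A m s) := by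
  classical
  set e := MeasurableEquiv.piFinSuccAbove (fun _ : Fin (m+1) => ℝ) 0 with he
  have hp : MeasurePreserving e volume volume :=
    volume_preserving_piFinSuccAbove (fun _ : Fin (m+1) => ℝ) 0
  set B : Set (ℝ × (Fin m → ℝ)) := {z | z.1 ∈ Set.Ioc t 1 ∧ z.2 ∈ A m z.1} with hB
  set G : ℝ × (Fin m → ℝ) → ℝ≥0∞ := B.indicator (fun z => h z.1) with hG
  have hGm : Measurable G := (hh.comp measurable_fst).indicator (measurableSet_B m t)
  have key : ∀ x : Fin (m+1) → ℝ, G (e x) = (A (m+1) t).indicator (fun x => h (x 0)) x := by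
    intro x
    have hex : e x = (x 0, fun j => x (Fin.succ j)) := by
      simp only [he, MeasurableEquiv.piFinSuccAbove_apply, Fin.succAbove_zero]
      rfl
    rw [hex]
    by_cases hx : x ∈ A (m+1) t
    · have hx' := (mem_A_succ_iff m t x).1 hx
      rw [Set.indicator_of_mem hx]
      exact Set.indicator_of_mem (show ((x 0, fun j => x (Fin.succ j)) : ℝ × (Fin m → ℝ)) ∈ B from hx') _
    · have hx' : ((x 0, fun j => x (Fin.succ j)) : ℝ × (Fin m → ℝ)) ∉ B := by
        intro hc; exact hx ((mem_A_succ_iff m t x).2 hc)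
      rw [Set.indicator_of_notMem hx]
      exact Set.indicator_of_notMem hx' _

  calc ∫⁻ x in A (m+1) t, h (x 0)
      = ∫⁻ x, (A (m+1) t).indicator (fun x => h (x 0)) x :=
        (lintegral_indicator (measurableSet_A (m+1) t) _).symm
    _ = ∫⁻ x, G (e x) := by simp_rw [key]
    _ = ∫⁻ z, G z := hp.lintegral_comp hGm
    _ = ∫⁻ z, G z ∂((volume : Measure ℝ).prod volume) := by rw [← Measure.volume_eq_prod]
    _ = ∫⁻ p, ∫⁻ y, G (p, y) := lintegral_prod G hGm.aemeasurable
    _ = ∫⁻ p, (Set.Ioc t 1).indicator (fun p => h p * volume (A m p)) p := by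
        refine lintegral_congr fun p => ?_
        by_cases hp' : p ∈ Set.Ioc t 1
        · have : (fun y => G (p, y)) = (A m p).indicator (fun _ => h p) := by
            funext y
            simp only [hG, Set.indicator_apply, hB, Set.mem_setOf_eq, hp', true_and]
          rw [this, lintegral_indicator (measurableSet_A m p) _, setLIntegral_const,
            Set.indicator_of_mem hp']
        · have : (fun y => G (p, y)) = fun _ => 0 := by
            funext y
            simp only [hG, Set.indicator_apply, hB, Set.mem_setOf_eq, hp', false_and, if_false]
          rw [this, lintegral_zero, Set.indicator_of_notMem hp']
    _ = ∫⁻ s in Set.Ioc t 1, h s * volume (A m s) :=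
        lintegral_indicator measurableSet_Ioc _

lemma integral_one_sub_pow (m : ℕ) (t : ℝ) (ht : t ≤ 1) :
    ∫ s in Set.Ioc t 1, ((1 - s) ^ m / m.factorial) =
      (1 - t) ^ (m+1) / (m+1).factorial := by
  rw [← intervalIntegral.integral_of_le ht]
  have : (∫ s in t..1, ((1 - s) ^ m / m.factorial)) =
      (∫ s in t..1, (1 - s) ^ m) / m.factorial := by
    rw [intervalIntegral.integral_div]
  rw [this]
  have h2 : (∫ s in t..1, (1 - s) ^ m) = ∫ s in (1 - (1:ℝ))..(1 - t), s ^ m :=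
    intervalIntegral.integral_comp_sub_left (fun s => s ^ m) 1
  rw [h2]
  simp only [sub_self]
  rw [integral_pow]
  have h0 : (0:ℝ)^(m+1) = 0 := zero_pow m.succ_ne_zero
  rw [h0, sub_zero, div_div, Nat.factorial_succ]
  push_cast
  ring_nf

lemma volume_A (m : ℕ) (t : ℝ) (ht : t ≤ 1) :
    volume (A m t) = ENNReal.ofReal ((1 - t) ^ m / m.factorial) := by
  induction m generalizing t with
  | zero =>
    have : A 0 t = Set.univ := by
      ext y
      simp [A, Fin.elim0, (fun i => i.elim0 : ∀ i : Fin 0, False)]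
    rw [this]
    simp [volume_pi, Measure.pi_univ]
  | succ m ih =>
    have h1 : volume (A (m+1) t) = ∫⁻ x in A (m+1) t, (1 : ℝ≥0∞) := by
      rw [setLIntegral_one]
    rw [h1, lintegral_A_succ m t (fun _ => 1) measurable_const]
    have h2 : ∫⁻ s in Set.Ioc t 1, (1 : ℝ≥0∞) * volume (A m s) =
        ∫⁻ s in Set.Ioc t 1, ENNReal.ofReal ((1 - s) ^ m / m.factorial) := by
      refine setLIntegral_congr_fun measurableSet_Ioc ?_
      intro s hs; dsimp only
      rw [one_mul, ih s hs.2]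
    rw [h2]
    rw [← ofReal_integral_eq_lintegral_ofReal]
    · rw [integral_one_sub_pow m t ht]
    · exact (Continuous.integrableOn_Ioc (by continuity))
    · refine (ae_restrict_iff' measurableSet_Ioc).2 (Filter.Eventually.of_forall ?_)
      intro s hs
      exact div_nonneg (pow_nonneg (by linarith [hs.2] : (0:ℝ) ≤ 1 - s) m) (by positivity)

lemma S_ae_eq_A (m : ℕ) : (S (m+1) : Set (Fin (m+1) → ℝ)) =ᵐ[volume] A (m+1) 0 := by
  rw [ae_eq_set]
  constructor
  · refine measure_mono_null (t := {y : Fin (m+1) → ℝ | y 0 = 0}) (fun x hx => ?_) ?_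
    · obtain ⟨⟨h1, h2⟩, hnA⟩ := hx
      by_contra h0
      refine hnA ⟨fun i => ?_, h2⟩
      rcases eq_or_ne i 0 with rfl | hi
      · exact ⟨lt_of_le_of_ne (h1 0).1 (Ne.symm h0), (h1 0).2⟩
      · have : (0 : Fin (m+1)) < i := Fin.pos_of_ne_zero hi
        exact ⟨lt_of_le_of_lt (h1 0).1 (h2 0 i this), (h1 i).2⟩
    · rw [volume_pi]
      exact Measure.pi_hyperplane _ 0 0
  · have : A (m+1) 0 \ S (m+1) = ∅ := by
      rw [Set.diff_eq_empty]
      rintro x ⟨h1, h2⟩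
      exact ⟨fun i => ⟨le_of_lt (h1 i).1, (h1 i).2⟩, h2⟩
    simp [this]

lemma volume_S_le (ℓ : ℕ) : volume (S ℓ) ≤ 1 := by
  have hsub : S ℓ ⊆ Set.pi Set.univ (fun _ : Fin ℓ => Set.Icc (0:ℝ) 1) := by
    rintro x ⟨h1, _⟩ i _
    exact h1 i
  refine le_trans (measure_mono hsub) ?_
  rw [volume_pi_pi]
  simp [Real.volume_Icc]

lemma setIntegral_S_eval0 (m : ℕ) (F : ℝ → ℝ) (hF : Measurable F)
    (hF1 : ∀ x ∈ Set.Icc (0:ℝ) 1, F x ∈ Set.Icc (0:ℝ) 1) :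
    ∫ x in S (m+1), F (x 0) = ∫ s in Set.Ioc (0:ℝ) 1, F s * ((1 - s) ^ m / m.factorial) := by
  have hFm : Measurable fun x : Fin (m+1) → ℝ => F (x 0) := hF.comp (measurable_pi_apply 0)
  have h1 : ∫ x in S (m+1), F (x 0) = ∫ x in A (m+1) 0, F (x 0) :=
    setIntegral_congr_set (S_ae_eq_A m)
  have hnn : 0 ≤ᵐ[volume.restrict (A (m+1) 0)] fun x : Fin (m+1) → ℝ => F (x 0) := by
    refine (ae_restrict_iff' (measurableSet_A (m+1) 0)).2 (Filter.Eventually.of_forall ?_)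
    rintro x ⟨hx1, _⟩
    exact (hF1 (x 0) ⟨le_of_lt (hx1 0).1, (hx1 0).2⟩).1
  have h2 : ∫ x in A (m+1) 0, F (x 0)
      = (∫⁻ x in A (m+1) 0, ENNReal.ofReal (F (x 0))).toReal := by
    rw [integral_eq_lintegral_of_nonneg_ae hnn (hFm.aestronglyMeasurable.restrict)]
  have h3 : ∫⁻ x in A (m+1) 0, ENNReal.ofReal (F (x 0))
      = ∫⁻ s in Set.Ioc (0:ℝ) 1, ENNReal.ofReal (F s * ((1 - s) ^ m / m.factorial)) := by
    rw [lintegral_A_succ m 0 _ hF.ennreal_ofReal]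
    refine setLIntegral_congr_fun measurableSet_Ioc ?_
    intro s hs; dsimp only
    rw [volume_A m s hs.2, ← ENNReal.ofReal_mul (hF1 s ⟨le_of_lt hs.1, hs.2⟩).1]
  have hInt : IntegrableOn (fun s => F s * ((1 - s) ^ m / m.factorial)) (Set.Ioc (0:ℝ) 1) := by
    refine Measure.integrableOn_of_bounded (by simp [Real.volume_Ioc]) ?_ (M := 1) ?_
    · exact (hF.mul ((measurable_const.sub measurable_id).pow_const m |>.div_const _)).aestronglyMeasurable
    · refine (ae_restrict_iff' measurableSet_Ioc).2 (Filter.Eventually.of_forall ?_)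
      intro s hs
      have hF0 := hF1 s ⟨le_of_lt hs.1, hs.2⟩
      have h1s : (0:ℝ) ≤ 1 - s := by linarith [hs.2]
      have h1s' : (1 - s : ℝ) ≤ 1 := by linarith [le_of_lt hs.1]
      have hfac : (1:ℝ) ≤ m.factorial := by exact_mod_cast Nat.one_le_iff_ne_zero.2 m.factorial_ne_zero
      rw [Real.norm_eq_abs, abs_mul, abs_of_nonneg hF0.1, abs_of_nonneg (by positivity)]
      calc F s * ((1-s)^m / m.factorial) ≤ 1 * ((1-s)^m / m.factorial) := by
            refine mul_le_mul_of_nonneg_right hF0.2 (by positivity)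
        _ ≤ 1 * (1 / 1) := by
            refine mul_le_mul_of_nonneg_left ?_ zero_le_one
            refine div_le_div₀ (by norm_num) (pow_le_one₀ h1s h1s') (by norm_num) hfac
        _ = 1 := by norm_num
  have h4 : ∫⁻ s in Set.Ioc (0:ℝ) 1, ENNReal.ofReal (F s * ((1 - s) ^ m / m.factorial))
      = ENNReal.ofReal (∫ s in Set.Ioc (0:ℝ) 1, F s * ((1 - s) ^ m / m.factorial)) := by
    rw [ofReal_integral_eq_lintegral_ofReal hInt]
    refine (ae_restrict_iff' measurableSet_Ioc).2 (Filter.Eventually.of_forall ?_)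
    intro s hs
    have hF0 := hF1 s ⟨le_of_lt hs.1, hs.2⟩
    have h1s : (0:ℝ) ≤ 1 - s := by linarith [hs.2]
    exact mul_nonneg hF0.1 (by positivity)
  have h5 : 0 ≤ ∫ s in Set.Ioc (0:ℝ) 1, F s * ((1 - s) ^ m / m.factorial) := by
    refine setIntegral_nonneg measurableSet_Ioc ?_
    intro s hs
    have hF0 := hF1 s ⟨le_of_lt hs.1, hs.2⟩
    have h1s : (0:ℝ) ≤ 1 - s := by linarith [hs.2]
    exact mul_nonneg hF0.1 (by positivity)
  rw [h1, h2, h3, h4, ENNReal.toReal_ofReal h5]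

lemma alg (m : ℕ) (v : Fin (m+1) → ℝ) :
    ∑ u ∈ Finset.univ.filter (fun u : Fin (m+1) → Bool => u 0 = true),
      ∏ i, (if u i then v i else 1 - v i) = v 0 := by
  classical
  set w : Fin (m+1) → Bool → ℝ :=
    fun i b => if b then v i else if i = 0 then 0 else 1 - v i with hw
  have h1 : ∏ i, (∑ b : Bool, w i b) = ∑ u : Fin (m+1) → Bool, ∏ i, w i (u i) := by
    rw [Finset.prod_univ_sum]
    rw [Fintype.piFinset_univ]
  have h2 : ∏ i, (∑ b : Bool, w i b) = v 0 := by
    have hterm : ∀ i : Fin (m+1), (∑ b : Bool, w i b) = if i = 0 then v i else 1 := by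
      intro i
      rw [Fintype.sum_bool]
      by_cases hi : i = 0 <;> simp [hw, hi] <;> ring
    rw [Finset.prod_congr rfl (fun i _ => hterm i)]
    rw [Finset.prod_ite_eq' Finset.univ (0 : Fin (m+1)) (fun i => v i)]
    simp
  have h3 : ∑ u : Fin (m+1) → Bool, ∏ i, w i (u i)
      = ∑ u ∈ Finset.univ.filter (fun u : Fin (m+1) → Bool => u 0 = true),
          ∏ i, (if u i then v i else 1 - v i) := by
    rw [← Finset.sum_filter_add_sum_filter_not Finset.univ
      (fun u : Fin (m+1) → Bool => u 0 = true)]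
    have hz : ∑ u ∈ Finset.univ.filter
        (fun u : Fin (m+1) → Bool => ¬ u 0 = true), ∏ i, w i (u i) = 0 := by
      refine Finset.sum_eq_zero fun u hu => ?_
      rw [Finset.mem_filter] at hu
      refine Finset.prod_eq_zero (Finset.mem_univ (0 : Fin (m+1))) ?_
      have : u 0 = false := by simpa using hu.2
      simp [hw, this]
    have he : ∀ u ∈ Finset.univ.filter (fun u : Fin (m+1) → Bool => u 0 = true),
        ∏ i, w i (u i) = ∏ i, (if u i then v i else 1 - v i) := by
      intro u hu
      rw [Finset.mem_filter] at hu
      refine Finset.prod_congr rfl fun i _ => ?_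
      cases hui : u i with
      | true => simp [hw, hui]
      | false =>
        have hi : ¬ i = 0 := fun hi => by rw [hi] at hui; rw [hu.2] at hui; exact Bool.noConfusion hui
        simp [hw, hui, hi]
    rw [Finset.sum_congr rfl he, hz, add_zero]
  rw [← h3, ← h1, h2]

lemma integrableOn_S_prod (ℓ : ℕ) (u : Fin ℓ → Bool) (F : ℝ → ℝ) (hF : Measurable F)
    (hF1 : ∀ x ∈ Set.Icc (0:ℝ) 1, F x ∈ Set.Icc (0:ℝ) 1) :
    IntegrableOn (fun x : Fin ℓ → ℝ => ∏ i, (if u i then F (x i) else 1 - F (x i))) (S ℓ) := by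
  refine Measure.integrableOn_of_bounded (lt_of_le_of_lt (volume_S_le ℓ) one_lt_top).ne ?_ (M := 1) ?_
  · refine Measurable.aestronglyMeasurable ?_
    refine Finset.measurable_prod _ fun i _ => ?_
    cases u i with
    | true => simpa [Function.comp_def] using hF.comp (measurable_pi_apply i)
    | false => exact measurable_const.sub (hF.comp (measurable_pi_apply i))
  · refine (ae_restrict_iff' (measurableSet_S ℓ)).2 (Filter.Eventually.of_forall ?_)
    rintro x ⟨h1, _⟩
    rw [Real.norm_eq_abs]
    have hmem : ∀ i, (if u i then F (x i) else 1 - F (x i)) ∈ Set.Icc (0:ℝ) 1 := by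
      intro i
      have := hF1 (x i) (h1 i)
      cases u i <;> simp <;> constructor <;> linarith [this.1, this.2]
    rw [abs_of_nonneg (Finset.prod_nonneg fun i _ => (hmem i).1)]
    exact Finset.prod_le_one (fun i _ => (hmem i).1) (fun i _ => (hmem i).2)

lemma sum_wordDensity (m : ℕ) (F : ℝ → ℝ) (hF : Measurable F)
    (hF1 : ∀ x ∈ Set.Icc (0:ℝ) 1, F x ∈ Set.Icc (0:ℝ) 1) :
    ∑ u ∈ Finset.univ.filter (fun u : Fin (m+1) → Bool => u 0 = true), wordDensity u F
      = ((m+1).factorial : ℝ) * ∫ x in S (m+1), F (x 0) := by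
  classical
  unfold wordDensity
  rw [← Finset.mul_sum]
  congr 1
  simp only [show {x : Fin (m+1) → ℝ | (∀ i, x i ∈ Set.Icc (0:ℝ) 1) ∧
    (∀ i j : Fin (m+1), i < j → x i < x j)} = S (m+1) from rfl]
  rw [← integral_finset_sum _ (fun u _ => integrableOn_S_prod (m+1) u F hF hF1)]
  refine setIntegral_congr_fun (measurableSet_S (m+1)) fun x _ => ?_
  exact alg m (fun i => F (x i))

section main
variable (f : ℕ → ℝ → ℝ) (g : ℝ → ℝ)
variable (hf : ∀ n, Measurable (f n)) (hg : Measurable g)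
variable (hf1 : ∀ n, ∀ x ∈ Set.Icc (0:ℝ) 1, f n x ∈ Set.Icc (0:ℝ) 1)
variable (hg1 : ∀ x ∈ Set.Icc (0:ℝ) 1, g x ∈ Set.Icc (0:ℝ) 1)
variable (h : ∀ (ℓ : ℕ) (u : Fin ℓ → Bool),
      Filter.Tendsto (fun n => wordDensity u (f n)) Filter.atTop (nhds (wordDensity u g)))

include hf hg hf1 hg1 h

omit hf hg hf1 hg1 h in
lemma integrableOn_Ioc_of_bounded {F : ℝ → ℝ} (hF : Measurable F) {M : ℝ}
    (hM : ∀ x ∈ Set.Ioc (0:ℝ) 1, |F x| ≤ M) : IntegrableOn F (Set.Ioc (0:ℝ) 1) := by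
  refine Measure.integrableOn_of_bounded (by simp [Real.volume_Ioc]) hF.aestronglyMeasurable
    (M := M) ?_
  refine (ae_restrict_iff' measurableSet_Ioc).2 (Filter.Eventually.of_forall ?_)
  intro s hs
  simpa [Real.norm_eq_abs] using hM s hs

lemma tendsto_moment (m : ℕ) :
    Tendsto (fun n => ∫ s in Set.Ioc (0:ℝ) 1, f n s * (1 - s) ^ m) atTop
      (nhds (∫ s in Set.Ioc (0:ℝ) 1, g s * (1 - s) ^ m)) := by
  classical
  have hfacne : (((m+1).factorial : ℝ)) ≠ 0 := by exact_mod_cast (m+1).factorial_ne_zero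
  have hmfacne : ((m.factorial : ℝ)) ≠ 0 := by exact_mod_cast m.factorial_ne_zero
  have hsum : Tendsto (fun n => ∑ u ∈ Finset.univ.filter
        (fun u : Fin (m+1) → Bool => u 0 = true), wordDensity u (f n)) atTop
      (nhds (∑ u ∈ Finset.univ.filter (fun u : Fin (m+1) → Bool => u 0 = true),
        wordDensity u g)) :=
    tendsto_finset_sum _ (fun u _ => h (m+1) u)
  rw [sum_wordDensity m g hg hg1] at hsum
  have hsum2 : Tendsto (fun n => ((m+1).factorial : ℝ) * ∫ x in S (m+1), f n (x 0)) atTop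
      (nhds (((m+1).factorial : ℝ) * ∫ x in S (m+1), g (x 0))) :=
    hsum.congr fun n => sum_wordDensity m (f n) (hf n) (hf1 n)
  have hS : Tendsto (fun n => ∫ x in S (m+1), f n (x 0)) atTop
      (nhds (∫ x in S (m+1), g (x 0))) := by
    have := hsum2.const_mul (((m+1).factorial : ℝ))⁻¹
    simpa [← mul_assoc, inv_mul_cancel₀ hfacne] using this
  have heq : ∀ (F : ℝ → ℝ), Measurable F → (∀ x ∈ Set.Icc (0:ℝ) 1, F x ∈ Set.Icc (0:ℝ) 1) →
      ∫ x in S (m+1), F (x 0) = (∫ s in Set.Ioc (0:ℝ) 1, F s * (1 - s) ^ m) / m.factorial := by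
    intro F hF hF1
    rw [setIntegral_S_eval0 m F hF hF1]
    rw [← integral_div]
    congr 1
    funext s
    rw [mul_div_assoc]
  rw [heq g hg hg1] at hS
  have hS2 : Tendsto (fun n => (∫ s in Set.Ioc (0:ℝ) 1, f n s * (1 - s) ^ m) / m.factorial)
      atTop (nhds ((∫ s in Set.Ioc (0:ℝ) 1, g s * (1 - s) ^ m) / m.factorial)) :=
    hS.congr fun n => heq (f n) (hf n) (hf1 n)
  have := hS2.const_mul ((m.factorial : ℝ))
  simpa [mul_div_cancel₀, hmfacne, mul_comm] using this

end main

section main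
variable (f : ℕ → ℝ → ℝ) (g : ℝ → ℝ)
variable (hf : ∀ n, Measurable (f n)) (hg : Measurable g)
variable (hf1 : ∀ n, ∀ x ∈ Set.Icc (0:ℝ) 1, f n x ∈ Set.Icc (0:ℝ) 1)
variable (hg1 : ∀ x ∈ Set.Icc (0:ℝ) 1, g x ∈ Set.Icc (0:ℝ) 1)


lemma abs_le_one_of_mem {F : ℝ → ℝ} (hF1 : ∀ x ∈ Set.Icc (0:ℝ) 1, F x ∈ Set.Icc (0:ℝ) 1)
    {x : ℝ} (hx : x ∈ Set.Ioc (0:ℝ) 1) : |F x| ≤ 1 := by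
  have := hF1 x ⟨le_of_lt hx.1, hx.2⟩
  rw [abs_le]
  constructor <;> linarith [this.1, this.2]

lemma integrable_mul_pow {F : ℝ → ℝ} (hF : Measurable F)
    (hF1 : ∀ x ∈ Set.Icc (0:ℝ) 1, F x ∈ Set.Icc (0:ℝ) 1) (q : ℝ → ℝ) (hq : Measurable q)
    (M : ℝ) (hqM : ∀ x ∈ Set.Ioc (0:ℝ) 1, |q x| ≤ M) :
    IntegrableOn (fun s => F s * q s) (Set.Ioc (0:ℝ) 1) := by
  refine integrableOn_Ioc_of_bounded (hF.mul hq) (M := M) ?_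
  intro x hx
  rw [abs_mul]
  calc |F x| * |q x| ≤ 1 * M := by
        refine mul_le_mul (abs_le_one_of_mem hF1 hx) (hqM x hx) (abs_nonneg _) zero_le_one
    _ = M := one_mul M

lemma abs_one_sub_pow_le {x : ℝ} (hx : x ∈ Set.Ioc (0:ℝ) 1) (i : ℕ) : |(1 - x) ^ i| ≤ 1 := by
  rw [abs_pow]
  refine pow_le_one₀ (abs_nonneg _) ?_
  rw [abs_le]
  exact ⟨by linarith [hx.2], by linarith [le_of_lt hx.1]⟩

lemma expand_monomial {F : ℝ → ℝ} (hF : Measurable F)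
    (hF1 : ∀ x ∈ Set.Icc (0:ℝ) 1, F x ∈ Set.Icc (0:ℝ) 1) (k : ℕ) :
    ∫ s in Set.Ioc (0:ℝ) 1, F s * s ^ k
      = ∑ i ∈ Finset.range (k+1), ((-1:ℝ)^i * (k.choose i)) *
          ∫ s in Set.Ioc (0:ℝ) 1, F s * (1 - s) ^ i := by
  have hs : ∀ s : ℝ, s ^ k
      = ∑ i ∈ Finset.range (k+1), ((-1:ℝ)^i * (k.choose i)) * (1-s)^i := by
    intro s
    calc s ^ k = ((-(1-s)) + 1) ^ k := by ring_nf
      _ = ∑ i ∈ Finset.range (k+1), (-(1-s))^i * 1^(k-i) * (k.choose i) := add_pow _ _ k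
      _ = _ := by
          refine Finset.sum_congr rfl fun i _ => ?_
          rw [neg_pow]
          ring
  have hfun : (fun s => F s * s ^ k)
      = fun s => ∑ i ∈ Finset.range (k+1), ((-1:ℝ)^i * (k.choose i)) * (F s * (1-s)^i) := by
    funext s
    rw [hs s, Finset.mul_sum]
    refine Finset.sum_congr rfl fun i _ => by ring
  rw [hfun, integral_finset_sum]
  · refine Finset.sum_congr rfl fun i _ => ?_
    rw [integral_const_mul]
  · intro i _
    exact (integrable_mul_pow hF hF1 (fun s => (1-s)^i)
      ((measurable_const.sub measurable_id).pow_const i) 1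
      (fun x hx => abs_one_sub_pow_le hx i)).const_mul _

include hf hg hf1 hg1 in
lemma tendsto_monomial
    (hmom : ∀ m : ℕ, Tendsto (fun n => ∫ s in Set.Ioc (0:ℝ) 1, f n s * (1 - s) ^ m) atTop
      (nhds (∫ s in Set.Ioc (0:ℝ) 1, g s * (1 - s) ^ m))) (k : ℕ) :
    Tendsto (fun n => ∫ s in Set.Ioc (0:ℝ) 1, f n s * s ^ k) atTop
      (nhds (∫ s in Set.Ioc (0:ℝ) 1, g s * s ^ k)) := by
  rw [expand_monomial hg hg1 k]
  refine Tendsto.congr (fun n => (expand_monomial (hf n) (hf1 n) k).symm) ?_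
  exact tendsto_finset_sum _ fun i _ => (hmom i).const_mul _

lemma expand_poly {F : ℝ → ℝ} (hF : Measurable F)
    (hF1 : ∀ x ∈ Set.Icc (0:ℝ) 1, F x ∈ Set.Icc (0:ℝ) 1) (P : Polynomial ℝ) :
    ∫ s in Set.Ioc (0:ℝ) 1, F s * P.eval s
      = ∑ i ∈ Finset.range (P.natDegree + 1), (P.coeff i) *
          ∫ s in Set.Ioc (0:ℝ) 1, F s * s ^ i := by
  have hfun : (fun s => F s * P.eval s)
      = fun s => ∑ i ∈ Finset.range (P.natDegree+1), (P.coeff i) * (F s * s^i) := by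
    funext s
    rw [Polynomial.eval_eq_sum_range, Finset.mul_sum]
    refine Finset.sum_congr rfl fun i _ => by ring
  rw [hfun, integral_finset_sum]
  · refine Finset.sum_congr rfl fun i _ => ?_
    rw [integral_const_mul]
  · intro i _
    refine (integrable_mul_pow hF hF1 (fun s => s^i) (measurable_id.pow_const i) 1 ?_).const_mul _
    intro x hx
    rw [abs_pow]
    refine pow_le_one₀ (abs_nonneg _) (abs_le.2 ⟨by linarith [le_of_lt hx.1], hx.2⟩)

include hf hg hf1 hg1 in
lemma tendsto_poly
    (hmom : ∀ m : ℕ, Tendsto (fun n => ∫ s in Set.Ioc (0:ℝ) 1, f n s * (1 - s) ^ m) atTop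
      (nhds (∫ s in Set.Ioc (0:ℝ) 1, g s * (1 - s) ^ m))) (P : Polynomial ℝ) :
    Tendsto (fun n => ∫ s in Set.Ioc (0:ℝ) 1,
        (f n s - g s) * P.eval s) atTop (nhds 0) := by
  obtain ⟨M, hM⟩ : ∃ M : ℝ, ∀ x ∈ Set.Ioc (0:ℝ) 1, |P.eval x| ≤ M := by
    obtain ⟨M, hM⟩ := (isCompact_Icc (a := (0:ℝ)) (b := 1)).exists_bound_of_continuousOn
      (P.continuous_aeval.continuousOn)
    exact ⟨M, fun x hx => by simpa using hM x ⟨le_of_lt hx.1, hx.2⟩⟩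
  have hPmeas : Measurable fun s : ℝ => P.eval s := P.continuous_aeval.measurable
  have hsub : ∀ n, ∫ s in Set.Ioc (0:ℝ) 1, (f n s - g s) * P.eval s
      = (∫ s in Set.Ioc (0:ℝ) 1, f n s * P.eval s)
        - ∫ s in Set.Ioc (0:ℝ) 1, g s * P.eval s := by
    intro n
    rw [← integral_sub (integrable_mul_pow (hf n) (hf1 n) _ hPmeas M hM)
      (integrable_mul_pow hg hg1 _ hPmeas M hM)]
    congr 1
    funext s
    ring
  have hP : Tendsto (fun n => ∫ s in Set.Ioc (0:ℝ) 1, f n s * P.eval s) atTop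
      (nhds (∫ s in Set.Ioc (0:ℝ) 1, g s * P.eval s)) := by
    rw [expand_poly hg hg1 P]
    refine Tendsto.congr (fun n => (expand_poly (hf n) (hf1 n) P).symm) ?_
    exact tendsto_finset_sum _ fun i _ =>
      (tendsto_monomial f g hf hg hf1 hg1 hmom i).const_mul _
  have := hP.sub_const (∫ s in Set.Ioc (0:ℝ) 1, g s * P.eval s)
  rw [sub_self] at this
  exact this.congr fun n => (hsub n).symm

end main

section main
variable (f : ℕ → ℝ → ℝ) (g : ℝ → ℝ)
variable (hf : ∀ n, Measurable (f n)) (hg : Measurable g)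
variable (hf1 : ∀ n, ∀ x ∈ Set.Icc (0:ℝ) 1, f n x ∈ Set.Icc (0:ℝ) 1)
variable (hg1 : ∀ x ∈ Set.Icc (0:ℝ) 1, g x ∈ Set.Icc (0:ℝ) 1)

include hf hg hf1 hg1 in
lemma tendsto_interval
    (hpoly : ∀ P : Polynomial ℝ, Tendsto (fun n => ∫ s in Set.Ioc (0:ℝ) 1,
      (f n s - g s) * P.eval s) atTop (nhds 0))
    (a b : ℝ) (ha : 0 ≤ a) (hab : a ≤ b) (hb : b ≤ 1) :
    Tendsto (fun n => ∫ s in Set.Ioc a b, (f n s - g s)) atTop (nhds 0) := by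
  rw [NormedAddCommGroup.tendsto_nhds_zero]
  intro ε hε
  have hδ : (0:ℝ) < ε/8 := by linarith
  set δ : ℝ := ε/8 with hδdef
  set φ : ℝ → ℝ := fun x => max 0 (min 1 (min ((x - (a - δ))/δ) ((b + δ - x)/δ))) with hφdef
  have hφcont : Continuous φ :=
    continuous_const.max (continuous_const.min
      (((continuous_id.sub continuous_const).div_const δ).min
        ((continuous_const.sub continuous_id).div_const δ)))
  have hφ0le : ∀ x, 0 ≤ φ x := fun x => le_max_left _ _
  have hφle1 : ∀ x, φ x ≤ 1 := fun x => max_le zero_le_one (min_le_left _ _)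
  have hφ1 : ∀ x ∈ Set.Ioc a b, φ x = 1 := by
    intro x hx
    have h1 : (1:ℝ) ≤ (x - (a - δ))/δ := by
      rw [le_div_iff₀ hδ]
      linarith [hx.1]
    have h2 : (1:ℝ) ≤ (b + δ - x)/δ := by
      rw [le_div_iff₀ hδ]
      linarith [hx.2]
    have : min 1 (min ((x - (a - δ))/δ) ((b + δ - x)/δ)) = 1 :=
      min_eq_left (le_min h1 h2)
    rw [hφdef]
    simp only [this]
    exact max_eq_right zero_le_one
  have hφ0 : ∀ x, x ∉ Set.Ioc (a - δ) (b + δ) → φ x = 0 := by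
    intro x hx
    rw [Set.mem_Ioc, not_and_or, not_lt, not_le] at hx
    have : min 1 (min ((x - (a - δ))/δ) ((b + δ - x)/δ)) ≤ 0 := by
      rcases hx with hx | hx
      · refine le_trans (min_le_right _ _) (le_trans (min_le_left _ _) ?_)
        rw [div_nonpos_iff]
        right; constructor <;> [linarith; linarith [le_of_lt hδ]]
      · refine le_trans (min_le_right _ _) (le_trans (min_le_right _ _) ?_)
        rw [div_nonpos_iff]
        right; constructor <;> [linarith; linarith [le_of_lt hδ]]
    exact max_eq_left this
  obtain ⟨P, hP⟩ := exists_polynomial_near_of_continuousOn 0 1 φ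
    hφcont.continuousOn (ε/8) hδ
  obtain ⟨MP, hMP⟩ : ∃ M : ℝ, ∀ x ∈ Set.Ioc (0:ℝ) 1, |P.eval x| ≤ M := by
    obtain ⟨M, hM⟩ := (isCompact_Icc (a := (0:ℝ)) (b := 1)).exists_bound_of_continuousOn
      (P.continuous_aeval.continuousOn)
    exact ⟨M, fun x hx => by simpa using hM x ⟨le_of_lt hx.1, hx.2⟩⟩
  have hPev := hpoly P
  rw [NormedAddCommGroup.tendsto_nhds_zero] at hPev
  filter_upwards [hPev (ε/8) hδ] with n hn
  -- now the numeric estimate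
  set H : ℝ → ℝ := fun s => f n s - g s with hHdef
  have hHm : Measurable H := (hf n).sub hg
  have hH1 : ∀ s ∈ Set.Ioc (0:ℝ) 1, |H s| ≤ 1 := by
    intro s hs
    have h1 := hf1 n s ⟨le_of_lt hs.1, hs.2⟩
    have h2 := hg1 s ⟨le_of_lt hs.1, hs.2⟩
    have hre : H s = f n s - g s := rfl
    rw [hre, abs_le]
    exact ⟨by linarith [h1.1, h2.2], by linarith [h1.2, h2.1]⟩
  set ind : ℝ → ℝ := (Set.Ioc a b).indicator (fun _ => (1:ℝ)) with hinddef
  have hindm : Measurable ind := measurable_const.indicator measurableSet_Ioc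
  have hind01 : ∀ x, ind x = 0 ∨ ind x = 1 := by
    intro x
    rw [hinddef]
    by_cases hx : x ∈ Set.Ioc a b <;> simp [Set.indicator_apply, hx]
  -- step A
  have hA : ∫ s in Set.Ioc a b, H s = ∫ s in Set.Ioc (0:ℝ) 1, H s * ind s := by
    have hpt : (fun s => H s * ind s) = (Set.Ioc a b).indicator H := by
      funext s
      rw [hinddef]
      by_cases hs : s ∈ Set.Ioc a b <;> simp [Set.indicator_apply, hs]
    rw [hpt, setIntegral_indicator measurableSet_Ioc,
      Set.inter_eq_self_of_subset_right (Set.Ioc_subset_Ioc ha hb)]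
  -- integrabilities
  have hmul : ∀ (q : ℝ → ℝ), Measurable q → ∀ M : ℝ, (∀ x ∈ Set.Ioc (0:ℝ) 1, |q x| ≤ M) →
      IntegrableOn (fun s => H s * q s) (Set.Ioc (0:ℝ) 1) := by
    intro q hq M hM
    refine integrableOn_Ioc_of_bounded (hHm.mul hq) (M := M) ?_
    intro x hx
    rw [abs_mul]
    calc |H x| * |q x| ≤ 1 * M :=
        mul_le_mul (hH1 x hx) (hM x hx) (abs_nonneg _) zero_le_one
      _ = M := one_mul M
  have hind_le : ∀ x ∈ Set.Ioc (0:ℝ) 1, |ind x| ≤ 1 := by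
    intro x _
    rcases hind01 x with h | h <;> rw [h] <;> norm_num
  have hintHind : IntegrableOn (fun s => H s * ind s) (Set.Ioc (0:ℝ) 1) :=
    hmul ind hindm 1 hind_le
  have hintHP : IntegrableOn (fun s => H s * P.eval s) (Set.Ioc (0:ℝ) 1) :=
    hmul _ P.continuous_aeval.measurable MP hMP
  have hintHindP : IntegrableOn (fun s => H s * (ind s - P.eval s)) (Set.Ioc (0:ℝ) 1) :=
    hmul _ (hindm.sub P.continuous_aeval.measurable) (1 + MP)
      (fun x hx => le_trans (abs_sub (ind x) (P.eval x)) (add_le_add (hind_le x hx) (hMP x hx)))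
  -- split
  have hsplit : ∫ s in Set.Ioc (0:ℝ) 1, H s * ind s
      = (∫ s in Set.Ioc (0:ℝ) 1, H s * (ind s - P.eval s))
        + ∫ s in Set.Ioc (0:ℝ) 1, H s * P.eval s := by
    rw [← integral_add hintHindP hintHP]
    congr 1
    funext s
    ring
  -- bound the middle term
  set ind1 : ℝ → ℝ := (Set.Ioc (a - δ) a).indicator (fun _ => (1:ℝ)) with hind1def
  set ind2 : ℝ → ℝ := (Set.Ioc b (b + δ)).indicator (fun _ => (1:ℝ)) with hind2def
  have hind1m : Measurable ind1 := measurable_const.indicator measurableSet_Ioc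
  have hind2m : Measurable ind2 := measurable_const.indicator measurableSet_Ioc
  have hind1nn : ∀ x, 0 ≤ ind1 x := fun x => Set.indicator_nonneg (fun _ _ => zero_le_one) x
  have hind2nn : ∀ x, 0 ≤ ind2 x := fun x => Set.indicator_nonneg (fun _ _ => zero_le_one) x
  have hptbd : ∀ s ∈ Set.Ioc (0:ℝ) 1,
      |H s * (ind s - P.eval s)| ≤ ind1 s + ind2 s + ε/8 := by
    intro s hs
    have hPs : |φ s - P.eval s| ≤ ε/8 := by
      rw [abs_sub_comm]
      exact le_of_lt (hP s ⟨le_of_lt hs.1, hs.2⟩)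
    have hindφ : |ind s - φ s| ≤ ind1 s + ind2 s := by
      by_cases hsab : s ∈ Set.Ioc a b
      · rw [hinddef]
        rw [Set.indicator_of_mem hsab, hφ1 s hsab, sub_self, abs_zero]
        exact add_nonneg (hind1nn s) (hind2nn s)
      · rw [hinddef, Set.indicator_of_notMem hsab]
        by_cases hs1 : s ∈ Set.Ioc (a - δ) a
        · have h1 : ind1 s = 1 := by rw [hind1def, Set.indicator_of_mem hs1]
          rw [h1, zero_sub, abs_neg, abs_of_nonneg (hφ0le s)]
          linarith [hφle1 s, hind2nn s]
        · by_cases hs2 : s ∈ Set.Ioc b (b + δ)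
          · have h2 : ind2 s = 1 := by rw [hind2def, Set.indicator_of_mem hs2]
            rw [h2, zero_sub, abs_neg, abs_of_nonneg (hφ0le s)]
            linarith [hφle1 s, hind1nn s]
          · have hnot : s ∉ Set.Ioc (a - δ) (b + δ) := by
              intro hc
              have ha1 : a < s := by
                by_contra hsa
                push_neg at hsa
                exact hs1 ⟨hc.1, hsa⟩
              have hb1 : b < s := by
                by_contra hsb
                push_neg at hsb
                exact hsab ⟨ha1, hsb⟩
              exact hs2 ⟨hb1, hc.2⟩
            rw [hφ0 s hnot, sub_zero, abs_zero]
            exact add_nonneg (hind1nn s) (hind2nn s)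
      -- done
    calc |H s * (ind s - P.eval s)| = |H s| * |ind s - P.eval s| := abs_mul _ _
      _ ≤ 1 * |ind s - P.eval s| :=
          mul_le_mul_of_nonneg_right (hH1 s hs) (abs_nonneg _)
      _ = |ind s - P.eval s| := one_mul _
      _ ≤ |ind s - φ s| + |φ s - P.eval s| := by
          have := abs_sub_le (ind s) (φ s) (P.eval s)
          linarith
      _ ≤ (ind1 s + ind2 s) + ε/8 := add_le_add hindφ hPs
  have hint1 : IntegrableOn ind1 (Set.Ioc (0:ℝ) 1) :=
    integrableOn_Ioc_of_bounded hind1m (M := 1)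
      (fun x _ => by
        by_cases hx1 : x ∈ Set.Ioc (a - δ) a <;>
          simp [hind1def, Set.indicator_apply, hx1])
  have hint2 : IntegrableOn ind2 (Set.Ioc (0:ℝ) 1) :=
    integrableOn_Ioc_of_bounded hind2m (M := 1)
      (fun x _ => by
        by_cases hx2 : x ∈ Set.Ioc b (b + δ) <;>
          simp [hind2def, Set.indicator_apply, hx2])
  have hintc : IntegrableOn (fun _ : ℝ => ε/8) (Set.Ioc (0:ℝ) 1) :=
    integrableOn_Ioc_of_bounded measurable_const (M := |ε/8|) (fun x _ => le_refl _)
  have hRHSint : IntegrableOn (fun s => ind1 s + ind2 s + ε/8) (Set.Ioc (0:ℝ) 1) :=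
    (hint1.add hint2).add hintc
  have habs : |∫ s in Set.Ioc (0:ℝ) 1, H s * (ind s - P.eval s)|
      ≤ ∫ s in Set.Ioc (0:ℝ) 1, (ind1 s + ind2 s + ε/8) := by
    calc |∫ s in Set.Ioc (0:ℝ) 1, H s * (ind s - P.eval s)|
        ≤ ∫ s in Set.Ioc (0:ℝ) 1, |H s * (ind s - P.eval s)| := by
          simpa only [Real.norm_eq_abs] using
            norm_integral_le_integral_norm (μ := volume.restrict (Set.Ioc (0:ℝ) 1))
              (fun s => H s * (ind s - P.eval s))
      _ ≤ ∫ s in Set.Ioc (0:ℝ) 1, (ind1 s + ind2 s + ε/8) :=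
          setIntegral_mono_on hintHindP.abs hRHSint measurableSet_Ioc hptbd
  have hval1 : ∫ s in Set.Ioc (0:ℝ) 1, ind1 s ≤ δ := by
    rw [hind1def, setIntegral_indicator measurableSet_Ioc, setIntegral_const, smul_eq_mul,
      mul_one]
    have hle : volume (Set.Ioc (0:ℝ) 1 ∩ Set.Ioc (a - δ) a) ≤ ENNReal.ofReal δ := by
      refine le_trans (measure_mono Set.inter_subset_right) ?_
      rw [Real.volume_Ioc]
      exact le_of_eq (by ring_nf)
    exact ENNReal.toReal_le_of_le_ofReal hδ.le hle
  have hval2 : ∫ s in Set.Ioc (0:ℝ) 1, ind2 s ≤ δ := by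
    rw [hind2def, setIntegral_indicator measurableSet_Ioc, setIntegral_const, smul_eq_mul,
      mul_one]
    have hle : volume (Set.Ioc (0:ℝ) 1 ∩ Set.Ioc b (b + δ)) ≤ ENNReal.ofReal δ := by
      refine le_trans (measure_mono Set.inter_subset_right) ?_
      rw [Real.volume_Ioc]
      exact le_of_eq (by ring_nf)
    exact ENNReal.toReal_le_of_le_ofReal hδ.le hle
  have hvalc : ∫ s in Set.Ioc (0:ℝ) 1, (fun _ => ε/8) s = ε/8 := by
    rw [setIntegral_const, Real.volume_real_Ioc, smul_eq_mul]
    norm_num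
  have hRHSval : ∫ s in Set.Ioc (0:ℝ) 1, (ind1 s + ind2 s + ε/8) ≤ δ + δ + ε/8 := by
    have hsum12 : IntegrableOn (fun s => ind1 s + ind2 s) (Set.Ioc (0:ℝ) 1) :=
      hint1.add hint2
    have hsuma : IntegrableOn (fun s => ind1 s + ind2 s + ε/8) (Set.Ioc (0:ℝ) 1) :=
      hsum12.add hintc
    rw [integral_add hsum12 hintc, integral_add hint1 hint2]
    have := hvalc
    simp only [] at this
    rw [this]
    linarith [hval1, hval2]
  have hmid : |∫ s in Set.Ioc (0:ℝ) 1, H s * (ind s - P.eval s)| ≤ δ + δ + ε/8 :=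
    le_trans habs hRHSval
  have hHP : |∫ s in Set.Ioc (0:ℝ) 1, H s * P.eval s| < ε/8 := by
    simpa [Real.norm_eq_abs] using hn
  have hgoal : (∫ s in Set.Ioc a b, (f n s - g s)) = ∫ s in Set.Ioc a b, H s := rfl
  rw [Real.norm_eq_abs, hgoal, hA, hsplit]
  calc |(∫ s in Set.Ioc (0:ℝ) 1, H s * (ind s - P.eval s))
        + ∫ s in Set.Ioc (0:ℝ) 1, H s * P.eval s|
      ≤ |∫ s in Set.Ioc (0:ℝ) 1, H s * (ind s - P.eval s)|
        + |∫ s in Set.Ioc (0:ℝ) 1, H s * P.eval s| := abs_add_le _ _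
    _ < (δ + δ + ε/8) + ε/8 := by
        refine add_lt_add_of_le_of_lt hmid hHP
    _ < ε := by rw [hδdef]; linarith

end main

section main
variable (f : ℕ → ℝ → ℝ) (g : ℝ → ℝ)
variable (hf : ∀ n, Measurable (f n)) (hg : Measurable g)
variable (hf1 : ∀ n, ∀ x ∈ Set.Icc (0:ℝ) 1, f n x ∈ Set.Icc (0:ℝ) 1)
variable (hg1 : ∀ x ∈ Set.Icc (0:ℝ) 1, g x ∈ Set.Icc (0:ℝ) 1)

include hf hg hf1 hg1 in
lemma cutdist_tendsto
    (hint : ∀ a b : ℝ, 0 ≤ a → a ≤ b → b ≤ 1 →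
      Tendsto (fun n => ∫ s in Set.Ioc a b, (f n s - g s)) atTop (nhds 0)) :
    Tendsto (fun n => cutDist (f n) g) atTop (nhds 0) := by
  have habs1 : ∀ n, ∀ x ∈ Set.Icc (0:ℝ) 1, ‖f n x - g x‖ ≤ 1 := by
    intro n x hx
    have h1 := hf1 n x hx
    have h2 := hg1 x hx
    rw [Real.norm_eq_abs, abs_le]
    exact ⟨by linarith [h1.1, h2.2], by linarith [h1.2, h2.1]⟩
  have hII : ∀ n, ∀ c ∈ Set.Icc (0:ℝ) 1, ∀ d ∈ Set.Icc (0:ℝ) 1,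
      IntervalIntegrable (fun x => f n x - g x) volume c d := by
    intro n c hc d hd
    rw [intervalIntegrable_iff]
    refine Measure.integrableOn_of_bounded measure_Ioc_lt_top.ne
      ((hf n).sub hg).aestronglyMeasurable (M := 1) ?_
    refine (ae_restrict_iff' measurableSet_uIoc).2 (Filter.Eventually.of_forall ?_)
    intro x hx
    refine habs1 n x ?_
    rcases Set.mem_uIoc.1 hx with h | h
    · exact ⟨le_trans hc.1 h.1.le, le_trans h.2 hd.2⟩
    · exact ⟨le_trans hd.1 h.1.le, le_trans h.2 hc.2⟩
  have hIb : ∀ n, ∀ c ∈ Set.Icc (0:ℝ) 1, ∀ d ∈ Set.Icc (0:ℝ) 1,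
      |∫ x in c..d, (f n x - g x)| ≤ |d - c| := by
    intro n c hc d hd
    have := intervalIntegral.norm_integral_le_of_norm_le_const (C := 1)
      (f := fun x => f n x - g x) (a := c) (b := d) ?_
    · simpa [Real.norm_eq_abs] using this
    · intro x hx
      refine habs1 n x ?_
      rcases Set.mem_uIoc.1 hx with h | h
      · exact ⟨le_trans hc.1 h.1.le, le_trans h.2 hd.2⟩
      · exact ⟨le_trans hd.1 h.1.le, le_trans h.2 hc.2⟩
  have hnn : ∀ n, 0 ≤ cutDist (f n) g := by
    intro n
    refine Real.sSup_nonneg ?_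
    rintro y ⟨a, b, _, _, _, rfl⟩
    exact abs_nonneg _
  rw [Metric.tendsto_atTop]
  intro ε hε
  set N : ℕ := max 1 ⌈(8:ℝ)/ε⌉₊ with hNdef
  have hN1 : 1 ≤ N := le_max_left _ _
  have hNpos : (0:ℝ) < N := by
    have : (1:ℝ) ≤ N := by exact_mod_cast hN1
    linarith
  have hNge : (8:ℝ)/ε ≤ N := by
    refine le_trans (Nat.le_ceil _) ?_
    exact_mod_cast le_max_right 1 ⌈(8:ℝ)/ε⌉₊
  have h8 : (8:ℝ) ≤ ε * N := by
    have := (div_le_iff₀ hε).1 hNge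
    linarith
  have h2N : 2/(N:ℝ) ≤ ε/4 := by
    rw [div_le_div_iff₀ hNpos (by norm_num)]
    linarith
  -- grid convergence
  have hgrid : ∀ q : Fin (N+1) × Fin (N+1),
      Tendsto (fun n => |∫ x in ((q.1 : ℕ) : ℝ)/N..((q.2 : ℕ) : ℝ)/N, (f n x - g x)|)
        atTop (nhds 0) := by
    intro q
    have hmem : ∀ i : Fin (N+1), ((i : ℕ) : ℝ)/N ∈ Set.Icc (0:ℝ) 1 := by
      intro i
      constructor
      · positivity
      · rw [div_le_one hNpos]
        exact_mod_cast Fin.is_le i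
    rcases le_total (((q.1 : ℕ) : ℝ)/N) (((q.2 : ℕ) : ℝ)/N) with hle | hle
    · have := ((hint _ _ (hmem q.1).1 hle (hmem q.2).2).abs)
      rw [abs_zero] at this
      refine this.congr fun n => ?_
      rw [intervalIntegral.integral_of_le hle]
    · have := ((hint _ _ (hmem q.2).1 hle (hmem q.1).2).abs)
      rw [abs_zero] at this
      refine this.congr fun n => ?_
      rw [intervalIntegral.integral_symm, abs_neg, intervalIntegral.integral_of_le hle]
  have hev : ∀ᶠ n in atTop, ∀ q : Fin (N+1) × Fin (N+1),
      |∫ x in ((q.1 : ℕ) : ℝ)/N..((q.2 : ℕ) : ℝ)/N, (f n x - g x)| < ε/4 :=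
    eventually_all.2 fun q => (hgrid q).eventually_lt_const (by linarith)
  obtain ⟨N₀, hN₀⟩ := eventually_atTop.1 hev
  refine ⟨N₀, fun n hn => ?_⟩
  rw [Real.dist_eq, sub_zero, abs_of_nonneg (hnn n)]
  have hB : cutDist (f n) g ≤ ε/4 + 2/N := by
    refine Real.sSup_le ?_ (by positivity)
    rintro y ⟨a, b, ha, hab, hb, rfl⟩
    have ha01 : a ∈ Set.Icc (0:ℝ) 1 := ⟨ha, le_trans hab hb⟩
    have hb01 : b ∈ Set.Icc (0:ℝ) 1 := ⟨le_trans ha hab, hb⟩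
    set i : ℕ := ⌈a * N⌉₊ with hidef
    set j : ℕ := ⌊b * N⌋₊ with hjdef
    have hiN : i ≤ N := by
      rw [hidef, Nat.ceil_le]
      calc a * N ≤ 1 * N := mul_le_mul_of_nonneg_right ha01.2 hNpos.le
        _ = (N : ℝ) := one_mul _
    have hjN : j ≤ N := by
      have : b * N ≤ (N:ℝ) := by
        calc b * N ≤ 1 * N := mul_le_mul_of_nonneg_right hb hNpos.le
          _ = (N : ℝ) := one_mul _
      calc j = ⌊b * N⌋₊ := rfl
        _ ≤ ⌊(N:ℝ)⌋₊ := Nat.floor_mono this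
        _ = N := Nat.floor_natCast N
    set a' : ℝ := (i : ℝ)/N with ha'def
    set b' : ℝ := (j : ℝ)/N with hb'def
    have ha'01 : a' ∈ Set.Icc (0:ℝ) 1 := by
      constructor
      · positivity
      · rw [ha'def, div_le_one hNpos]
        exact_mod_cast hiN
    have hb'01 : b' ∈ Set.Icc (0:ℝ) 1 := by
      constructor
      · positivity
      · rw [hb'def, div_le_one hNpos]
        exact_mod_cast hjN
    have hNinv : (0:ℝ) < 1/(N:ℝ) := by positivity
    have haa' : |a' - a| ≤ 1/N := by
      have h1 : a * N ≤ (i:ℝ) := Nat.le_ceil _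
      have h2 : (i:ℝ) < a * N + 1 := Nat.ceil_lt_add_one (by positivity)
      have hl : a ≤ a' := by
        rw [ha'def, le_div_iff₀ hNpos]
        linarith
      have hu : a' ≤ a + 1/N := by
        rw [ha'def, div_le_iff₀ hNpos]
        have he : (a + 1/(N:ℝ)) * (N:ℝ) = a * N + 1 := by field_simp
        rw [he]
        linarith
      rw [abs_le]
      exact ⟨by linarith, by linarith⟩
    have hbb' : |b - b'| ≤ 1/N := by
      have hbN : (0:ℝ) ≤ b * N := by
        have : (0:ℝ) ≤ b := le_trans ha hab
        positivity
      have h1 : (j:ℝ) ≤ b * N := Nat.floor_le hbN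
      have h2 : b * N < (j:ℝ) + 1 := Nat.lt_floor_add_one _
      have hl : b' ≤ b := by
        rw [hb'def, div_le_iff₀ hNpos]
        linarith
      have hu : b ≤ b' + 1/N := by
        rw [hb'def]
        have he : (j:ℝ)/(N:ℝ) + 1/(N:ℝ) = ((j:ℝ) + 1)/(N:ℝ) := by ring
        rw [he, le_div_iff₀ hNpos]
        linarith
      rw [abs_le]
      exact ⟨by linarith, by linarith⟩
    have hsplit : (∫ x in a..b, (f n x - g x))
        = (∫ x in a..a', (f n x - g x)) + (∫ x in a'..b', (f n x - g x))
          + (∫ x in b'..b, (f n x - g x)) := by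
      have e1 : (∫ x in a'..b', (f n x - g x)) + (∫ x in b'..b, (f n x - g x))
          = ∫ x in a'..b, (f n x - g x) :=
        intervalIntegral.integral_add_adjacent_intervals
          (hII n a' ha'01 b' hb'01) (hII n b' hb'01 b hb01)
      have e2 : (∫ x in a..a', (f n x - g x)) + (∫ x in a'..b, (f n x - g x))
          = ∫ x in a..b, (f n x - g x) :=
        intervalIntegral.integral_add_adjacent_intervals
          (hII n a ha01 a' ha'01) (hII n a' ha'01 b hb01)
      rw [add_assoc, e1, e2]
    have hgridq := hN₀ n hn (⟨⟨i, Nat.lt_succ_of_le hiN⟩, ⟨j, Nat.lt_succ_of_le hjN⟩⟩ :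
      Fin (N+1) × Fin (N+1))
    simp only [Fin.val_mk] at hgridq
    calc |∫ x in a..b, (f n x - g x)|
        ≤ |∫ x in a..a', (f n x - g x)| + |∫ x in a'..b', (f n x - g x)|
          + |∫ x in b'..b, (f n x - g x)| := by
          rw [hsplit]
          exact le_trans (abs_add_le _ _) (add_le_add_left (abs_add_le _ _) _)
      _ ≤ 1/N + ε/4 + 1/N := by
          refine add_le_add (add_le_add ?_ ?_) ?_
          · exact le_trans (hIb n a ha01 a' ha'01) haa'
          · exact le_of_lt hgridq
          · refine le_trans (hIb n b' hb'01 b hb01) hbb'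
      _ = ε/4 + 2/N := by ring
  calc cutDist (f n) g ≤ ε/4 + 2/N := hB
    _ ≤ ε/4 + ε/4 := by linarith
    _ < ε := by linarith

end main

end Stmt8Aux

theorem stmt8 (f : ℕ → ℝ → ℝ) (g : ℝ → ℝ)
    (hf : ∀ n, Measurable (f n)) (hg : Measurable g)
    (hf1 : ∀ n, ∀ x ∈ Set.Icc (0:ℝ) 1, f n x ∈ Set.Icc (0:ℝ) 1)
    (hg1 : ∀ x ∈ Set.Icc (0:ℝ) 1, g x ∈ Set.Icc (0:ℝ) 1)
    (h : ∀ (ℓ : ℕ) (u : Fin ℓ → Bool),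
      Filter.Tendsto (fun n => wordDensity u (f n)) Filter.atTop (nhds (wordDensity u g))) :
    Filter.Tendsto (fun n => cutDist (f n) g) Filter.atTop (nhds 0) := by
  refine Stmt8Aux.cutdist_tendsto f g hf hg hf1 hg1 ?_
  intro a b ha hab hb
  refine Stmt8Aux.tendsto_interval f g hf hg hf1 hg1 ?_ a b ha hab hb
  intro P
  refine Stmt8Aux.tendsto_poly f g hf hg hf1 hg1 ?_ P
  intro m
  exact Stmt8Aux.tendsto_moment f g hf hg hf1 hg1 h m
end

section
/- The metric space (𝒲, d_□) is compact, where 𝒲 is the set of Lebesgue measurable functions f : [0,1] → [0,1] modulo equality almost everywhere. -/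
open MeasureTheory

section CutDistAux
open Set

noncomputable def prc (x : ℝ) : ℝ := max 0 (min 1 x)

lemma prc_mem (x : ℝ) : prc x ∈ Icc (0:ℝ) 1 := by
  constructor
  · exact le_max_left _ _
  · exact max_le (by norm_num) (min_le_left _ _)

lemma prc_of_mem {x : ℝ} (hx : x ∈ Icc (0:ℝ) 1) : prc x = x := by
  unfold prc
  rw [min_eq_right hx.2, max_eq_right hx.1]

lemma prc_mono : Monotone prc := fun a b h => max_le_max le_rfl (min_le_min le_rfl h)

lemma prc_lip {a b : ℝ} (h : a ≤ b) : prc b - prc a ≤ b - a := by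
  unfold prc
  rcases le_total 1 a with ha | ha
  · rw [min_eq_left ha, min_eq_left (ha.trans h)]; simp; linarith
  · rw [min_eq_right ha]
    rcases le_total 1 b with hb | hb
    · rw [min_eq_left hb]
      have : max 0 (1:ℝ) = 1 := by norm_num
      rw [this]
      nlinarith [le_max_right (0:ℝ) a]
    · rw [min_eq_right hb]
      rcases le_total 0 a with h0 | h0
      · rw [max_eq_right h0, max_eq_right (h0.trans h)]
      · rw [max_eq_left h0]
        rcases le_total 0 b with hb0 | hb0
        · rw [max_eq_right hb0]; linarith
        · rw [max_eq_left hb0]; linarith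

noncomputable def trunc (f : ℝ → ℝ) (x : ℝ) : ℝ := max 0 (min 1 (f x))

lemma trunc_mem (f : ℝ → ℝ) (x : ℝ) : trunc f x ∈ Icc (0:ℝ) 1 := prc_mem _

lemma trunc_meas {f : ℝ → ℝ} (hf : Measurable f) : Measurable (trunc f) :=
  measurable_const.max (measurable_const.min hf)

lemma trunc_intInt {f : ℝ → ℝ} (hf : Measurable f) (a b : ℝ) :
    IntervalIntegrable (trunc f) volume a b := by
  refine IntervalIntegrable.mono_fun
    (intervalIntegrable_const : IntervalIntegrable (fun _ => (1:ℝ)) volume a b)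
    ((trunc_meas hf).aestronglyMeasurable.restrict) ?_
  refine Filter.Eventually.of_forall (fun x => ?_)
  simp only [Real.norm_eq_abs, abs_of_nonneg (trunc_mem f x).1, abs_one]
  exact (trunc_mem f x).2

lemma intInt_of_bounded {f : ℝ → ℝ} (hf : Measurable f) (hb : ∀ x, f x ∈ Icc (0:ℝ) 1)
    (a b : ℝ) : IntervalIntegrable f volume a b := by
  refine IntervalIntegrable.mono_fun
    (intervalIntegrable_const : IntervalIntegrable (fun _ => (1:ℝ)) volume a b)
    (hf.aestronglyMeasurable.restrict) ?_
  refine Filter.Eventually.of_forall (fun x => ?_)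
  simp only [Real.norm_eq_abs, abs_of_nonneg (hb x).1, abs_one]
  exact (hb x).2

noncomputable def primF (f : ℝ → ℝ) (x : ℝ) : ℝ := ∫ t in (0:ℝ)..(prc x), trunc f t

lemma primF_sub {f : ℝ → ℝ} (hf : Measurable f) (a b : ℝ) :
    primF f b - primF f a = ∫ t in (prc a)..(prc b), trunc f t := by
  have := intervalIntegral.integral_add_adjacent_intervals
    (intInt_of_bounded (trunc_meas hf) (trunc_mem f) 0 (prc a))
    (intInt_of_bounded (trunc_meas hf) (trunc_mem f) (prc a) (prc b))
  unfold primF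
  linarith

lemma primF_diff_nonneg {f : ℝ → ℝ} (hf : Measurable f) {a b : ℝ} (h : a ≤ b) :
    0 ≤ primF f b - primF f a := by
  rw [primF_sub hf]
  exact intervalIntegral.integral_nonneg (prc_mono h) (fun x _ => (trunc_mem f x).1)

lemma primF_diff_le {f : ℝ → ℝ} (hf : Measurable f) {a b : ℝ} (h : a ≤ b) :
    primF f b - primF f a ≤ b - a := by
  rw [primF_sub hf]
  have h2 : ∫ t in (prc a)..(prc b), trunc f t ≤ ∫ _t in (prc a)..(prc b), (1:ℝ) := by
    refine intervalIntegral.integral_mono_on (prc_mono h)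
      (intInt_of_bounded (trunc_meas hf) (trunc_mem f) _ _) intervalIntegrable_const
      (fun x _ => (trunc_mem f x).2)
  rw [intervalIntegral.integral_const, smul_eq_mul, mul_one] at h2
  exact h2.trans (prc_lip h)

lemma primF_abs_le {f : ℝ → ℝ} (hf : Measurable f) (a b : ℝ) :
    |primF f b - primF f a| ≤ |b - a| := by
  rcases le_total a b with h | h
  · rw [abs_of_nonneg (primF_diff_nonneg hf h), abs_of_nonneg (by linarith : (0:ℝ) ≤ b - a)]
    exact primF_diff_le hf h
  · rw [abs_sub_comm, abs_sub_comm b a,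
      abs_of_nonneg (primF_diff_nonneg hf h), abs_of_nonneg (by linarith : (0:ℝ) ≤ a - b)]
    exact primF_diff_le hf h

lemma primF_zero {f : ℝ → ℝ} : primF f 0 = 0 := by
  unfold primF
  rw [prc_of_mem (by norm_num : (0:ℝ) ∈ Icc (0:ℝ) 1), intervalIntegral.integral_same]

lemma primF_mem {f : ℝ → ℝ} (hf : Measurable f) (x : ℝ) : primF f x ∈ Icc (0:ℝ) 1 := by
  have h1 : primF f x - primF f 0 ≤ prc x - prc 0 := by
    rw [primF_sub hf]
    have h2 : ∫ t in (prc 0)..(prc x), trunc f t ≤ ∫ _t in (prc 0)..(prc x), (1:ℝ) := by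
      refine intervalIntegral.integral_mono_on ?_
        (intInt_of_bounded (trunc_meas hf) (trunc_mem f) _ _) intervalIntegrable_const
        (fun x _ => (trunc_mem f x).2)
      rw [prc_of_mem (by norm_num : (0:ℝ) ∈ Icc (0:ℝ) 1)]
      exact (prc_mem x).1
    rw [intervalIntegral.integral_const, smul_eq_mul, mul_one] at h2
    exact h2
  have h0 : 0 ≤ primF f x - primF f 0 := by
    rw [primF_sub hf]
    refine intervalIntegral.integral_nonneg ?_ (fun x _ => (trunc_mem f x).1)
    rw [prc_of_mem (by norm_num : (0:ℝ) ∈ Icc (0:ℝ) 1)]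
    exact (prc_mem x).1
  rw [primF_zero] at h1 h0
  rw [prc_of_mem (by norm_num : (0:ℝ) ∈ Icc (0:ℝ) 1)] at h1
  constructor
  · linarith
  · have := (prc_mem x).2; linarith

lemma primF_eq_integral {f : ℝ → ℝ} (hf : Measurable f)
    (hf1 : ∀ x ∈ Icc (0:ℝ) 1, f x ∈ Icc (0:ℝ) 1) {a b : ℝ}
    (h0 : 0 ≤ a) (h : a ≤ b) (h1 : b ≤ 1) :
    ∫ t in a..b, f t = primF f b - primF f a := by
  rw [primF_sub hf, prc_of_mem ⟨h0.trans h, h1⟩, prc_of_mem ⟨h0, h.trans h1⟩]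
  apply intervalIntegral.integral_congr
  intro x hx
  rw [uIcc_of_le h] at hx
  have hx' : x ∈ Icc (0:ℝ) 1 := ⟨h0.trans hx.1, hx.2.trans h1⟩
  unfold trunc
  rw [min_eq_right (hf1 x hx').2, max_eq_right (hf1 x hx').1]

lemma intInt_of_restricted {f : ℝ → ℝ} (hf : Measurable f)
    (hf1 : ∀ x ∈ Icc (0:ℝ) 1, f x ∈ Icc (0:ℝ) 1) {a b : ℝ}
    (h0 : 0 ≤ a) (h : a ≤ b) (h1 : b ≤ 1) :
    IntervalIntegrable f volume a b := by
  rw [intervalIntegrable_iff, uIoc_of_le h]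
  have hbase := (intInt_of_bounded (trunc_meas hf) (trunc_mem f) a b).1
  refine (hbase.congr_fun ?_ measurableSet_Ioc)
  · intro x hx
    have hx' : x ∈ Icc (0:ℝ) 1 := ⟨h0.trans (le_of_lt hx.1), hx.2.trans h1⟩
    unfold trunc
    rw [min_eq_right (hf1 x hx').2, max_eq_right (hf1 x hx').1]


end CutDistAux

open Set

/-- Compactness of `(𝒲, d_□)`: every sequence of measurable `[0,1]`-valued functions on `[0,1]`
has a subsequence converging in the interval distance to a measurable `[0,1]`-valued limit. -/
theorem stmt9 (f : ℕ → ℝ → ℝ) (hf : ∀ n, Measurable (f n))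
    (hf1 : ∀ n, ∀ x ∈ Set.Icc (0:ℝ) 1, f n x ∈ Set.Icc (0:ℝ) 1) :
    ∃ g : ℝ → ℝ, Measurable g ∧ (∀ x ∈ Set.Icc (0:ℝ) 1, g x ∈ Set.Icc (0:ℝ) 1) ∧
      ∃ φ : ℕ → ℕ, StrictMono φ ∧
        Filter.Tendsto (fun k => cutDist (f (φ k)) g) Filter.atTop (nhds 0) := by
  classical
  set H : ℕ → ℝ → ℝ := fun n => primF (f n) with hHdef
  -- compactness extraction on rational coordinates
  set y : ℕ → (ℚ → Icc (0:ℝ) 1) := fun n q => ⟨H n (q:ℝ), primF_mem (hf n) (q:ℝ)⟩ with hydef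
  obtain ⟨A, φ, hφ, hconv⟩ := CompactSpace.tendsto_subseq y
  have hq : ∀ q : ℚ, Filter.Tendsto (fun k => H (φ k) (q:ℝ)) Filter.atTop (nhds ((A q : ℝ))) := by
    intro q
    have h1 := tendsto_pi_nhds.mp hconv q
    exact (continuous_subtype_val.tendsto (A q)).comp h1
  -- pointwise convergence everywhere
  have hcauchy : ∀ x : ℝ, ∃ L : ℝ, Filter.Tendsto (fun k => H (φ k) x) Filter.atTop (nhds L) := by
    intro x
    apply cauchySeq_tendsto_of_complete
    rw [Metric.cauchySeq_iff]
    intro ε hε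
    obtain ⟨q, hq1, hq2⟩ := exists_rat_btwn (show x - ε/4 < x by linarith)
    have hxq : |x - (q:ℝ)| < ε/4 := by rw [abs_lt]; constructor <;> linarith
    have hqc : CauchySeq (fun k => H (φ k) (q:ℝ)) := (hq q).cauchySeq
    rw [Metric.cauchySeq_iff] at hqc
    obtain ⟨N, hN⟩ := hqc (ε/4) (by linarith)
    refine ⟨N, fun m hm n hn => ?_⟩
    have h1 : |H (φ m) x - H (φ m) (q:ℝ)| ≤ |x - (q:ℝ)| := primF_abs_le (hf _) _ _
    have h2 : |H (φ n) (q:ℝ) - H (φ n) x| ≤ |(q:ℝ) - x| := primF_abs_le (hf _) _ _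
    have h3 := hN m hm n hn
    rw [Real.dist_eq] at h3 ⊢
    rw [abs_sub_comm] at hxq
    calc |H (φ m) x - H (φ n) x|
        ≤ |H (φ m) x - H (φ m) (q:ℝ)| + |H (φ m) (q:ℝ) - H (φ n) (q:ℝ)|
          + |H (φ n) (q:ℝ) - H (φ n) x| := by
            have := abs_sub_le (H (φ m) x) (H (φ m) (q:ℝ)) (H (φ n) x)
            have := abs_sub_le (H (φ m) (q:ℝ)) (H (φ n) (q:ℝ)) (H (φ n) x)
            linarith
      _ < ε := by rw [abs_sub_comm x (q:ℝ)] at h1; linarith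
  choose Fbar hFbar using hcauchy
  -- basic properties of the limit
  have hFd : ∀ a b : ℝ, a ≤ b → 0 ≤ Fbar b - Fbar a ∧ Fbar b - Fbar a ≤ b - a := by
    intro a b hab
    have ht : Filter.Tendsto (fun k => H (φ k) b - H (φ k) a) Filter.atTop
        (nhds (Fbar b - Fbar a)) := (hFbar b).sub (hFbar a)
    constructor
    · exact ge_of_tendsto' ht (fun k => primF_diff_nonneg (hf _) hab)
    · exact le_of_tendsto' ht (fun k => primF_diff_le (hf _) hab)
  have hFlip : ∀ x z : ℝ, |Fbar z - Fbar x| ≤ |z - x| := by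
    intro x z
    have ht : Filter.Tendsto (fun k => |H (φ k) z - H (φ k) x|) Filter.atTop
        (nhds (|Fbar z - Fbar x|)) := ((hFbar z).sub (hFbar x)).abs
    exact le_of_tendsto' ht (fun k => primF_abs_le (hf _) _ _)
  have hFc : Continuous Fbar := by
    have : LipschitzWith 1 Fbar := by
      refine LipschitzWith.of_dist_le_mul (fun x z => ?_)
      rw [Real.dist_eq, Real.dist_eq, NNReal.coe_one, one_mul]
      exact hFlip z x
    exact this.continuous
  have hF0 : Fbar 0 = 0 := by
    refine tendsto_nhds_unique (hFbar 0) ?_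
    have : ∀ k, H (φ k) 0 = 0 := fun k => primF_zero
    rw [show (fun k => H (φ k) (0:ℝ)) = fun _ => (0:ℝ) from funext this]
    exact tendsto_const_nhds
  have hFp : ∀ x, Fbar x = Fbar (prc x) := by
    intro x
    refine tendsto_nhds_unique (hFbar x) ((hFbar (prc x)).congr (fun k => ?_))
    show primF (f (φ k)) (prc x) = primF (f (φ k)) x
    unfold primF
    rw [prc_of_mem (prc_mem x)]
  -- Stieltjes functions
  set S : StieltjesFunction ℝ :=
    ⟨Fbar, fun u v huv => by have := (hFd u v huv).1; linarith,
      fun x => hFc.continuousWithinAt⟩ with hSdef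
  set T : StieltjesFunction ℝ :=
    ⟨fun x => x - Fbar x, fun u v huv => by have := (hFd u v huv).2; simp only; linarith,
      fun x => (continuous_id.sub hFc).continuousWithinAt⟩ with hTdef
  have hST : S + T = StieltjesFunction.id := by
    ext x
    show Fbar x + (x - Fbar x) = x
    ring
  have hμvol : S.measure + T.measure = volume := by
    rw [← StieltjesFunction.measure_add, hST, ← Real.volume_eq_stieltjes_id]
  have hle : S.measure ≤ volume := by
    rw [← hμvol]
    exact Measure.le_add_right le_rfl
  have hac : S.measure ≪ volume := Measure.absolutelyContinuous_of_le hle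
  have h_bot : Filter.Tendsto Fbar Filter.atBot (nhds 0) := by
    refine Filter.Tendsto.congr' ?_ (tendsto_const_nhds (α := ℝ) (f := Filter.atBot))
    filter_upwards [Filter.eventually_le_atBot (0:ℝ)] with x hx
    rw [hFp x, show prc x = 0 from by unfold prc; rw [min_eq_right (hx.trans zero_le_one), max_eq_left hx], hF0]
  have h_top : Filter.Tendsto Fbar Filter.atTop (nhds (Fbar 1)) := by
    refine Filter.Tendsto.congr' ?_ (tendsto_const_nhds (α := ℝ) (f := Filter.atTop))
    filter_upwards [Filter.eventually_ge_atTop (1:ℝ)] with x hx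
    rw [hFp x, show prc x = 1 from by unfold prc; rw [min_eq_left hx]; norm_num]
  haveI : IsFiniteMeasure S.measure := S.isFiniteMeasure h_bot h_top
  -- the limit function
  set g : ℝ → ℝ := fun x => max 0 (min 1 ((S.measure.rnDeriv volume x).toReal)) with hgdef
  have hg_meas : Measurable g :=
    measurable_const.max (measurable_const.min ((Measure.measurable_rnDeriv _ _).ennreal_toReal))
  have hg_mem : ∀ x, g x ∈ Icc (0:ℝ) 1 := fun x => prc_mem _
  have hgae : ∀ᵐ x ∂(volume : Measure ℝ), g x = (S.measure.rnDeriv volume x).toReal := by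
    filter_upwards [Measure.rnDeriv_le_one_of_le hle] with x hx
    have h1 : (S.measure.rnDeriv volume x).toReal ≤ 1 := by
      have := ENNReal.toReal_mono (by norm_num) hx
      simpa using this
    rw [hgdef]
    simp only
    rw [min_eq_right h1, max_eq_right ENNReal.toReal_nonneg]
  have hgint : ∀ a b : ℝ, a ≤ b → ∫ t in a..b, g t = Fbar b - Fbar a := by
    intro a b hab
    rw [intervalIntegral.integral_of_le hab]
    have h1 : ∫ t in Ioc a b, g t = ∫ t in Ioc a b, (S.measure.rnDeriv volume t).toReal :=
      integral_congr_ae (ae_restrict_of_ae hgae)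
    rw [h1, Measure.setIntegral_toReal_rnDeriv hac (Ioc a b)]
    rw [measureReal_def, S.measure_Ioc]
    exact ENNReal.toReal_ofReal (hFd a b hab).1
  refine ⟨g, hg_meas, fun x _ => hg_mem x, φ, hφ, ?_⟩
  rw [Metric.tendsto_atTop]
  intro ε hε
  -- choose a grid
  obtain ⟨m, hm⟩ := exists_nat_gt (16/ε)
  have hm0 : 0 < (m:ℝ) := lt_trans (by positivity) hm
  have hminv : 1/(m:ℝ) ≤ ε/16 := by
    rw [div_le_div_iff₀ hm0 (by norm_num : (0:ℝ) < 16)]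
    have : 16 < (m:ℝ) * ε := by
      have := (div_lt_iff₀ hε).mp hm
      linarith
    linarith
  have hgrid : ∀ᶠ k in Filter.atTop,
      ∀ i ∈ Finset.range (m+1), |H (φ k) ((i:ℝ)/m) - Fbar ((i:ℝ)/m)| < ε/16 := by
    rw [Filter.eventually_all_finset]
    intro i _
    have h1 := Metric.tendsto_nhds.mp (hFbar ((i:ℝ)/m)) (ε/16) (by linarith)
    filter_upwards [h1] with k hk
    rw [Real.dist_eq] at hk
    exact hk
  obtain ⟨N, hN⟩ := Filter.eventually_atTop.mp hgrid
  refine ⟨N, fun k hk => ?_⟩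
  -- uniform closeness on [0,1]
  have hunif : ∀ x ∈ Icc (0:ℝ) 1, |H (φ k) x - Fbar x| ≤ ε/4 := by
    intro x hx
    set i : ℕ := ⌊x * m⌋.toNat with hidef
    have hxm0 : (0:ℝ) ≤ x * m := mul_nonneg hx.1 hm0.le
    have hfl0 : (0:ℤ) ≤ ⌊x * m⌋ := Int.floor_nonneg.mpr hxm0
    have hic : ((i:ℕ):ℝ) = ((⌊x * m⌋ : ℤ) : ℝ) := by
      exact_mod_cast Int.toNat_of_nonneg hfl0
    have hi_le : (i:ℝ) ≤ x * m := by rw [hic]; exact Int.floor_le _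
    have hi_gt : x * m < (i:ℝ) + 1 := by rw [hic]; exact Int.lt_floor_add_one _
    have hi_mem : i ∈ Finset.range (m+1) := by
      rw [Finset.mem_range, Nat.lt_succ_iff, ← Nat.cast_le (α := ℝ)]
      calc (i:ℝ) ≤ x * m := hi_le
        _ ≤ 1 * m := by
            have := hx.2
            nlinarith
        _ = (m:ℝ) := one_mul _
    set q : ℝ := (i:ℝ)/m with hqdef
    have hq_le : q ≤ x := by rw [hqdef, div_le_iff₀ hm0]; linarith
    have hq_gt : x - q ≤ 1/m := by
      rw [hqdef]
      rw [sub_le_iff_le_add, ← add_div, le_div_iff₀ hm0]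
      linarith
    have hxq : |x - q| ≤ 1/m := by
      rw [abs_of_nonneg (by linarith)]; exact hq_gt
    have h1 : |H (φ k) x - H (φ k) q| ≤ |x - q| := primF_abs_le (hf _) _ _
    have h2 : |Fbar q - Fbar x| ≤ |q - x| := hFlip x q
    have h3 := hN k hk i hi_mem
    calc |H (φ k) x - Fbar x|
        ≤ |H (φ k) x - H (φ k) q| + |H (φ k) q - Fbar q| + |Fbar q - Fbar x| := by
          have := abs_sub_le (H (φ k) x) (H (φ k) q) (Fbar x)
          have := abs_sub_le (H (φ k) q) (Fbar q) (Fbar x)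
          linarith
      _ ≤ 1/m + ε/16 + 1/m := by
          rw [abs_sub_comm q x] at h2
          exact add_le_add (add_le_add (h1.trans hxq) h3.le) (h2.trans hxq)
      _ ≤ ε/4 := by linarith
  -- the integral representation
  have key : ∀ a b : ℝ, 0 ≤ a → a ≤ b → b ≤ 1 →
      ∫ x in a..b, (f (φ k) x - g x) = (H (φ k) b - Fbar b) - (H (φ k) a - Fbar a) := by
    intro a b h0 hab h1
    rw [intervalIntegral.integral_sub (intInt_of_restricted (hf _) (hf1 _) h0 hab h1)
      (intInt_of_bounded hg_meas hg_mem a b)]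
    rw [primF_eq_integral (hf _) (hf1 _) h0 hab h1, hgint a b hab]
    ring
  -- bound the sup
  set SS : Set ℝ := {y | ∃ a b : ℝ, 0 ≤ a ∧ a ≤ b ∧ b ≤ 1 ∧
    y = |∫ x in a..b, (f (φ k) x - g x)|} with hSSdef
  have hmem0 : (0:ℝ) ∈ SS := by
    refine ⟨0, 0, le_rfl, le_rfl, zero_le_one, ?_⟩
    rw [intervalIntegral.integral_same, abs_zero]
  have hbound : ∀ z ∈ SS, z ≤ ε/2 := by
    rintro z ⟨a, b, h0, hab, h1, rfl⟩
    rw [key a b h0 hab h1]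
    have ha := hunif a ⟨h0, hab.trans h1⟩
    have hb := hunif b ⟨h0.trans hab, h1⟩
    calc |(H (φ k) b - Fbar b) - (H (φ k) a - Fbar a)|
        ≤ |H (φ k) b - Fbar b| + |H (φ k) a - Fbar a| := abs_sub _ _
      _ ≤ ε/4 + ε/4 := add_le_add hb ha
      _ = ε/2 := by ring
  have hsup_le : sSup SS ≤ ε/2 := Real.sSup_le hbound (by linarith)
  have hsup_ge : 0 ≤ sSup SS := le_csSup ⟨ε/2, hbound⟩ hmem0
  show dist (cutDist (f (φ k)) g) 0 < ε
  rw [Real.dist_eq, sub_zero]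
  rw [show cutDist (f (φ k)) g = sSup SS from rfl]
  rw [abs_of_nonneg hsup_ge]
  linarith
end
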